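/- arXiv:2505.20784 — 13 statements merged into one kernel-verified Lean document; each statement's English description precedes it below -/
import Mathlib

section
/- Every graph that is C3-free and probe P5-free is 3-colourable. In particular, every probe (C3,P5)-free graph is 3-colourable. -/
open SimpleGraph

/-- `H` does not occur as an induced subgraph of `G`. -/
def IndFree {W V : Type*} (H : SimpleGraph W) (G : SimpleGraph V) : Prop :=
  IsEmpty (H ↪g G)

/-- `(G, Nᶜ, N)` is a partitioned probe `H`-free graph: `N` is an independent set of
non-probes and `G` can be made `H`-free by adding edges inside `N`. -/
def PartProbeFree {W V : Type*} (H : SimpleGraph W) (G : SimpleGraph V) (N : Set V) : Prop :=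
  (∀ u ∈ N, ∀ v ∈ N, ¬ G.Adj u v) ∧
  ∃ G' : SimpleGraph V, G ≤ G' ∧
    (∀ u v, G'.Adj u v → ¬ G.Adj u v → u ∈ N ∧ v ∈ N) ∧ IndFree H G'

namespace ProbeAux

variable {V : Type*}

def other (a b : Fin 3) : Fin 3 :=
  if a = 0 ∨ b = 0 then (if a = 1 ∨ b = 1 then 2 else 1) else 0

lemma other_ne : ∀ a b : Fin 3, other a b ≠ a ∧ other a b ≠ b := by decide

def pat : Fin 5 → Fin 3 := ![0, 1, 0, 1, 2]

lemma patNe : ∀ i j : Fin 5, (j = i + 1 ∨ j = i + 4) → pat i ≠ pat j := by decide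

/-- The graph of edges between probes. -/
def pH (G : SimpleGraph V) (N : Set V) : SimpleGraph V where
  Adj x y := G.Adj x y ∧ x ∉ N ∧ y ∉ N
  symm := ⟨fun _ _ h => ⟨h.1.symm, h.2.2, h.2.1⟩⟩
  loopless := ⟨fun x h => G.loopless.irrefl x h.1⟩

variable {G G' : SimpleGraph V} {N : Set V}

theorem noP5 {V : Type*} {G' : SimpleGraph V} (hP5 : IsEmpty (pathGraph 5 ↪g G'))
    (a b c d e : V)
    (hab : G'.Adj a b) (hbc : G'.Adj b c) (hcd : G'.Adj c d) (hde : G'.Adj d e)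
    (hac : ¬ G'.Adj a c) (had : ¬ G'.Adj a d) (hae : ¬ G'.Adj a e)
    (hbd : ¬ G'.Adj b d) (hbe : ¬ G'.Adj b e) (hce : ¬ G'.Adj c e)
    (nac : a ≠ c) (nad : a ≠ d) (nae : a ≠ e) (nbd : b ≠ d) (nbe : b ≠ e) (nce : c ≠ e) :
    False := by
  have nab := G'.ne_of_adj hab
  have nbc := G'.ne_of_adj hbc
  have ncd := G'.ne_of_adj hcd
  have nde := G'.ne_of_adj hde
  have hca : ¬ G'.Adj c a := fun h => hac h.symm
  have hda : ¬ G'.Adj d a := fun h => had h.symm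
  have hea : ¬ G'.Adj e a := fun h => hae h.symm
  have hdb : ¬ G'.Adj d b := fun h => hbd h.symm
  have heb : ¬ G'.Adj e b := fun h => hbe h.symm
  have hec : ¬ G'.Adj e c := fun h => hce h.symm
  have nca : c ≠ a := nac.symm
  have nda : d ≠ a := nad.symm
  have nea : e ≠ a := nae.symm
  have ndb : d ≠ b := nbd.symm
  have neb : e ≠ b := nbe.symm
  have nec : e ≠ c := nce.symm
  have nba : b ≠ a := nab.symm
  have ncb : c ≠ b := nbc.symm
  have ndc : d ≠ c := ncd.symm
  have ned : e ≠ d := nde.symm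
  apply hP5.false
  refine ⟨⟨![a,b,c,d,e], ?_⟩, ?_⟩
  · intro i j h
    fin_cases i <;> fin_cases j <;> simp_all <;> decide
  · intro i j
    show G'.Adj (![a, b, c, d, e] i) (![a, b, c, d, e] j) ↔ _
    fin_cases i <;> fin_cases j <;>
      simp_all [pathGraph_adj, hab.symm, hbc.symm, hcd.symm, hde.symm, G'.irrefl] <;> decide

variable {H : SimpleGraph V}

lemma seg {z : V} (w : H.Walk z z) :
    ∀ d i, i + d ≤ w.length → ∃ p : H.Walk (w.getVert i) (w.getVert (i + d)), p.length = d := by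
  intro d
  induction d with
  | zero => intro i _; exact ⟨SimpleGraph.Walk.nil.copy rfl rfl, rfl⟩
  | succ d ih =>
    intro i h
    obtain ⟨p, hp⟩ := ih i (by omega)
    have hadj : H.Adj (w.getVert (i + d)) (w.getVert (i + d + 1)) :=
      w.adj_getVert_succ (by omega)
    exact ⟨(p.concat hadj).copy rfl (by ring_nf), by
      simp [SimpleGraph.Walk.length_concat, hp]⟩

lemma findC5 (hT3 : ∀ a b c : V, H.Adj a b → H.Adj b c → H.Adj a c → False)
    (hP5H : ∀ a b c d e : V, H.Adj a b → H.Adj b c → H.Adj c d → H.Adj d e →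
      ¬H.Adj a c → ¬H.Adj a d → ¬H.Adj a e → ¬H.Adj b d → ¬H.Adj b e → ¬H.Adj c e →
      a ≠ c → a ≠ d → a ≠ e → b ≠ d → b ≠ e → c ≠ e → False)
    (K : H.ConnectedComponent)
    (hnb : ¬ ∃ g : V → Bool, ∀ x y, H.Adj x y → H.connectedComponentMk x = K → g x ≠ g y) :
    ∃ X : Fin 5 → V, (∀ i, H.connectedComponentMk (X i) = K) ∧
      (∀ i, H.Adj (X i) (X (i + 1))) ∧ (∀ i, ¬ H.Adj (X i) (X (i + 2))) ∧
      (∀ i j, i ≠ j → X i ≠ X j) := by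
  classical
  obtain ⟨r, hr⟩ : ∃ r, H.connectedComponentMk r = K := K.exists_rep
  -- Step 1: an odd closed walk in K exists
  have hodd : ∃ n, Odd n ∧ ∃ z, H.connectedComponentMk z = K ∧
      ∃ w : H.Walk z z, w.length = n := by
    by_contra hno
    push_neg at hno
    apply hnb
    refine ⟨fun x => decide (∃ p : H.Walk r x, Odd p.length), ?_⟩
    intro x y hadj hxK hgeq
    rw [decide_eq_decide] at hgeq
    have hrx : H.Reachable r x := ConnectedComponent.eq.mp (hr.trans hxK.symm)
    by_cases hpx : ∃ p : H.Walk r x, Odd p.length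
    · obtain ⟨p, hp⟩ := hpx
      obtain ⟨q, hq⟩ := hgeq.mp ⟨p, hp⟩
      have hcl : ((p.append (SimpleGraph.Walk.cons hadj q.reverse))).length
          = p.length + (1 + q.length) := by
        simp [SimpleGraph.Walk.length_append, SimpleGraph.Walk.length_cons,
          SimpleGraph.Walk.length_reverse]
        omega
      refine hno (p.length + (1 + q.length)) ?_ r hr
        (p.append (SimpleGraph.Walk.cons hadj q.reverse)) hcl
      obtain ⟨k, hk⟩ := hp; obtain ⟨m, hm⟩ := hq
      exact ⟨k + m + 1, by omega⟩
    · obtain ⟨p0⟩ := hrx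
      have hpe : ¬ Odd p0.length := fun h => hpx ⟨p0, h⟩
      have : Odd (p0.concat hadj).length := by
        rw [SimpleGraph.Walk.length_concat]
        rcases Nat.even_or_odd p0.length with he | ho
        · obtain ⟨k, hk⟩ := he; exact ⟨k, by omega⟩
        · exact absurd ho hpe
      exact hpx (hgeq.mpr ⟨p0.concat hadj, this⟩)
  -- Step 2: minimal odd closed walk
  have hodd' : ∃ n, Odd n ∧ ∃ z, H.connectedComponentMk z = K ∧
      ∃ w : H.Walk z z, w.length = n := hodd
  have hex := Nat.find_spec hodd'
  have hmin : ∀ m, m < Nat.find hodd' → ¬ (Odd m ∧ ∃ z, H.connectedComponentMk z = K ∧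
      ∃ w : H.Walk z z, w.length = m) := fun m hm => Nat.find_min hodd' hm
  generalize hgen : Nat.find hodd' = n at hex hmin
  obtain ⟨hn_odd, z, hzK, w, hwl⟩ := hex
  set xx : ℕ → V := w.getVert with hxx
  have hxx0 : xx 0 = z := w.getVert_zero
  have hxxn : xx n = z := by rw [hxx, ← hwl]; exact w.getVert_length
  have hadjx : ∀ i, i < n → H.Adj (xx i) (xx (i + 1)) := by
    intro i hi; exact w.adj_getVert_succ (by omega)
  have hseg : ∀ i j, i ≤ j → j ≤ n → ∃ p : H.Walk (xx i) (xx j), p.length = j - i := by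
    intro i j hij hjn
    obtain ⟨p, hp⟩ := seg w (j - i) i (by omega)
    exact ⟨p.copy rfl (by congr 1; omega), by simpa using hp⟩
  have hmkx : ∀ i, i ≤ n → H.connectedComponentMk (xx i) = K := by
    intro i hi
    obtain ⟨p, -⟩ := hseg 0 i (by omega) hi
    rw [← hzK, ← hxx0]
    exact (ConnectedComponent.eq.mpr ⟨p⟩).symm
  -- n is not 1
  have hn1 : n ≠ 1 := by
    intro h1
    have := hadjx 0 (by omega)
    rw [hxx0] at this
    have h1' : xx (0+1) = z := by rw [h1] at hxxn; simpa using hxxn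
    rw [h1'] at this
    exact H.irrefl this
  have hn3 : 3 ≤ n := by
    obtain ⟨k, hk⟩ := hn_odd; omega
  -- no repeated vertices
  have hdist : ∀ i j, i < j → j ≤ n → ¬(i = 0 ∧ j = n) → xx i ≠ xx j := by
    intro i j hij hjn hnot heq
    rcases Nat.even_or_odd (j - i) with he | ho
    · obtain ⟨p, hp⟩ := hseg 0 i (by omega) (by omega)
      obtain ⟨q, hq⟩ := hseg j n (by omega) (by omega)
      have hlen : ((p.append (q.copy heq.symm rfl)).copy hxx0 hxxn).length = i + (n - j) := by
        simp [SimpleGraph.Walk.length_copy, SimpleGraph.Walk.length_append, hp]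
        omega
      refine hmin (i + (n - j)) (by omega)
        ⟨?_, z, hzK, (p.append (q.copy heq.symm rfl)).copy hxx0 hxxn, hlen⟩
      obtain ⟨k, hk⟩ := hn_odd; obtain ⟨m, hm⟩ := he
      exact ⟨k - m, by omega⟩
    · obtain ⟨p, hp⟩ := hseg i j (by omega) hjn
      have hlen : (p.copy rfl heq.symm).length = j - i := by simpa using hp
      exact hmin (j - i) (by omega) ⟨ho, xx i, hmkx i (by omega), p.copy rfl heq.symm, hlen⟩
  -- no chords
  have hchord : ∀ i j, i + 1 < j → j ≤ n - 1 → ¬(i = 0 ∧ j = n - 1) →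
      ¬ H.Adj (xx i) (xx j) := by
    intro i j hij hjn hnot hadj
    rcases Nat.even_or_odd (j - i) with he | ho
    · -- j - i even, so j - i + 1 odd : short closed walk through the chord
      obtain ⟨p, hp⟩ := hseg i j (by omega) (by omega)
      have hlen : (p.concat hadj.symm).length = (j - i) + 1 := by
        simp [SimpleGraph.Walk.length_concat, hp]
      refine hmin ((j - i) + 1) (by omega) ⟨?_, xx i, hmkx i (by omega),
        p.concat hadj.symm, hlen⟩
      obtain ⟨m, hm⟩ := he
      exact ⟨m, by omega⟩
    · -- j - i odd: go around the other way
      obtain ⟨p, hp⟩ := hseg 0 i (by omega) (by omega)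
      obtain ⟨q, hq⟩ := hseg j n (by omega) (by omega)
      have hlen : ((p.append (SimpleGraph.Walk.cons hadj q)).copy hxx0 hxxn).length
          = i + (1 + (n - j)) := by
        simp [SimpleGraph.Walk.length_copy, SimpleGraph.Walk.length_append,
          SimpleGraph.Walk.length_cons, hp, hq]
        omega
      refine hmin (i + (1 + (n - j))) (by omega)
        ⟨?_, z, hzK, (p.append (SimpleGraph.Walk.cons hadj q)).copy hxx0 hxxn, hlen⟩
      obtain ⟨k, hk⟩ := hn_odd; obtain ⟨m, hm⟩ := ho
      exact ⟨k - m, by omega⟩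
  -- n is not 3
  have hn3' : n ≠ 3 := by
    intro h3
    have h01 := hadjx 0 (by omega)
    have h12 := hadjx 1 (by omega)
    rw [h3] at hxxn
    have h23 := hadjx 2 (by omega)
    rw [show (2:ℕ) + 1 = 3 from rfl, hxxn, ← hxx0] at h23
    exact hT3 (xx 0) (xx 1) (xx 2) h01 h12 h23.symm
  -- n is at most 5: otherwise the start of the cycle is an induced P5
  have hn5 : n = 5 := by
    by_contra hne5
    have hn7 : 7 ≤ n := by obtain ⟨k, hk⟩ := hn_odd; omega
    have hd : ∀ i j : ℕ, i < j → j ≤ 4 → xx i ≠ xx j := fun i j hij hj4 =>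
      hdist i j hij (by omega) (by omega)
    have hc : ∀ i j : ℕ, i + 1 < j → j ≤ 4 → ¬ H.Adj (xx i) (xx j) := fun i j hij hj4 =>
      hchord i j hij (by omega) (by omega)
    exact hP5H (xx 0) (xx 1) (xx 2) (xx 3) (xx 4)
      (hadjx 0 (by omega)) (hadjx 1 (by omega)) (hadjx 2 (by omega)) (hadjx 3 (by omega))
      (hc 0 2 (by omega) (by omega)) (hc 0 3 (by omega) (by omega))
      (hc 0 4 (by omega) (by omega)) (hc 1 3 (by omega) (by omega))
      (hc 1 4 (by omega) (by omega)) (hc 2 4 (by omega) (by omega))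
      (hd 0 2 (by omega) (by omega)) (hd 0 3 (by omega) (by omega))
      (hd 0 4 (by omega) (by omega)) (hd 1 3 (by omega) (by omega))
      (hd 1 4 (by omega) (by omega)) (hd 2 4 (by omega) (by omega))
  -- build the C5
  subst hn5
  refine ⟨fun t => xx t.val, fun i => hmkx i.val (by omega), ?_, ?_, ?_⟩
  · intro i
    fin_cases i
    · exact hadjx 0 (by omega)
    · exact hadjx 1 (by omega)
    · exact hadjx 2 (by omega)
    · exact hadjx 3 (by omega)
    · show H.Adj (xx 4) (xx 0)
      have := hadjx 4 (by omega)
      rw [show (4:ℕ) + 1 = 5 from rfl, hxxn, ← hxx0] at this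
      exact this
  · intro i
    fin_cases i
    · exact hchord 0 2 (by omega) (by omega) (by omega)
    · exact hchord 1 3 (by omega) (by omega) (by omega)
    · exact hchord 2 4 (by omega) (by omega) (by omega)
    · show ¬ H.Adj (xx 3) (xx 0)
      exact fun h => hchord 0 3 (by omega) (by omega) (by omega) h.symm
    · show ¬ H.Adj (xx 4) (xx 1)
      exact fun h => hchord 1 4 (by omega) (by omega) (by omega) h.symm
  · intro i j hij h
    have hd : ∀ a b : ℕ, a < b → b ≤ 4 → xx a ≠ xx b := fun a b hab hb4 =>
      hdist a b hab (by omega) (by omega)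
    have hi4 : i.val < 5 := i.isLt
    have hj4 : j.val < 5 := j.isLt
    rcases Nat.lt_trichotomy i.val j.val with hlt | heq | hgt
    · exact hd i.val j.val hlt (by omega) h
    · exact hij (Fin.ext heq)
    · exact hd j.val i.val hgt (by omega) h.symm

lemma bool5_split : ∀ b : Fin 5 → Bool, (∀ t, ¬ (b t = true ∧ b (t + 1) = true)) →
    (∀ t, b t = false) ∨ (∃ s, ∀ t, b t = true ↔ t = s) ∨
    (∃ s, ∀ t, b t = true ↔ (t = s ∨ t = s + 2)) := by decide

def cls (G : SimpleGraph V) (X : Fin 5 → V) (y : V) (i : Fin 5) : Prop :=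
  ∀ t : Fin 5, G.Adj y (X t) ↔ (t = i + 1 ∨ t = i + 4)

lemma pH_mk {x y : V} (h : G.Adj x y) (hx : x ∉ N) (hy : y ∉ N) : (pH G N).Adj x y :=
  ⟨h, hx, hy⟩

lemma mk_adj {H : SimpleGraph V} {x y : V} (h : H.Adj x y) :
    H.connectedComponentMk x = H.connectedComponentMk y :=
  ConnectedComponent.sound h.reachable

lemma walkProp {H : SimpleGraph V} (Q : V → Prop) (hstep : ∀ x y, Q x → H.Adj x y → Q y) :
    ∀ {x y : V}, H.Walk x y → Q x → Q y := by
  intro x y p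
  induction p with
  | nil => exact id
  | cons h _ ih => exact fun hq => ih (hstep _ _ hq h)


section ctx

variable (hN : ∀ u ∈ N, ∀ v ∈ N, ¬ G.Adj u v)
  (hle : G ≤ G')
  (hF : ∀ u v, G'.Adj u v → ¬ G.Adj u v → u ∈ N ∧ v ∈ N)
  (hT : ∀ a b c : V, G.Adj a b → G.Adj b c → G.Adj a c → False)
  (hP5 : IsEmpty (pathGraph 5 ↪g G'))

include hF in
lemma nadjP {x y : V} (h : ¬ G.Adj x y) (hy : y ∉ N) : ¬ G'.Adj x y :=
  fun h' => hy (hF y x h'.symm fun hh => h hh.symm).1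

include hF in
lemma nadjL {x y : V} (h : ¬ G.Adj x y) (hx : x ∉ N) : ¬ G'.Adj x y :=
  fun h' => hx (hF x y h' h).1

include hN hle hF hT hP5 in
lemma corePath {v u a b b' : V} (hvN : v ∈ N) (hvu : G.Adj v u)
    (hui : ∀ y, ¬ (pH G N).Adj u y) (hva : G.Adj v a)
    (hab : (pH G N).Adj a b) (hbb' : (pH G N).Adj b b')
    (hne : b' ≠ a) (hnvb' : ¬ G.Adj v b') : False := by
  have huN : u ∉ N := fun h => hN v hvN u h hvu
  have haN : a ∉ N := hab.2.1
  have hbN : b ∉ N := hab.2.2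
  have hb'N : b' ∉ N := hbb'.2.2
  have hua : ¬ G.Adj u a := fun h => hui a ⟨h, huN, haN⟩
  have hub : ¬ G.Adj u b := fun h => hui b ⟨h, huN, hbN⟩
  have hub' : ¬ G.Adj u b' := fun h => hui b' ⟨h, huN, hb'N⟩
  have hvb : ¬ G.Adj v b := fun h => hT v a b hva hab.1 h
  have hab' : ¬ G.Adj a b' := fun h => hT a b b' hab.1 hbb'.1 h
  exact noP5 hP5 u v a b b'
    (hle hvu.symm) (hle hva) (hle hab.1) (hle hbb'.1)
    (nadjP hF hua haN) (nadjP hF hub hbN) (nadjP hF hub' hb'N)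
    (nadjP hF hvb hbN) (nadjP hF hnvb' hb'N) (nadjP hF hab' hb'N)
    (fun heq => hui b (by rw [heq]; exact hab))
    (fun heq => hui b' (by rw [heq]; exact hbb'))
    (fun heq => hui b (by rw [heq]; exact hbb'.symm))
    (fun heq => hbN (by rw [← heq]; exact hvN))
    (fun heq => hb'N (by rw [← heq]; exact hvN)) hne.symm

include hN hle hF hT hP5 in
lemma sameComp {v a x : V} (hvN : v ∈ N) (hva : G.Adj v a) (hvx : G.Adj v x)
    {b b2 : V} (hab : (pH G N).Adj a b) (hxb2 : (pH G N).Adj x b2)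
    (hne : (pH G N).connectedComponentMk a ≠ (pH G N).connectedComponentMk x) : False := by
  have haN : a ∉ N := hab.2.1
  have hbN : b ∉ N := hab.2.2
  have hxN : x ∉ N := hxb2.2.1
  have hb2N : b2 ∉ N := hxb2.2.2
  have mkba : (pH G N).connectedComponentMk b = (pH G N).connectedComponentMk a :=
    (mk_adj hab).symm
  have mkb2x : (pH G N).connectedComponentMk b2 = (pH G N).connectedComponentMk x :=
    (mk_adj hxb2).symm
  have hnbx : ¬ G.Adj b x := fun h =>
    hne (by rw [← mkba]
            exact mk_adj (pH_mk h hbN hxN))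
  have hnbb2 : ¬ G.Adj b b2 := fun h =>
    hne (by rw [← mkba, ← mkb2x]
            exact mk_adj (pH_mk h hbN hb2N))
  have hnax : ¬ G.Adj a x := fun h =>
    hne (mk_adj (pH_mk h haN hxN))
  have hnab2 : ¬ G.Adj a b2 := fun h =>
    hne (by rw [← mkb2x]
            exact mk_adj (pH_mk h haN hb2N))
  have hnvb : ¬ G.Adj v b := fun h => hT v a b hva hab.1 h
  have hnvb2 : ¬ G.Adj v b2 := fun h => hT v x b2 hvx hxb2.1 h
  exact noP5 hP5 b a v x b2
    (hle hab.1.symm) (hle hva.symm) (hle hvx) (hle hxb2.1)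
    (nadjL hF (fun h => hnvb h.symm) hbN)
    (nadjL hF hnbx hbN) (nadjL hF hnbb2 hbN)
    (nadjL hF hnax haN) (nadjL hF hnab2 haN)
    (nadjP hF hnvb2 hb2N)
    (fun heq => hbN (by rw [heq]; exact hvN))
    (fun heq => hne (by rw [← mkba, heq]))
    (fun heq => hne (by rw [← mkba, heq, mkb2x]))
    (fun heq => hne (by rw [heq]))
    (fun heq => hne (by rw [heq, mkb2x]))
    (fun heq => hb2N (by rw [← heq]; exact hvN))

lemma bool2 : ∀ p q r : Bool, p ≠ r → q ≠ r → p = q := by decide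

include hN hle hF hT hP5 in
lemma mono {K : (pH G N).ConnectedComponent} {g : V → Bool}
    (hg : ∀ x y, (pH G N).Adj x y → (pH G N).connectedComponentMk x = K → g x ≠ g y)
    {v u a : V} (hvN : v ∈ N) (hvu : G.Adj v u) (hui : ∀ y, ¬ (pH G N).Adj u y)
    (hva : G.Adj v a) (haK : (pH G N).connectedComponentMk a = K) :
    ∀ x, G.Adj v x → (pH G N).connectedComponentMk x = K → g x = g a := by
  classical
  set Q : V → Prop := fun x => (pH G N).connectedComponentMk x = K ∧
    ((G.Adj v x ∧ g x = g a) ∨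
     (¬ G.Adj v x ∧ g x ≠ g a ∧ ∀ y, (pH G N).Adj x y → G.Adj v y)) with hQ
  have hstep : ∀ x y, Q x → (pH G N).Adj x y → Q y := by
    rintro x y ⟨hxK, hQx⟩ hxy
    have hyK : (pH G N).connectedComponentMk y = K := (mk_adj hxy).symm.trans hxK
    rcases hQx with ⟨hvx, hgx⟩ | ⟨hnvx, hgx, hall⟩
    · have hnvy : ¬ G.Adj v y := fun h => hT v x y hvx hxy.1 h
      have hgy : g y ≠ g a := fun h =>
        hg x y hxy hxK (by rw [hgx, ← h])
      refine ⟨hyK, Or.inr ⟨hnvy, hgy, ?_⟩⟩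
      intro y' hyy'
      by_cases hy'x : y' = x
      · rw [hy'x]; exact hvx
      · by_contra hnvy'
        exact corePath hN hle hF hT hP5 hvN hvu hui hvx hxy hyy' hy'x hnvy'
    · have hvy : G.Adj v y := hall y hxy
      have hgy : g y = g a := bool2 _ _ _ (fun h => hg x y hxy hxK h.symm) (fun h => hgx h.symm)
      exact ⟨hyK, Or.inl ⟨hvy, hgy⟩⟩
  intro x hvx hxK
  have hrx : (pH G N).Reachable a x := ConnectedComponent.eq.mp (haK.trans hxK.symm)
  obtain ⟨p⟩ := hrx
  have hQx := walkProp Q hstep p ⟨haK, Or.inl ⟨hva, rfl⟩⟩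
  rcases hQx.2 with ⟨-, h⟩ | ⟨hn, -⟩
  · exact h
  · exact absurd hvx hn

include hN hle hF hT hP5 in
lemma isoBip {K : (pH G N).ConnectedComponent}
    {v u a : V} (hvN : v ∈ N) (hvu : G.Adj v u) (hui : ∀ y, ¬ (pH G N).Adj u y)
    (hva : G.Adj v a) (haK : (pH G N).connectedComponentMk a = K) :
    ∃ g : V → Bool, ∀ x y, (pH G N).Adj x y →
      (pH G N).connectedComponentMk x = K → g x ≠ g y := by
  classical
  set R : V → Prop := fun x => (pH G N).connectedComponentMk x = K ∧
    (G.Adj v x ∨ ∀ y, (pH G N).Adj x y → G.Adj v y) with hR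
  have hstep : ∀ x y, R x → (pH G N).Adj x y → R y := by
    rintro x y ⟨hxK, hRx⟩ hxy
    have hyK : (pH G N).connectedComponentMk y = K := (mk_adj hxy).symm.trans hxK
    rcases hRx with hvx | hall
    · refine ⟨hyK, Or.inr ?_⟩
      intro y' hyy'
      by_cases hy'x : y' = x
      · rw [hy'x]; exact hvx
      · by_contra hnvy'
        exact corePath hN hle hF hT hP5 hvN hvu hui hvx hxy hyy' hy'x hnvy'
    · exact ⟨hyK, Or.inl (hall y hxy)⟩
  refine ⟨fun x => decide (G.Adj v x), ?_⟩
  intro x y hxy hxK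
  have hrx : (pH G N).Reachable a x := ConnectedComponent.eq.mp (haK.trans hxK.symm)
  obtain ⟨p⟩ := hrx
  have hRx := walkProp R hstep p ⟨haK, Or.inl hva⟩
  by_cases hvx : G.Adj v x
  · have hnvy : ¬ G.Adj v y := fun h => hT v x y hvx hxy.1 h
    simp [hvx, hnvy]
  · rcases hRx.2 with h | hall
    · exact absurd h hvx
    · have hvy : G.Adj v y := hall y hxy
      simp [hvx, hvy]

section cls

variable {X : Fin 5 → V}
  (hXadj : ∀ i, (pH G N).Adj (X i) (X (i + 1)))
  (hXnon : ∀ i, ¬ (pH G N).Adj (X i) (X (i + 2)))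
  (hXne : ∀ i j, i ≠ j → X i ≠ X j)

include hXadj in
lemma XP : ∀ i, X i ∉ N := fun i => (hXadj i).2.1

include hXadj hXnon in
lemma XnonG : ∀ i : Fin 5, ¬ G.Adj (X i) (X (i + 2)) := fun i h =>
  hXnon i ⟨h, (hXadj i).2.1, (hXadj (i+2)).2.1⟩

include hXadj hXnon in
lemma XnonG' : ∀ i : Fin 5, ¬ G.Adj (X i) (X (i + 3)) := by
  intro i h
  have h5 : ∀ k : Fin 5, (k + 3) + 2 = k := by decide
  exact XnonG hXadj hXnon (i + 3) (by rw [h5 i]; exact h.symm)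

include hXadj hXnon in
lemma cls_base (i : Fin 5) : cls G X (X i) i := by
  intro t
  constructor
  · intro h
    have ht : t = i ∨ t = i + 1 ∨ t = i + 2 ∨ t = i + 3 ∨ t = i + 4 := by omega
    rcases ht with rfl | rfl | rfl | rfl | rfl
    · exact absurd h (G.irrefl)
    · exact Or.inl rfl
    · exact absurd h (XnonG hXadj hXnon i)
    · exact absurd h (XnonG' hXadj hXnon i)
    · exact Or.inr rfl
  · rintro (rfl | rfl)
    · exact (hXadj i).1
    · have h5 : ∀ k : Fin 5, (k + 4) + 1 = k := by decide
      exact (((h5 i) ▸ hXadj (i + 4)).1).symm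


include hXadj hXnon hXne hT in
lemma cls_unique {y : V} {i j : Fin 5} (hi : cls G X y i) (hj : cls G X y j) : i = j := by
  have h1 : G.Adj y (X (i + 1)) := (hi (i+1)).mpr (Or.inl rfl)
  have h2 := (hj (i+1)).mp h1
  have h3 : G.Adj y (X (i + 4)) := (hi (i+4)).mpr (Or.inr rfl)
  have h4 := (hj (i+4)).mp h3
  omega

include hT in
lemma cls_adj {y z : V} {i k : Fin 5} (hyz : G.Adj y z) (hy : cls G X y i)
    (hz : cls G X z k) : k = i + 1 ∨ k = i + 4 := by
  have hcase : k = i ∨ k = i + 1 ∨ k = i + 2 ∨ k = i + 3 ∨ k = i + 4 := by omega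
  rcases hcase with rfl | h | rfl | rfl | h
  · exact absurd ((hz (k+1)).mpr (Or.inl rfl))
      (fun h2 => hT y z (X (k+1)) hyz h2 ((hy (k+1)).mpr (Or.inl rfl)))
  · exact Or.inl h
  · -- z ~ X(k+4) = X(i+1), y ~ X(i+1)
    have e : (i + 2) + 4 = i + 1 := by omega
    exact absurd ((hz ((i+2)+4)).mpr (Or.inr rfl))
      (fun h2 => hT y z (X (i+1)) hyz (e ▸ h2) ((hy (i+1)).mpr (Or.inl rfl)))
  · have e : (i + 3) + 1 = i + 4 := by omega
    exact absurd ((hz ((i+3)+1)).mpr (Or.inl rfl))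
      (fun h2 => hT y z (X (i+4)) hyz (e ▸ h2) ((hy (i+4)).mpr (Or.inr rfl)))
  · exact Or.inr h

include hN hle hF hT hP5 hXadj hXnon hXne in
lemma cls_ext {z w : V} {j : Fin 5} (hz : cls G X z j) (hzN : z ∉ N)
    (hwz : G.Adj w z) : ∃ i, cls G X w i := by
  classical
  have hXP : ∀ i, X i ∉ N := XP hXadj
  have hXG : ∀ i : Fin 5, G.Adj (X i) (X (i+1)) := fun i => (hXadj i).1
  have hXnonG : ∀ i : Fin 5, ¬ G.Adj (X i) (X (i + 2)) := XnonG hXadj hXnon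
  have hXnonG3 : ∀ i : Fin 5, ¬ G.Adj (X i) (X (i + 3)) := XnonG' hXadj hXnon
  -- w is not one of the X's unless it is classified trivially
  by_cases hw : ∃ t, w = X t
  · obtain ⟨t, rfl⟩ := hw
    exact ⟨t, cls_base hXadj hXnon t⟩
  push_neg at hw
  obtain ⟨b, hb⟩ : ∃ b : Fin 5 → Bool, ∀ t, b t = true ↔ G.Adj w (X t) :=
    ⟨fun t => decide (G.Adj w (X t)), fun t => by rw [decide_eq_true_eq]⟩
  have hnc : ∀ t, ¬ (b t = true ∧ b (t + 1) = true) := by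
    rintro t ⟨h1, h2⟩
    exact hT w (X t) (X (t+1)) ((hb t).mp h1) (hXG t) ((hb (t+1)).mp h2)
  have hsplit := bool5_split b hnc
  rcases hsplit with hempty | ⟨s, hs⟩ | ⟨s, hs⟩
  · -- w has no neighbour on the C5 : P5  w - z - X(j+1) - X(j+2) - X(j+3)
    exfalso
    have hwX : ∀ t, ¬ G.Adj w (X t) := fun t h => by simpa [hempty t] using (hb t).mpr h
    have hzX : ∀ t : Fin 5, t ≠ j + 1 → t ≠ j + 4 → ¬ G.Adj z (X t) := by
      intro t h1 h2 h
      rcases (hz t).mp h with h' | h' <;> [exact h1 h'; exact h2 h']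
    have e1 : (j + 1) + 1 = j + 2 := by omega
    have e2 : (j + 2) + 1 = j + 3 := by omega
    have e3 : (j + 1) + 2 = j + 3 := by omega
    have e4 : (j + 2) + 2 = j + 4 := by omega
    refine noP5 hP5 w z (X (j+1)) (X (j+2)) (X (j+3))
      (hle hwz) (hle ((hz (j+1)).mpr (Or.inl rfl)))
      (hle (e1 ▸ hXG (j+1))) (hle (e2 ▸ hXG (j+2)))
      (nadjP hF (hwX (j+1)) (hXP (j+1)))
      (nadjP hF (hwX (j+2)) (hXP (j+2)))
      (nadjP hF (hwX (j+3)) (hXP (j+3)))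
      (nadjP hF (hzX (j+2) (by omega) (by omega)) (hXP (j+2)))
      (nadjP hF (hzX (j+3) (by omega) (by omega)) (hXP (j+3)))
      (nadjP hF (e3 ▸ hXnonG (j+1)) (hXP (j+3)))
      (hw (j+1)) (hw (j+2)) (hw (j+3)) ?_ ?_ (hXne (j+1) (j+3) (by omega))
    · intro heq
      exact (e4 ▸ hXnonG (j+2)) (heq ▸ ((hz (j+4)).mpr (Or.inr rfl)))
    · intro heq
      exact (e3 ▸ hXnonG (j+1)) ((heq ▸ ((hz (j+1)).mpr (Or.inl rfl))).symm)
  · -- w has exactly one neighbour on the C5 : P5  w - X s - X(s+1) - X(s+2) - X(s+3)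
    exfalso
    have hws : G.Adj w (X s) := (hb s).mp ((hs s).mpr rfl)
    have hwX : ∀ t : Fin 5, t ≠ s → ¬ G.Adj w (X t) := fun t ht h =>
      ht ((hs t).mp ((hb t).mpr h))
    have e1 : s + 1 + 1 = s + 2 := by omega
    have e2 : s + 2 + 1 = s + 3 := by omega
    have e3 : (s + 1) + 2 = s + 3 := by omega
    exact noP5 hP5 w (X s) (X (s+1)) (X (s+2)) (X (s+3))
      (hle hws) (hle (hXG s)) (hle (e1 ▸ hXG (s+1))) (hle (e2 ▸ hXG (s+2)))
      (nadjP hF (hwX (s+1) (by omega)) (hXP (s+1)))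
      (nadjP hF (hwX (s+2) (by omega)) (hXP (s+2)))
      (nadjP hF (hwX (s+3) (by omega)) (hXP (s+3)))
      (nadjP hF (hXnonG s) (hXP (s+2)))
      (nadjP hF (hXnonG3 s) (hXP (s+3)))
      (nadjP hF (e3 ▸ hXnonG (s+1)) (hXP (s+3)))
      (hw (s+1)) (hw (s+2)) (hw (s+3))
      (hXne s (s+2) (by omega)) (hXne s (s+3) (by omega)) (hXne (s+1) (s+3) (by omega))
  · -- two neighbours at distance two : w is classified
    refine ⟨s + 1, fun t => ?_⟩
    constructor
    · intro h
      have := (hs t).mp ((hb t).mpr h)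
      omega
    · intro h
      refine (hb t).mp ((hs t).mpr ?_)
      omega

end cls

include hN hle hF hT hP5 in
lemma exist_spec (K : (pH G N).ConnectedComponent) :
    ∃ f : V → Fin 3,
      (∀ x y, (pH G N).Adj x y → (pH G N).connectedComponentMk x = K → f x ≠ f y) ∧
      (∀ v ∈ N, ∀ a b, G.Adj v a → (pH G N).connectedComponentMk a = K → (pH G N).Adj a b →
        ∃ c1 c2 : Fin 3, ((∃ u, G.Adj v u ∧ ∀ y, ¬ (pH G N).Adj u y) → c2 = 2) ∧
          ∀ x, G.Adj v x → (pH G N).connectedComponentMk x = K → (f x = c1 ∨ f x = c2)) := by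
  classical
  by_cases hbip : ∃ g : V → Bool, ∀ x y, (pH G N).Adj x y →
      (pH G N).connectedComponentMk x = K → g x ≠ g y
  · obtain ⟨g, hg⟩ := hbip
    refine ⟨fun x => bif g x then 0 else 1, ?_, ?_⟩
    · intro x y hxy hxK h
      have hne := hg x y hxy hxK
      revert h
      cases hgx : g x <;> cases hgy : g y <;> simp_all
    · intro v hv a b hva haK hab
      by_cases hiso : ∃ u, G.Adj v u ∧ ∀ y, ¬ (pH G N).Adj u y
      · obtain ⟨u, hvu, hui⟩ := hiso
        refine ⟨bif g a then 0 else 1, 2, fun _ => rfl, ?_⟩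
        intro x hvx hxK
        left
        have hmx := mono hN hle hF hT hP5 hg hv hvu hui hva haK x hvx hxK
        simp only [hmx]
      · refine ⟨0, 1, fun h => absurd h hiso, ?_⟩
        intro x _ _
        cases hgx : g x <;> simp [hgx]
  · have hT3H : ∀ a b c : V, (pH G N).Adj a b → (pH G N).Adj b c → (pH G N).Adj a c → False :=
      fun a b c h1 h2 h3 => hT a b c h1.1 h2.1 h3.1
    have hP5H : ∀ a b c d e : V, (pH G N).Adj a b → (pH G N).Adj b c → (pH G N).Adj c d →
        (pH G N).Adj d e → ¬(pH G N).Adj a c → ¬(pH G N).Adj a d → ¬(pH G N).Adj a e →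
        ¬(pH G N).Adj b d → ¬(pH G N).Adj b e → ¬(pH G N).Adj c e →
        a ≠ c → a ≠ d → a ≠ e → b ≠ d → b ≠ e → c ≠ e → False := by
      intro a b c d e hab hbc hcd hde hac had hae hbd hbe hce nac nad nae nbd nbe nce
      have haN : a ∉ N := hab.2.1
      have hbN : b ∉ N := hab.2.2
      have hcN : c ∉ N := hbc.2.2
      have hdN : d ∉ N := hcd.2.2
      have heN : e ∉ N := hde.2.2
      exact noP5 hP5 a b c d e (hle hab.1) (hle hbc.1) (hle hcd.1) (hle hde.1)
        (nadjL hF (fun h => hac ⟨h, haN, hcN⟩) haN)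
        (nadjL hF (fun h => had ⟨h, haN, hdN⟩) haN)
        (nadjL hF (fun h => hae ⟨h, haN, heN⟩) haN)
        (nadjL hF (fun h => hbd ⟨h, hbN, hdN⟩) hbN)
        (nadjL hF (fun h => hbe ⟨h, hbN, heN⟩) hbN)
        (nadjL hF (fun h => hce ⟨h, hcN, heN⟩) hcN)
        nac nad nae nbd nbe nce
    obtain ⟨X, hXK, hXadj, hXnon, hXne⟩ := findC5 hT3H hP5H K hbip
    have hall : ∀ y, (pH G N).connectedComponentMk y = K → ∃ i, cls G X y i := by
      intro y hyK
      have hr : (pH G N).Reachable (X 0) y := ConnectedComponent.eq.mp ((hXK 0).trans hyK.symm)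
      obtain ⟨p⟩ := hr
      refine walkProp (fun t => ∃ i, cls G X t i) ?_ p ⟨0, cls_base hXadj hXnon 0⟩
      rintro x y ⟨j, hj⟩ hxy
      exact cls_ext hN hle hF hT hP5 hXadj hXnon hXne hj hxy.2.1 hxy.1.symm
    refine ⟨fun y => if h : ∃ i, cls G X y i then pat h.choose else 0, ?_, ?_⟩
    · intro x y hxy hxK
      have hx := hall x hxK
      have hy := hall y ((mk_adj hxy).symm.trans hxK)
      simp only [dif_pos hx, dif_pos hy]
      exact patNe _ _ (cls_adj hT hxy.1 hx.choose_spec hy.choose_spec)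
    · intro v hv a b hva haK hab
      have ha := hall a haK
      have haN : a ∉ N := fun h => hN v hv a h hva
      have hvcls : ∃ i, cls G X v i :=
        cls_ext hN hle hF hT hP5 hXadj hXnon hXne ha.choose_spec haN hva
      refine ⟨pat (hvcls.choose + 1), pat (hvcls.choose + 4), ?_, ?_⟩
      · rintro ⟨u, hvu, hui⟩
        exact absurd (isoBip hN hle hF hT hP5 hv hvu hui hva haK) hbip
      · intro x hvx hxK
        have hx := hall x hxK
        simp only [dif_pos hx]
        rcases cls_adj hT hvx hvcls.choose_spec hx.choose_spec with h | h
        · left; rw [h]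
        · right; rw [h]

include hN hle hF hT hP5 in
lemma main : G.Colorable 3 := by
  classical
  have hex := exist_spec hN hle hF hT hP5
  choose fS hS1 hS2 using hex
  set cP : V → Fin 3 := fun x =>
    if (∀ y, ¬ (pH G N).Adj x y) then 2
    else fS ((pH G N).connectedComponentMk x) x with hcP
  have hcPiso : ∀ x, (∀ y, ¬ (pH G N).Adj x y) → cP x = 2 := by
    intro x hx; rw [hcP]; simp only [if_pos hx]
  have hcPval : ∀ x, ¬ (∀ y, ¬ (pH G N).Adj x y) →
      cP x = fS ((pH G N).connectedComponentMk x) x := by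
    intro x hx; rw [hcP]; simp only [if_neg hx]
  have hvp : ∀ v, v ∈ N → ∃ p : Fin 3 × Fin 3,
      ((∃ u, G.Adj v u ∧ ∀ y, ¬ (pH G N).Adj u y) → p.2 = 2) ∧
      (∀ x, G.Adj v x → (¬ ∀ y, ¬ (pH G N).Adj x y) → (cP x = p.1 ∨ cP x = p.2)) := by
    intro v hv
    by_cases hP : ∃ a b, G.Adj v a ∧ (pH G N).Adj a b
    · obtain ⟨a, b, hva, hab⟩ := hP
      obtain ⟨c1, c2, hcl, hcov⟩ :=
        hS2 ((pH G N).connectedComponentMk a) v hv a b hva rfl hab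
      refine ⟨(c1, c2), hcl, ?_⟩
      intro x hvx hxni
      push_neg at hxni
      obtain ⟨b2, hxb2⟩ := hxni
      have hmkeq : (pH G N).connectedComponentMk x = (pH G N).connectedComponentMk a := by
        by_contra hne
        exact sameComp hN hle hF hT hP5 hv hva hvx hab hxb2 (fun h => hne h.symm)
      have hni : ¬ (∀ y, ¬ (pH G N).Adj x y) := fun hall => hall b2 hxb2
      rw [hcPval x hni, hmkeq]
      exact hcov x hvx hmkeq
    · refine ⟨(2, 2), fun _ => rfl, ?_⟩
      intro x hvx hxni
      push_neg at hxni
      obtain ⟨b2, hxb2⟩ := hxni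
      exact absurd ⟨x, b2, hvx, hxb2⟩ hP
  choose pv hcl hcov using hvp
  set c : V → Fin 3 := fun x =>
    if hx : x ∈ N then other (pv x hx).1 (pv x hx).2 else cP x with hc
  have hcN : ∀ x (hx : x ∈ N), c x = other (pv x hx).1 (pv x hx).2 := by
    intro x hx; rw [hc]; simp only [dif_pos hx]
  have hcPn : ∀ x, x ∉ N → c x = cP x := by
    intro x hx; rw [hc]; simp only [dif_neg hx]
  have key : ∀ x y, G.Adj x y → x ∈ N → c x ≠ c y := by
    intro x y hxy hx
    have hyN : y ∉ N := fun hy => hN x hx y hy hxy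
    rw [hcN x hx, hcPn y hyN]
    by_cases hyiso : ∀ t, ¬ (pH G N).Adj y t
    · rw [hcPiso y hyiso, ← hcl x hx ⟨y, hxy, hyiso⟩]
      exact (other_ne _ _).2
    · rcases hcov x hx y hxy hyiso with h | h <;> rw [h]
      · exact (other_ne _ _).1
      · exact (other_ne _ _).2
  have keyP : ∀ x y, G.Adj x y → x ∉ N → y ∉ N → c x ≠ c y := by
    intro x y hxy hx hy
    have hH : (pH G N).Adj x y := ⟨hxy, hx, hy⟩
    have hxni : ¬ ∀ t, ¬ (pH G N).Adj x t := fun h => h y hH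
    have hyni : ¬ ∀ t, ¬ (pH G N).Adj y t := fun h => h x hH.symm
    rw [hcPn x hx, hcPn y hy, hcPval x hxni, hcPval y hyni,
      (mk_adj hH : (pH G N).connectedComponentMk x = (pH G N).connectedComponentMk y)]
    exact hS1 ((pH G N).connectedComponentMk y) x y hH (mk_adj hH)
  refine ⟨Coloring.mk c ?_⟩
  intro u w huw
  by_cases hu : u ∈ N <;> by_cases hw : w ∈ N
  · exact absurd huw (hN u hu w hw)
  · exact key u w huw hu
  · exact (key w u huw.symm hw).symm
  · exact keyP u w huw hu hw

end ctx

lemma noC3 {G2 : SimpleGraph V} (h : IsEmpty (cycleGraph 3 ↪g G2)) :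
    ∀ a b c, G2.Adj a b → G2.Adj b c → G2.Adj a c → False := by
  intro a b c hab hbc hac
  have nab := G2.ne_of_adj hab
  have nbc := G2.ne_of_adj hbc
  have nac := G2.ne_of_adj hac
  have nba := nab.symm
  have ncb := nbc.symm
  have nca := nac.symm
  have hba := hab.symm
  have hcb := hbc.symm
  have hca := hac.symm
  apply h.false
  refine ⟨⟨![a, b, c], ?_⟩, ?_⟩
  · intro i j hij
    fin_cases i <;> fin_cases j <;> simp_all
  · intro i j
    show G2.Adj (![a, b, c] i) (![a, b, c] j) ↔ _
    fin_cases i <;> fin_cases j <;>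
      simp_all [cycleGraph_adj', G2.irrefl] <;> decide

end ProbeAux

theorem stmt_0 {V : Type*} [Fintype V] (G : SimpleGraph V) :
    (IndFree (cycleGraph 3) G → (∃ N : Set V, PartProbeFree (pathGraph 5) G N) →
      G.Colorable 3) ∧
    ((∃ N : Set V, (∀ u ∈ N, ∀ v ∈ N, ¬ G.Adj u v) ∧
        ∃ G' : SimpleGraph V, G ≤ G' ∧
          (∀ u v, G'.Adj u v → ¬ G.Adj u v → u ∈ N ∧ v ∈ N) ∧
          IndFree (cycleGraph 3) G' ∧ IndFree (pathGraph 5) G') →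
      G.Colorable 3) := by
  constructor
  · rintro hC3 ⟨N, hN, G', hle, hF, hfree⟩
    exact ProbeAux.main hN hle hF (ProbeAux.noC3 hC3) hfree
  · rintro ⟨N, hN, G', hle, hF, hC3', hP5'⟩
    exact ProbeAux.main hN hle hF
      (fun a b c h1 h2 h3 => ProbeAux.noC3 hC3' a b c (hle h1) (hle h2) (hle h3)) hP5'
end

section
/- Let G be a connected C3-free graph and let (G,P,N) be a partitioned probe P5-free graph such that G[P] contains an induced cycle C with vertices v1,v2,v3,v4,v5 in this cyclic order. Then every vertex of V(G) not on C has exactly two neighbours on C, and these two neighbours are v_i and v_{i+2} for some i in {1,...,5} (indices taken modulo 5). -/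
open SimpleGraph

/-- A `P₅`-free graph contains no induced path on five vertices. -/
lemma P5free_no_induced {V : Type*} (G' : SimpleGraph V) (hP5 : IsEmpty (pathGraph 5 ↪g G'))
    (a0 a1 a2 a3 a4 : V)
    (d02 : a0 ≠ a2) (d03 : a0 ≠ a3) (d04 : a0 ≠ a4)
    (d13 : a1 ≠ a3) (d14 : a1 ≠ a4) (d24 : a2 ≠ a4)
    (e01 : G'.Adj a0 a1) (e12 : G'.Adj a1 a2) (e23 : G'.Adj a2 a3) (e34 : G'.Adj a3 a4)
    (n02 : ¬ G'.Adj a0 a2) (n03 : ¬ G'.Adj a0 a3) (n04 : ¬ G'.Adj a0 a4)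
    (n13 : ¬ G'.Adj a1 a3) (n14 : ¬ G'.Adj a1 a4) (n24 : ¬ G'.Adj a2 a4) : False := by
  have d01 : a0 ≠ a1 := e01.ne
  have d12 : a1 ≠ a2 := e12.ne
  have d23 : a2 ≠ a3 := e23.ne
  have d34 : a3 ≠ a4 := e34.ne
  have n20 : ¬ G'.Adj a2 a0 := fun h => n02 h.symm
  have n30 : ¬ G'.Adj a3 a0 := fun h => n03 h.symm
  have n40 : ¬ G'.Adj a4 a0 := fun h => n04 h.symm
  have n31 : ¬ G'.Adj a3 a1 := fun h => n13 h.symm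
  have n41 : ¬ G'.Adj a4 a1 := fun h => n14 h.symm
  have n42 : ¬ G'.Adj a4 a2 := fun h => n24 h.symm
  apply hP5.false
  refine ⟨⟨![a0,a1,a2,a3,a4], ?_⟩, ?_⟩
  · intro x y hxy
    fin_cases x <;> fin_cases y <;>
      simp_all [d01, d02, d03, d04, d12, d13, d14, d23, d24, d34,
        d01.symm, d02.symm, d03.symm, d04.symm, d12.symm, d13.symm, d14.symm,
        d23.symm, d24.symm, d34.symm]
  · intro x y
    change G'.Adj (![a0,a1,a2,a3,a4] x) (![a0,a1,a2,a3,a4] y) ↔ _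
    fin_cases x <;> fin_cases y <;>
      simp [pathGraph_adj, e01, e12, e23, e34, e01.symm, e12.symm, e23.symm, e34.symm,
        n02, n03, n04, n13, n14, n24, n20, n30, n40, n31, n41, n42, G'.irrefl,
          Function.Embedding.coeFn_mk] <;> decide

theorem stmt_1 {V : Type*} [Fintype V] (G : SimpleGraph V) (P N : Set V)
    (hPN : P = Nᶜ)
    (hconn : G.Connected)
    (hC3 : IndFree (cycleGraph 3) G)
    (hprobe : PartProbeFree (pathGraph 5) G N)
    (v : Fin 5 → V) (hinj : Function.Injective v)
    (hvP : ∀ i, v i ∈ P)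
    (hind : ∀ i j, G.Adj (v i) (v j) ↔ (cycleGraph 5).Adj i j) :
    ∀ w : V, w ∉ Set.range v →
      ∃ i : Fin 5, ∀ j : Fin 5, G.Adj w (v j) ↔ (j = i ∨ j = i + 2) := by
  classical
  obtain ⟨hNind, G', hle, hext, hP5⟩ := hprobe
  have hvN : ∀ i, v i ∉ N := by
    intro i hi
    have := hvP i
    rw [hPN] at this
    exact this hi
  -- G and G' agree on every pair containing a cycle vertex
  have agree : ∀ x (t : Fin 5), G'.Adj x (v t) ↔ G.Adj x (v t) := by
    intro x t
    constructor
    · intro h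
      by_contra hg
      exact hvN t (hext x (v t) h hg).2
    · intro h
      exact hle h
  -- triangle-freeness
  have tri : ∀ a b c : V, G.Adj a b → G.Adj b c → G.Adj a c → False := by
    intro a b c hab hbc hac
    apply hC3.false
    refine ⟨⟨![a,b,c], ?_⟩, ?_⟩
    · intro x y hxy
      fin_cases x <;> fin_cases y <;>
        simp_all [hab.ne, hbc.ne, hac.ne, hab.ne', hbc.ne', hac.ne']
    · intro x y
      change G.Adj (![a,b,c] x) (![a,b,c] y) ↔ _
      fin_cases x <;> fin_cases y <;>
        simp [cycleGraph_adj, hab, hbc, hac, hab.symm, hbc.symm, hac.symm, G.irrefl,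
          Function.Embedding.coeFn_mk] <;> decide
  -- shifted description of the cycle adjacency
  have hC2 : ∀ (i s t : Fin 5), G.Adj (v (i + s)) (v (i + t)) ↔ (s - t = 1 ∨ t - s = 1) := by
    intro i s t
    rw [hind, cycleGraph_adj]
    have e1 : (i + s) - (i + t) = s - t := by abel
    have e2 : (i + t) - (i + s) = t - s := by abel
    rw [e1, e2]
  have vne : ∀ (i s t : Fin 5), s ≠ t → v (i + s) ≠ v (i + t) :=
    fun i s t hst h => hst (add_left_cancel (hinj h))
  -- conclusion builder
  have conclude : ∀ (z : V) (i : Fin 5), G.Adj z (v (i+0)) → ¬ G.Adj z (v (i+1)) →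
      G.Adj z (v (i+2)) → ¬ G.Adj z (v (i+3)) → ¬ G.Adj z (v (i+4)) →
      ∀ j, G.Adj z (v j) ↔ (j = i ∨ j = i + 2) := by
    intro z i f0 f1 f2 f3 f4 j
    obtain ⟨k, rfl⟩ : ∃ k, j = i + k := ⟨j - i, by abel⟩
    have hk0 : (i + k = i) ↔ k = 0 := by
      constructor
      · intro h
        have : i + k = i + 0 := by rw [add_zero]; exact h
        exact add_left_cancel this
      · rintro rfl; exact add_zero i
    rw [hk0, add_right_inj]
    fin_cases k <;> simp_all
  -- the key lemma: a vertex off C with a neighbour on C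
  have key : ∀ z, z ∉ Set.range v → ∀ i0 : Fin 5, G.Adj z (v i0) →
      ∃ i : Fin 5, ∀ j, G.Adj z (v j) ↔ (j = i ∨ j = i + 2) := by
    intro z hz i0 hadj0
    have f0 : G.Adj z (v (i0 + 0)) := by rwa [add_zero]
    have h1 : ¬ G.Adj z (v (i0+1)) :=
      fun h => tri z (v (i0+0)) (v (i0+1)) f0 ((hC2 i0 0 1).2 (by decide)) h
    have h4 : ¬ G.Adj z (v (i0+4)) :=
      fun h => tri z (v (i0+0)) (v (i0+4)) f0 ((hC2 i0 0 4).2 (by decide)) h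
    by_cases h2 : G.Adj z (v (i0+2))
    · have h3 : ¬ G.Adj z (v (i0+3)) :=
        fun h => tri z (v (i0+2)) (v (i0+3)) h2 ((hC2 i0 2 3).2 (by decide)) h
      exact ⟨i0, conclude z i0 f0 h1 h2 h3 h4⟩
    · by_cases h3 : G.Adj z (v (i0+3))
      · have E : ∀ (a b : Fin 5), 3 + a = b → i0 + 3 + a = i0 + b :=
          fun a b h => by rw [add_assoc, h]
        refine ⟨i0 + 3, conclude z (i0+3) ?_ ?_ ?_ ?_ ?_⟩
        · rw [E 0 3 (by decide)]; exact h3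
        · rw [E 1 4 (by decide)]; exact h4
        · rw [E 2 0 (by decide)]; exact f0
        · rw [E 3 1 (by decide)]; exact h1
        · rw [E 4 2 (by decide)]; exact h2
      · exfalso
        refine P5free_no_induced G' hP5 z (v (i0+0)) (v (i0+1)) (v (i0+2)) (v (i0+3))
          (fun h => hz ⟨_, h.symm⟩) (fun h => hz ⟨_, h.symm⟩) (fun h => hz ⟨_, h.symm⟩)
          (vne i0 0 2 (by decide)) (vne i0 0 3 (by decide)) (vne i0 1 3 (by decide))
          (hle f0) (hle ((hC2 i0 0 1).2 (by decide))) (hle ((hC2 i0 1 2).2 (by decide)))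
          (hle ((hC2 i0 2 3).2 (by decide)))
          (fun h => h1 ((agree z _).1 h)) (fun h => h2 ((agree z _).1 h))
          (fun h => h3 ((agree z _).1 h))
          (fun h => ?_) (fun h => ?_) (fun h => ?_)
        · have := (hC2 i0 0 2).1 ((agree _ _).1 h); revert this; decide
        · have := (hC2 i0 0 3).1 ((agree _ _).1 h); revert this; decide
        · have := (hC2 i0 1 3).1 ((agree _ _).1 h); revert this; decide
  -- adjacency of consecutive cycle vertices
  have hCnext : ∀ j : Fin 5, G.Adj (v j) (v (j+1)) := by
    intro j
    have := (hC2 j 0 1).2 (by decide)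
    rwa [add_zero] at this
  intro w hw
  by_cases hwadj : ∃ j, G.Adj w (v j)
  · obtain ⟨j, hj⟩ := hwadj
    exact key w hw j hj
  · exfalso
    obtain ⟨p⟩ := hconn.preconnected w (v 0)
    have hQex : ∃ n, ∃ j, G.Adj (p.getVert n) (v j) := by
      refine ⟨p.length, 1, ?_⟩
      rw [p.getVert_length]
      exact hCnext 0
    set m := Nat.find hQex with hmdef
    have hm : ∃ j, G.Adj (p.getVert m) (v j) := Nat.find_spec hQex
    have hmin : ∀ n < m, ¬ ∃ j, G.Adj (p.getVert n) (v j) := fun n h => Nat.find_min hQex h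
    have hm0 : m ≠ 0 := by
      intro h
      apply hwadj
      rw [h, p.getVert_zero] at hm
      exact hm
    have hmle : m ≤ p.length := Nat.find_le ⟨1, by rw [p.getVert_length]; exact hCnext 0⟩
    set u := p.getVert (m-1) with hu
    set x := p.getVert m with hx
    have hux : G.Adj u x := by
      have h := p.adj_getVert_succ (i := m - 1) (by omega)
      rwa [Nat.sub_add_cancel (by omega : 1 ≤ m)] at h
    have hu_no : ∀ j, ¬ G.Adj u (v j) := fun j h => hmin (m-1) (by omega) ⟨j, h⟩
    have hu_nr : u ∉ Set.range v := by
      rintro ⟨j, hj⟩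
      apply hu_no (j+1)
      rw [← hj]
      exact hCnext j
    have hx_nr : x ∉ Set.range v := by
      rintro ⟨j, hj⟩
      apply hu_no j
      rw [hj]
      exact hux
    obtain ⟨j0, hj0⟩ := hm
    obtain ⟨i, hxadj⟩ := key x hx_nr j0 hj0
    refine P5free_no_induced G' hP5 u x (v (i+0)) (v (i+4)) (v (i+3))
      (fun h => hu_nr ⟨_, h.symm⟩) (fun h => hu_nr ⟨_, h.symm⟩) (fun h => hu_nr ⟨_, h.symm⟩)
      (fun h => hx_nr ⟨_, h.symm⟩) (fun h => hx_nr ⟨_, h.symm⟩)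
      (vne i 0 3 (by decide))
      (hle hux) (hle ((hxadj (i+0)).2 (Or.inl (add_zero i)))) (hle ((hC2 i 0 4).2 (by decide)))
      (hle ((hC2 i 4 3).2 (by decide)))
      (fun h => hu_no _ ((agree u _).1 h)) (fun h => hu_no _ ((agree u _).1 h))
      (fun h => hu_no _ ((agree u _).1 h))
      (fun h => ?_) (fun h => ?_) (fun h => ?_)
    · rcases (hxadj (i+4)).1 ((agree x _).1 h) with hh | hh
      · have : i + 4 = i + 0 := by rw [add_zero]; exact hh
        exact absurd (add_left_cancel this) (by decide)
      · exact absurd (add_left_cancel hh) (by decide)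
    · rcases (hxadj (i+3)).1 ((agree x _).1 h) with hh | hh
      · have : i + 3 = i + 0 := by rw [add_zero]; exact hh
        exact absurd (add_left_cancel this) (by decide)
      · exact absurd (add_left_cancel hh) (by decide)
    · have := (hC2 i 0 3).1 ((agree _ _).1 h)
      revert this
      decide
end

section
/- Let (G,P,N) be a partitioned probe P5-free graph, and let K_1,...,K_t be the connected components of G[P] that contain at least one edge. Then every vertex of N that is neither complete nor anticomplete to K_i for some i in [t] is complete or anticomplete to K_j for every j in [t] with j ≠ i. -/
open SimpleGraph

/-- `K` is the vertex set of a connected component of the subgraph of `G` induced by `P`. -/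
def IsCompOf {V : Type*} (G : SimpleGraph V) (P K : Set V) : Prop :=
  K ⊆ P ∧ (G.induce K).Connected ∧ ∀ u ∈ K, ∀ w ∈ P, G.Adj u w → w ∈ K

/-- Along a walk in an induced connected set, if `v` is adjacent to the start and not to the
end, there is an edge `a b` inside the set with `v` adjacent to `a` and not to `b`. -/
lemma mixed_edge {V : Type*} (G : SimpleGraph V) (K : Set V) (v : V) :
    ∀ {x y : K} (_ : (G.induce K).Walk x y), G.Adj v x → ¬ G.Adj v y →
    ∃ a ∈ K, ∃ b ∈ K, G.Adj a b ∧ G.Adj v a ∧ ¬ G.Adj v b := by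
  intro x y p
  induction p with
  | nil => intro h1 h2; exact absurd h1 h2
  | cons h p ih =>
    rename_i x' z' y'
    intro h1 h2
    by_cases hz : G.Adj v z'
    · exact ih hz h2
    · exact ⟨x', x'.2, z', z'.2, h, h1, hz⟩

lemma walk_closed {V : Type*} (G : SimpleGraph V) (P K K' : Set V)
    (hKP : K ⊆ P) (hcl : ∀ u ∈ K', ∀ w ∈ P, G.Adj u w → w ∈ K') :
    ∀ {x y : K} (_ : (G.induce K).Walk x y), (x : V) ∈ K' → (y : V) ∈ K' := by
  intro x y p
  induction p with
  | nil => exact id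
  | cons h p ih =>
    rename_i x' z' y'
    intro hx
    exact ih (hcl x' hx z' (hKP z'.2) h)

lemma comp_disjoint {V : Type*} (G : SimpleGraph V) (P K K' : Set V)
    (hK : IsCompOf G P K) (hK' : IsCompOf G P K') (hne : K ≠ K') :
    ∀ x, x ∈ K → x ∉ K' := by
  intro x hx hx'
  apply hne
  have key : ∀ (A B : Set V), IsCompOf G P A → IsCompOf G P B → x ∈ A → x ∈ B → A ⊆ B := by
    intro A B hA hB hxA hxB u hu
    obtain ⟨p⟩ := hA.2.1 ⟨x, hxA⟩ ⟨u, hu⟩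
    
    exact walk_closed G P A B hA.1 hB.2.2 p hxB
  exact Set.Subset.antisymm (key K K' hK hK' hx hx') (key K' K hK' hK hx' hx)

theorem stmt_2 {V : Type*} [Fintype V] (G : SimpleGraph V) (P N : Set V)
    (hPN : P = Nᶜ)
    (hprobe : PartProbeFree (pathGraph 5) G N)
    (K K' : Set V)
    (hK : IsCompOf G P K) (hKedge : ∃ u ∈ K, ∃ w ∈ K, G.Adj u w)
    (hK' : IsCompOf G P K') (hK'edge : ∃ u ∈ K', ∃ w ∈ K', G.Adj u w)
    (hKK' : K ≠ K')
    (v : V) (hv : v ∈ N)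
    (hnotcomp : ¬ ∀ w ∈ K, G.Adj v w)
    (hnotanti : ¬ ∀ w ∈ K, ¬ G.Adj v w) :
    (∀ w ∈ K', G.Adj v w) ∨ (∀ w ∈ K', ¬ G.Adj v w) := by
  by_contra hcon
  push_neg at hcon hnotcomp hnotanti
  obtain ⟨⟨y', hy', hvy'⟩, ⟨x', hx', hvx'⟩⟩ := hcon
  obtain ⟨y, hy, hvy⟩ := hnotcomp
  obtain ⟨x, hx, hvx⟩ := hnotanti
  -- get mixed edges a b in K and a' b' in K'
  obtain ⟨p⟩ := hK.2.1 ⟨x, hx⟩ ⟨y, hy⟩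
  
  obtain ⟨a, ha, b, hb, hab, hva, hvb⟩ := mixed_edge G K v p hvx hvy
  obtain ⟨p'⟩ := hK'.2.1 ⟨x', hx'⟩ ⟨y', hy'⟩
  
  obtain ⟨a', ha', b', hb', hab', hva', hvb'⟩ := mixed_edge G K' v p' hvx' hvy'
  -- disjointness of components
  have hdisj := comp_disjoint G P K K' hK hK' hKK'
  -- membership in P, not N
  have hPnotN : ∀ u ∈ P, u ∉ N := by
    intro u hu; rw [hPN] at hu; exact hu
  obtain ⟨hNindep, G', hle, hext, hfree⟩ := hprobe
  -- no G'-edge between different components / v and nonneighbors in P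
  have noedgePP : ∀ u ∈ K, ∀ w ∈ K', ¬ G'.Adj u w := by
    intro u hu w hw h
    by_cases hG : G.Adj u w
    · exact hdisj u hu (hK'.2.2 w hw u (hK.1 hu) hG.symm)
    · exact hPnotN u (hK.1 hu) (hext u w h hG).1
  have noedgevP : ∀ w ∈ P, ¬ G.Adj v w → ¬ G'.Adj v w := by
    intro w hw hG h
    exact hPnotN w hw (hext v w h hG).2
  -- distinctness
  have hvK : ∀ u ∈ K, v ≠ u := fun u hu h => hPnotN u (hK.1 hu) (h ▸ hv)
  have hvK' : ∀ u ∈ K', v ≠ u := fun u hu h => hPnotN u (hK'.1 hu) (h ▸ hv)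
  have hba : b ≠ a := (G.ne_of_adj hab).symm
  have hab'' : a' ≠ b' := G.ne_of_adj hab'
  have hKK'ne : ∀ u ∈ K, ∀ w ∈ K', u ≠ w := fun u hu w hw h => hdisj u hu (h ▸ hw)
  -- build the P5 embedding b - a - v - a' - b'
  let f : Fin 5 → V := ![b, a, v, a', b']
  have hadj : ∀ i j : Fin 5, G'.Adj (f i) (f j) ↔ (pathGraph 5).Adj i j := by
    have e1 : G'.Adj b a := hle hab.symm
    have e2 : G'.Adj a v := hle hva.symm
    have e3 : G'.Adj v a' := hle hva'
    have e4 : G'.Adj a' b' := hle hab'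
    have n1 : ¬ G'.Adj b v := fun h => noedgevP b (hK.1 hb) hvb h.symm
    have n2 : ¬ G'.Adj b a' := noedgePP b hb a' ha'
    have n3 : ¬ G'.Adj b b' := noedgePP b hb b' hb'
    have n4 : ¬ G'.Adj a a' := noedgePP a ha a' ha'
    have n5 : ¬ G'.Adj a b' := noedgePP a ha b' hb'
    have n6 : ¬ G'.Adj v b' := noedgevP b' (hK'.1 hb') hvb'
    intro i j
    fin_cases i <;> fin_cases j <;>
      simp only [f, Matrix.cons_val_zero, Matrix.cons_val_one, Matrix.head_cons,
        Matrix.cons_val_two, Matrix.tail_cons, Matrix.cons_val_three, Matrix.cons_val_four,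
        Matrix.head_fin_const, Matrix.cons_val_fin_one, pathGraph_adj, Fin.isValue] <;>
      norm_num <;>
      first
        | exact G'.irrefl
        | exact e1 | exact e1.symm | exact e2 | exact e2.symm
        | exact e3 | exact e3.symm | exact e4 | exact e4.symm
        | exact n1 | exact fun h => n1 h.symm
        | exact n2 | exact fun h => n2 h.symm
        | exact n3 | exact fun h => n3 h.symm
        | exact n4 | exact fun h => n4 h.symm
        | exact n5 | exact fun h => n5 h.symm
        | exact n6 | exact fun h => n6 h.symm
  have hinj : Function.Injective f := by
    intro i j h
    have hne : ∀ u v : V, u ≠ v → v ≠ u := fun u v h => h.symm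
    fin_cases i <;> fin_cases j <;>
      simp only [f, Matrix.cons_val_zero, Matrix.cons_val_one, Matrix.head_cons,
        Matrix.cons_val_two, Matrix.tail_cons, Matrix.cons_val_three, Matrix.cons_val_four,
        Matrix.head_fin_const, Matrix.cons_val_fin_one, Fin.isValue] at h <;>
      first
      | rfl
      | exact absurd h hba
      | exact absurd h hba.symm
      | exact absurd h (hvK b hb).symm
      | exact absurd h (hvK b hb)
      | exact absurd h (hvK a ha).symm
      | exact absurd h (hvK a ha)
      | exact absurd h (hvK' a' ha').symm
      | exact absurd h (hvK' a' ha')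
      | exact absurd h (hvK' b' hb').symm
      | exact absurd h (hvK' b' hb')
      | exact absurd h (hKK'ne b hb a' ha')
      | exact absurd h (hKK'ne b hb a' ha').symm
      | exact absurd h (hKK'ne b hb b' hb')
      | exact absurd h (hKK'ne b hb b' hb').symm
      | exact absurd h (hKK'ne a ha a' ha')
      | exact absurd h (hKK'ne a ha a' ha').symm
      | exact absurd h (hKK'ne a ha b' hb')
      | exact absurd h (hKK'ne a ha b' hb').symm
      | exact absurd h hab''
      | exact absurd h hab''.symm
  exact hfree.false ⟨⟨f, hinj⟩, hadj _ _⟩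
end

section
/- Let (G,P,N) be a connected partitioned probe P5-free graph, let K_1,...,K_t be the connected components of G[P] that contain at least one edge, and let C be an induced cycle in K_1 such that no vertex of V(G)\V(C) is adjacent to every vertex of C. Let u ∈ N be a vertex with no neighbour in K_1. If u has a neighbour in K_i for some i ≥ 2, then some vertex of N that has a neighbour in K_1 is complete to K_i. -/
open SimpleGraph

/-- Closure of a set under edges propagates along walks. -/
lemma walk_closed_s3 {W : Type*} {H : SimpleGraph W} {S : Set W}
    (hS : ∀ a ∈ S, ∀ b, H.Adj a b → b ∈ S) {a b : W} (w : H.Walk a b) :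
    a ∈ S → b ∈ S := by
  induction w with
  | nil => exact id
  | cons h p ih => exact fun ha => ih (hS _ ha _ h)

lemma exists_crossing {W : Type*} {H : SimpleGraph W} {S : Set W} {a b : W}
    (h : H.Reachable a b) (ha : a ∈ S) (hb : b ∉ S) :
    ∃ p ∈ S, ∃ q, q ∉ S ∧ H.Adj p q := by
  by_contra hc
  push_neg at hc
  obtain ⟨w⟩ := h
  exact hb (walk_closed_s3 (fun p hp q hpq => by_contra fun hq => (hc p hp q hq) hpq) w ha)

/-- There is no induced path on five vertices in a `P₅`-free graph. -/
lemma no_P5 {V : Type*} {G' : SimpleGraph V}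
    (hfree : IsEmpty (pathGraph 5 ↪g G'))
    {a b x y z : V}
    (e1 : G'.Adj a b) (e2 : G'.Adj b x) (e3 : G'.Adj x y) (e4 : G'.Adj y z)
    (n1 : ¬ G'.Adj a x) (n2 : ¬ G'.Adj a y) (n3 : ¬ G'.Adj a z)
    (n4 : ¬ G'.Adj b y) (n5 : ¬ G'.Adj b z) (n6 : ¬ G'.Adj x z) : False := by
  have m1 : ¬ G'.Adj x a := fun h => n1 h.symm
  have m2 : ¬ G'.Adj y a := fun h => n2 h.symm
  have m3 : ¬ G'.Adj z a := fun h => n3 h.symm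
  have m4 : ¬ G'.Adj y b := fun h => n4 h.symm
  have m5 : ¬ G'.Adj z b := fun h => n5 h.symm
  have m6 : ¬ G'.Adj z x := fun h => n6 h.symm
  have dab : a ≠ b := e1.ne
  have dbx : b ≠ x := e2.ne
  have dxy : x ≠ y := e3.ne
  have dyz : y ≠ z := e4.ne
  have dax : a ≠ x := by rintro rfl; exact n2 e3
  have day : a ≠ y := by rintro rfl; exact n3 e4
  have daz : a ≠ z := by rintro rfl; exact m2 e4
  have dby : b ≠ y := by rintro rfl; exact n5 e4
  have dbz : b ≠ z := by rintro rfl; exact m6 e2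
  have dxz : x ≠ z := by rintro rfl; exact n5 e2
  let f : Fin 5 → V := ![a, b, x, y, z]
  have finj : Function.Injective f := by
    intro i j hij
    fin_cases i <;> fin_cases j <;> simp_all [f]
  have hiff : ∀ i j, G'.Adj (f i) (f j) ↔ (pathGraph 5).Adj i j := by
    intro i j
    fin_cases i <;> fin_cases j <;>
      simp [f, pathGraph_adj, e1, e2, e3, e4, e1.symm, e2.symm, e3.symm, e4.symm,
        n1, n2, n3, n4, n5, n6, m1, m2, m3, m4, m5, m6] <;> decide
  exact hfree.elim' ⟨⟨f, finj⟩, @fun i j => hiff i j⟩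

/-- A prefix of a walk gives a short walk to any vertex along it. -/
lemma exists_walk_getVert {V : Type*} {G : SimpleGraph V} {u v : V}
    (p : G.Walk u v) (i : ℕ) : ∃ q : G.Walk u (p.getVert i), q.length ≤ i := by
  induction p generalizing i with
  | nil => exact ⟨Walk.nil, by simp⟩
  | cons h q ih =>
    cases i with
    | zero => exact ⟨Walk.nil, le_of_eq rfl⟩
    | succ i =>
      obtain ⟨r, hr⟩ := ih i
      exact ⟨Walk.cons h r, by simpa using Nat.succ_le_succ hr⟩

theorem stmt_3 {V : Type*} [Fintype V] (G : SimpleGraph V) (P N : Set V)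
    (hPN : P = Nᶜ)
    (hconn : G.Connected)
    (hprobe : PartProbeFree (pathGraph 5) G N)
    (K₁ Kᵢ : Set V)
    (hK₁ : IsCompOf G P K₁) (hK₁edge : ∃ u ∈ K₁, ∃ w ∈ K₁, G.Adj u w)
    (hKᵢ : IsCompOf G P Kᵢ) (hKᵢedge : ∃ u ∈ Kᵢ, ∃ w ∈ Kᵢ, G.Adj u w)
    (hne : K₁ ≠ Kᵢ)
    -- `C` is an induced cycle in `K₁` ...
    (n : ℕ) (hn : 3 ≤ n) (c : Fin n → V) (hcinj : Function.Injective c)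
    (hcK₁ : ∀ i, c i ∈ K₁)
    (hcind : ∀ i j, G.Adj (c i) (c j) ↔ (cycleGraph n).Adj i j)
    -- ... such that no vertex outside `C` is adjacent to every vertex of `C`
    (hnodom : ∀ w : V, w ∉ Set.range c → ¬ ∀ i, G.Adj w (c i))
    (u : V) (hu : u ∈ N)
    (huK₁ : ∀ w ∈ K₁, ¬ G.Adj u w)
    (huKᵢ : ∃ w ∈ Kᵢ, G.Adj u w) :
    ∃ x ∈ N, (∃ w ∈ K₁, G.Adj x w) ∧ ∀ w ∈ Kᵢ, G.Adj x w := by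
  obtain ⟨n', rfl⟩ : ∃ n', n = n' + 3 := ⟨n - 3, by omega⟩
  obtain ⟨hNind, G', hle, hfill, hfree⟩ := hprobe
  have hPadj : ∀ v w : V, w ∉ N → (G'.Adj v w ↔ G.Adj v w) := fun v w hw =>
    ⟨fun h => by_contra fun h' => hw ((hfill v w h h').2), fun h => hle h⟩
  have hPnotN : ∀ w ∈ P, w ∉ N := fun w hw => by rw [hPN] at hw; exact hw
  -- two components sharing a vertex are equal
  have hcompsub : ∀ (K K' : Set V), IsCompOf G P K → IsCompOf G P K' →
      ∀ v, v ∈ K → v ∈ K' → K ⊆ K' := by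
    rintro K K' ⟨hKP, hKconn, hKcl⟩ ⟨hK'P, hK'conn, hK'cl⟩ v hvK hvK' w hw
    obtain ⟨p⟩ := hKconn.preconnected ⟨v, hvK⟩ ⟨w, hw⟩
    refine walk_closed_s3 (S := {z : ↥K | (z : V) ∈ K'}) ?_ p hvK'
    intro x hx y hxy
    exact hK'cl x hx y (hKP y.2) (by simpa using hxy)
  have hnonadj : ∀ a ∈ K₁, ∀ b ∈ Kᵢ, ¬ G.Adj a b := by
    intro a ha b hb hab
    have hbK₁ : b ∈ K₁ := hK₁.2.2 a ha b (hKᵢ.1 hb) hab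
    exact hne (Set.Subset.antisymm (hcompsub K₁ Kᵢ hK₁ hKᵢ b hbK₁ hb)
      (hcompsub Kᵢ K₁ hKᵢ hK₁ b hb hbK₁))
  have hcP : ∀ i, c i ∈ P := fun i => hK₁.1 (hcK₁ i)
  have hcN : ∀ i, c i ∉ N := fun i => hPnotN _ (hcP i)
  have hG'c : ∀ (v : V) i, G'.Adj v (c i) ↔ G.Adj v (c i) := fun v i => hPadj v (c i) (hcN i)
  have hG'conn : G'.Connected := hconn.mono hle
  have huc : ∀ i, ¬ G'.Adj u (c i) := fun i h => huK₁ _ (hcK₁ i) ((hG'c u i).mp h)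
  set D : Set V := {v | ∃ i, G.Adj v (c i)} with hD
  have hc0D : c 0 ∈ D := ⟨1, (hcind 0 1).mpr (by rw [cycleGraph_adj]; right; simp)⟩
  have hSne : {m | ∃ v ∈ D, G'.dist u v = m}.Nonempty := ⟨_, c 0, hc0D, rfl⟩
  obtain ⟨v, hvD, hvd⟩ := Nat.sInf_mem hSne
  have hmin : ∀ w ∈ D, G'.dist u v ≤ G'.dist u w := fun w hw => hvd ▸ Nat.sInf_le ⟨w, hw, rfl⟩
  have huD : u ∉ D := fun hx => hx.elim fun i hi => huK₁ _ (hcK₁ i) hi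
  have hvne : u ≠ v := fun h => huD (h ▸ hvD)
  have hdpos : 1 ≤ G'.dist u v := hG'conn.pos_dist_of_ne hvne
  -- crossing pair on the cycle
  have hcycpair : ∀ w : V, w ∈ D → w ∉ Set.range c →
      ∃ i j, G.Adj w (c i) ∧ ¬ G.Adj w (c j) ∧ G.Adj (c i) (c j) := by
    intro w hwD hwr
    obtain ⟨i₀, hi₀⟩ := hwD
    have hnd : ¬ ∀ i, G.Adj w (c i) := hnodom w hwr
    push_neg at hnd
    obtain ⟨j₀, hj₀⟩ := hnd
    obtain ⟨i, hi, j, hj, hadj⟩ := exists_crossing (H := cycleGraph (n'+3))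
      (S := {i | G.Adj w (c i)}) (cycleGraph_preconnected i₀ j₀) hi₀ hj₀
    exact ⟨i, j, hi, hj, (hcind i j).mpr hadj⟩
  -- main claim: the distance from `u` to `D` is 1
  have hd1 : G'.dist u v = 1 := by
    by_contra hne1
    set m := G'.dist u v with hm
    have h2 : 2 ≤ m := by omega
    obtain ⟨p, hp⟩ := hG'conn.exists_walk_length_eq_dist u v
    have hgv : p.getVert m = v := by rw [hm.trans hp.symm]; exact p.getVert_length
    have e₂ : G'.Adj (p.getVert (m-2)) (p.getVert (m-1)) := by
      have := p.adj_getVert_succ (i := m - 2) (by omega)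
      rwa [show m - 2 + 1 = m - 1 by omega] at this
    have e₁ : G'.Adj (p.getVert (m-1)) v := by
      have := p.adj_getVert_succ (i := m - 1) (by omega)
      rwa [show m - 1 + 1 = m by omega, hgv] at this
    have hdist1 : G'.dist u (p.getVert (m-1)) ≤ m - 1 := by
      obtain ⟨q, hq⟩ := exists_walk_getVert p (m-1)
      exact le_trans (dist_le q) hq
    have hdist2 : G'.dist u (p.getVert (m-2)) ≤ m - 2 := by
      obtain ⟨q, hq⟩ := exists_walk_getVert p (m-2)
      exact le_trans (dist_le q) hq
    have hw₁ : p.getVert (m-1) ∉ D := fun hD' => by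
      have := hmin _ hD'; omega
    have hw₂ : p.getVert (m-2) ∉ D := fun hD' => by
      have := hmin _ hD'; omega
    have hn1 : ¬ G'.Adj (p.getVert (m-2)) v := by
      intro hadj
      obtain ⟨q, hq⟩ := exists_walk_getVert p (m-2)
      have := dist_le (q.concat hadj)
      rw [Walk.length_concat] at this
      omega
    have hvr : v ∉ Set.range c := by
      rintro ⟨i, rfl⟩
      exact hw₁ ⟨i, (hG'c _ i).mp e₁⟩
    obtain ⟨i, j, hvi, hvj, hcij⟩ := hcycpair v hvD hvr
    exact no_P5 hfree e₂ e₁ (hle hvi) (hle hcij)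
      hn1
      (fun h => hw₂ ⟨i, (hG'c _ i).mp h⟩)
      (fun h => hw₂ ⟨j, (hG'c _ j).mp h⟩)
      (fun h => hw₁ ⟨i, (hG'c _ i).mp h⟩)
      (fun h => hw₁ ⟨j, (hG'c _ j).mp h⟩)
      (fun h => hvj ((hG'c v j).mp h))
  have hadj_uv : G'.Adj u v := dist_eq_one_iff_adj.mp hd1
  have hvN : v ∈ N := by
    by_contra hvN
    have huv : G.Adj u v := (hPadj u v hvN).mp hadj_uv
    obtain ⟨i, hi⟩ := hvD
    have hvP : v ∈ P := by rw [hPN]; exact hvN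
    exact huK₁ v (hK₁.2.2 (c i) (hcK₁ i) v hvP hi.symm) huv
  have hvr : v ∉ Set.range c := by
    rintro ⟨i, rfl⟩
    exact hcN i hvN
  obtain ⟨i, j, hvi, hvj, hcij⟩ := hcycpair v hvD hvr
  refine ⟨v, hvN, ⟨c i, hcK₁ i, hvi⟩, ?_⟩
  intro b hb
  by_contra hnb
  have n6 : ¬ G'.Adj v (c j) := fun h => hvj ((hG'c v j).mp h)
  by_cases hA : ∃ a ∈ Kᵢ, G.Adj v a
  · obtain ⟨a, haK, hva⟩ := hA
    obtain ⟨pq, hpS, q, hqS, hpq⟩ := exists_crossing (H := G.induce Kᵢ)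
      (S := {z : ↥Kᵢ | G.Adj v (z : V)}) ((hKᵢ.2.1).preconnected ⟨a, haK⟩ ⟨b, hb⟩) hva hnb
    have hpq' : G.Adj (pq : V) (q : V) := by simpa using hpq
    refine no_P5 hfree (hle hpq'.symm) (hle hpS).symm (hle hvi) (hle hcij) ?_ ?_ ?_ ?_ ?_ n6
    · exact fun h => hqS ((hPadj v (q : V) (hPnotN _ (hKᵢ.1 q.2))).mp h.symm)
    · exact fun h => hnonadj (c i) (hcK₁ i) (q : V) q.2 ((hG'c _ i).mp h).symm
    · exact fun h => hnonadj (c j) (hcK₁ j) (q : V) q.2 ((hG'c _ j).mp h).symm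
    · exact fun h => hnonadj (c i) (hcK₁ i) (pq : V) pq.2 ((hG'c _ i).mp h).symm
    · exact fun h => hnonadj (c j) (hcK₁ j) (pq : V) pq.2 ((hG'c _ j).mp h).symm
  · push_neg at hA
    obtain ⟨y, hyK, huy⟩ := huKᵢ
    refine no_P5 hfree (hle huy).symm hadj_uv (hle hvi) (hle hcij) ?_ ?_ ?_ (huc i) (huc j) n6
    · exact fun h => hA y hyK ((hPadj v y (hPnotN _ (hKᵢ.1 hyK))).mp h.symm)
    · exact fun h => hnonadj (c i) (hcK₁ i) y hyK ((hG'c _ i).mp h).symm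
    · exact fun h => hnonadj (c j) (hcK₁ j) y hyK ((hG'c _ j).mp h).symm
end

section
/- Let (G,P,N) be a connected partitioned probe P5-free graph. If G is 3-colourable, then at most one connected component of G[P] is non-bipartite. -/
open SimpleGraph

private lemma walk_closed_s4 {V : Type*} {H : SimpleGraph V} {a b : V} (w : H.Walk a b)
    (Q : V → Prop) (hstep : ∀ x y, H.Adj x y → Q x → Q y) (ha : Q a) : Q b := by
  induction w with
  | nil => exact ha
  | cons h _ ih => exact ih (hstep _ _ h ha)

private lemma walk_flip {V : Type*} {H : SimpleGraph V} {a b : V} (w : H.Walk a b)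
    (Q : V → Prop) (ha : Q a) (hb : ¬ Q b) :
    ∃ x y, H.Adj x y ∧ Q x ∧ ¬ Q y := by
  induction w with
  | nil => exact absurd ha hb
  | @cons u v _ h _ ih =>
    by_cases hq : Q v
    · exact ih hq hb
    · exact ⟨u, v, h, ha, hq⟩

private lemma exists_walk_start {V : Type*} {H : SimpleGraph V} {a b : V} (w : H.Walk a b)
    (i : ℕ) : ∃ q : H.Walk a (w.getVert i), q.length ≤ i := by
  induction w generalizing i with
  | nil => exact ⟨SimpleGraph.Walk.nil, by simp⟩
  | @cons u v x h p ih =>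
    cases i with
    | zero => exact ⟨SimpleGraph.Walk.nil, Nat.le_of_eq rfl⟩
    | succ i =>
      obtain ⟨q, hq⟩ := ih i
      exact ⟨SimpleGraph.Walk.cons h q, by simpa using hq⟩

private lemma dist_start_le {V : Type*} {H : SimpleGraph V} {a b : V} (w : H.Walk a b)
    (i : ℕ) : H.dist a (w.getVert i) ≤ i := by
  obtain ⟨q, hq⟩ := exists_walk_start w i
  exact le_trans (SimpleGraph.dist_le q) hq

private lemma dist_end_le {V : Type*} {H : SimpleGraph V} {a b : V} (w : H.Walk a b)
    (i : ℕ) : H.dist (w.getVert i) b ≤ w.length - i := by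
  induction w generalizing i with
  | nil => simp [SimpleGraph.Walk.getVert, SimpleGraph.dist_self]
  | @cons u v x h p ih =>
    cases i with
    | zero =>
      simpa using SimpleGraph.dist_le (SimpleGraph.Walk.cons h p)
    | succ i =>
      simpa [SimpleGraph.Walk.length_cons, Nat.succ_sub_succ] using ih i

private lemma two_col_of_dominating {V : Type*} {G : SimpleGraph V}
    (c : G.Coloring (Fin 3)) (K : Set V) (p : V)
    (hadj : ∀ u ∈ K, G.Adj p u) : (G.induce K).Colorable 2 := by
  have key : ∀ a b q : Fin 3, a ≠ q → b ≠ q → a ≠ b →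
      (if a = q + 1 then (0 : Fin 2) else 1) ≠ (if b = q + 1 then 0 else 1) := by decide
  exact ⟨SimpleGraph.Coloring.mk
    (fun u => if c u.1 = c p + 1 then (0 : Fin 2) else 1)
    (fun {u v} h => by
      have hGuv : G.Adj u.1 v.1 := h
      exact key _ _ _ (c.valid (hadj u.1 u.2)).symm (c.valid (hadj v.1 v.2)).symm
        (c.valid hGuv))⟩

private lemma p5_contra {V : Type*} {G' : SimpleGraph V}
    (hfree : IndFree (pathGraph 5) G') (a b c d e : V)
    (hab : G'.Adj a b) (hbc : G'.Adj b c) (hcd : G'.Adj c d) (hde : G'.Adj d e)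
    (hac : ¬ G'.Adj a c) (had : ¬ G'.Adj a d) (hae : ¬ G'.Adj a e)
    (hbd : ¬ G'.Adj b d) (hbe : ¬ G'.Adj b e) (hce : ¬ G'.Adj c e)
    (nac : a ≠ c) (nad : a ≠ d) (nae : a ≠ e) (nbd : b ≠ d)
    (nbe : b ≠ e) (nce : c ≠ e) : False := by
  have f : Fin 5 → V := ![a, b, c, d, e]
  refine hfree.elim ⟨⟨![a, b, c, d, e], ?_⟩, ?_⟩
  · intro i j hij
    fin_cases i <;> fin_cases j <;>
      simp_all [hab.ne, hbc.ne, hcd.ne, hde.ne, nac, nad, nae, nbd, nbe, nce,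
        hab.ne', hbc.ne', hcd.ne', hde.ne', nac.symm, nad.symm, nae.symm, nbd.symm,
        nbe.symm, nce.symm]
  · have hca : ¬ G'.Adj c a := fun h => hac h.symm
    have hda : ¬ G'.Adj d a := fun h => had h.symm
    have hea : ¬ G'.Adj e a := fun h => hae h.symm
    have hdb : ¬ G'.Adj d b := fun h => hbd h.symm
    have heb : ¬ G'.Adj e b := fun h => hbe h.symm
    have hec : ¬ G'.Adj e c := fun h => hce h.symm
    intro i j
    fin_cases i <;> fin_cases j <;>
      simp [pathGraph_adj, hab, hbc, hcd, hde, hab.symm, hbc.symm, hcd.symm, hde.symm,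
        hac, had, hae, hbd, hbe, hce, hca, hda, hea, hdb, heb, hec, G'.irrefl] <;>
      first | assumption | exact G'.adj_symm (by assumption)

theorem stmt_4 {V : Type*} [Fintype V] (G : SimpleGraph V) (P N : Set V)
    (hPN : P = Nᶜ)
    (hconn : G.Connected)
    (hprobe : PartProbeFree (pathGraph 5) G N)
    (hcol : G.Colorable 3) :
    ∀ K K' : Set V, IsCompOf G P K → IsCompOf G P K' →
      ¬ (G.induce K).Colorable 2 → ¬ (G.induce K').Colorable 2 → K = K' := by
  classical
  obtain ⟨hNindep, G', hle, hnew, hfree⟩ := hprobe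
  intro K1 K2 hK1 hK2 hnb1 hnb2
  by_contra hne
  obtain ⟨hK1P, hK1conn, hK1cl⟩ := hK1
  obtain ⟨hK2P, hK2conn, hK2cl⟩ := hK2
  -- G'-edges touching P are G-edges
  have hPE : ∀ u v : V, u ∈ P → G'.Adj u v → G.Adj u v := by
    intro u v hu hadj
    by_contra hG
    exact (hPN ▸ hu) (hnew u v hadj hG).1
  -- components are disjoint
  have hdisj : ∀ u, u ∈ K1 → u ∈ K2 → False := by
    intro u hu1 hu2
    apply hne
    have hsub : ∀ (A B : Set V), A ⊆ P → (G.induce A).Connected →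
        (∀ x ∈ B, ∀ w ∈ P, G.Adj x w → w ∈ B) → u ∈ A → u ∈ B → A ⊆ B := by
      intro A B hAP hAconn hBcl huA huB v hvA
      obtain ⟨w⟩ := hAconn ⟨u, huA⟩ ⟨v, hvA⟩
      exact walk_closed_s4 w (fun x : ↥A => (x : V) ∈ B)
        (fun x y hxy hx => hBcl x hx y (hAP y.2) hxy) huB
    exact Set.Subset.antisymm (hsub K1 K2 hK1P hK1conn hK2cl hu1 hu2)
      (hsub K2 K1 hK2P hK2conn hK1cl hu2 hu1)
  -- no G'-edges between K1 and K2
  have hnoedge : ∀ u ∈ K1, ∀ v ∈ K2, ¬ G'.Adj u v := by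
    intro u hu v hv hadj
    exact hdisj v (hK1cl u hu v (hK2P hv) (hPE u v (hK1P hu) hadj)) hv
  have hG'conn : G'.Connected := hconn.mono hle
  -- nonempty
  obtain ⟨u0, hu0⟩ : ∃ u, u ∈ K1 := by
    obtain ⟨⟨u, hu⟩⟩ := hK1conn.nonempty; exact ⟨u, hu⟩
  obtain ⟨v0, hv0⟩ : ∃ v, v ∈ K2 := by
    obtain ⟨⟨v, hv⟩⟩ := hK2conn.nonempty; exact ⟨v, hv⟩
  -- minimum distance between the components
  have hPdex : ∃ n, ∃ u ∈ K1, ∃ v ∈ K2, G'.dist u v = n :=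
    ⟨G'.dist u0 v0, u0, hu0, v0, hv0, rfl⟩
  obtain ⟨d, ⟨p0, hp0, pd, hpd, hdist⟩, hminlt⟩ :
      ∃ n, (∃ u ∈ K1, ∃ v ∈ K2, G'.dist u v = n) ∧
        ∀ m, m < n → ¬ ∃ u ∈ K1, ∃ v ∈ K2, G'.dist u v = m :=
    ⟨Nat.find hPdex, Nat.find_spec hPdex, fun m hm => Nat.find_min hPdex hm⟩
  have hmin : ∀ u ∈ K1, ∀ v ∈ K2, d ≤ G'.dist u v := by
    intro u hu v hv
    by_contra hlt
    exact hminlt _ (by omega) ⟨u, hu, v, hv, rfl⟩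
  obtain ⟨w, hwlen⟩ : ∃ w : G'.Walk p0 pd, w.length = G'.dist p0 pd :=
    (hG'conn p0 pd).exists_walk_length_eq_dist
  rw [hdist] at hwlen
  set p : ℕ → V := fun i => w.getVert i with hp
  have hp0' : p 0 = p0 := SimpleGraph.Walk.getVert_zero w
  have hpd' : p d = pd := by
    rw [hp]
    simp only [← hwlen]
    exact SimpleGraph.Walk.getVert_length w
  -- distance facts
  have hdistfacts : ∀ i ≤ d, G'.dist p0 (p i) = i ∧ G'.dist (p i) pd = d - i := by
    intro i hi
    have h1 : G'.dist p0 (p i) ≤ i := dist_start_le w i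
    have h2 : G'.dist (p i) pd ≤ d - i := by
      have h := dist_end_le w i
      rw [hwlen] at h
      exact h
    have h3 : d ≤ G'.dist p0 (p i) + G'.dist (p i) pd := by
      have := hG'conn.dist_triangle (u := p0) (v := p i) (w := pd)
      omega
    omega
  have hd0 : d ≠ 0 := by
    intro h
    have h2 : p 0 = p d := by rw [h]
    exact hdisj p0 hp0 (by rw [← hp0', h2, hpd']; exact hpd)
  -- p i not in K1 for 1 ≤ i ≤ d, not in K2 for i ≤ d - 1
  have hnK1 : ∀ i, 1 ≤ i → i ≤ d → p i ∉ K1 := by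
    intro i h1 h2 hmem
    have := hmin (p i) hmem pd hpd
    have := (hdistfacts i h2).2
    omega
  have hnK2 : ∀ i, i ≤ d - 1 → i ≤ d → p i ∉ K2 := by
    intro i h1 h2 hmem
    have := hmin p0 hp0 (p i) hmem
    have := (hdistfacts i h2).1
    omega
  -- vertices ≥ 2 on the path are nonadjacent to K1
  have hfar1 : ∀ i, 2 ≤ i → i ≤ d → ∀ u ∈ K1, ¬ G'.Adj u (p i) := by
    intro i h2 hid u hu hadj
    have h1 : G'.dist u (p i) ≤ 1 := by
      rw [SimpleGraph.dist_eq_one_iff_adj.mpr hadj]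
    have h3 : G'.dist u pd ≤ G'.dist u (p i) + G'.dist (p i) pd :=
      hG'conn.dist_triangle
    have h4 := (hdistfacts i hid).2
    have h5 := hmin u hu pd hpd
    omega
  -- nonconsecutive path vertices are nonadjacent
  have hindu : ∀ i j, i + 2 ≤ j → j ≤ d → ¬ G'.Adj (p i) (p j) := by
    intro i j hij hjd hadj
    have h1 : G'.dist (p i) (p j) ≤ 1 := by
      rw [SimpleGraph.dist_eq_one_iff_adj.mpr hadj]
    have h2 : G'.dist p0 (p j) ≤ G'.dist p0 (p i) + G'.dist (p i) (p j) :=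
      hG'conn.dist_triangle
    have h3 := (hdistfacts i (by omega)).1
    have h4 := (hdistfacts j hjd).1
    omega
  have hpdistinct : ∀ i j, i < j → j ≤ d → p i ≠ p j := by
    intro i j hij hjd heq
    have h3 := (hdistfacts i (by omega)).1
    have h4 := (hdistfacts j hjd).1
    rw [heq] at h3
    omega
  -- adjacency along the walk
  have hstep : ∀ i, i < d → G'.Adj (p i) (p (i + 1)) := by
    intro i hi
    exact w.adj_getVert_succ (by omega)
  -- d ≥ 2
  have hd1 : d ≠ 1 := by
    intro h
    have hadj : G'.Adj (p 0) (p 1) := hstep 0 (by omega)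
    have h1 : p 1 = pd := by rw [← h, hpd']
    rw [hp0', h1] at hadj
    exact hnoedge p0 hp0 pd hpd hadj
  have hd2 : 2 ≤ d := by omega
  -- the coloring
  obtain ⟨c⟩ := hcol
  -- claim A/B machinery: from a vertex adjacent to some vertex of a nonbipartite
  -- closed component, get an adjacent pair x, y in the component with
  -- q adjacent to x and not to y
  have claimAB : ∀ (K : Set V), K ⊆ P → (G.induce K).Connected →
      (∀ x ∈ K, ∀ w ∈ P, G.Adj x w → w ∈ K) → ¬ (G.induce K).Colorable 2 →
      ∀ q a, a ∈ K → G'.Adj q a →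
      ∃ x y, x ∈ K ∧ y ∈ K ∧ G.Adj x y ∧ G'.Adj q x ∧ ¬ G'.Adj q y := by
    intro K hKP hKconn hKcl hKnb q a ha hqa
    have hnotall : ¬ ∀ u ∈ K, G'.Adj q u := by
      intro hall
      refine hKnb (two_col_of_dominating c K q ?_)
      intro u hu
      exact (hPE u q (hKP hu) (hall u hu).symm).symm
    push_neg at hnotall
    obtain ⟨z, hz, hqz⟩ := hnotall
    obtain ⟨wk⟩ := hKconn ⟨a, ha⟩ ⟨z, hz⟩
    obtain ⟨x, y, hxy, hx, hy⟩ := walk_flip wk (fun u : ↥K => G'.Adj q (u : V)) hqa hqz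
    exact ⟨x, y, x.2, y.2, hxy, hx, hy⟩
  -- get the K1-side pair
  have hadj1 : G'.Adj (p 1) p0 := by
    have := hstep 0 (by omega)
    rw [hp0'] at this; exact this.symm
  obtain ⟨x1, y1, hx1, hy1, hxy1, hqx1, hqy1⟩ :=
    claimAB K1 hK1P hK1conn hK1cl hnb1 (p 1) p0 hp0 hadj1
  have hp1nK1 : p 1 ∉ K1 := hnK1 1 le_rfl (by omega)
  by_cases hd3 : 3 ≤ d
  · -- P5 : y1, x1, p1, p2, p3
    refine p5_contra hfree y1 x1 (p 1) (p 2) (p 3)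
      (hle hxy1).symm hqx1.symm (hstep 1 (by omega)) (hstep 2 (by omega))
      (fun h => hqy1 h.symm)
      (hfar1 2 le_rfl (by omega) y1 hy1)
      (hfar1 3 (by omega) (by omega) y1 hy1)
      (hfar1 2 le_rfl (by omega) x1 hx1)
      (hfar1 3 (by omega) (by omega) x1 hx1)
      (hindu 1 3 (by omega) (by omega))
      (fun h => hp1nK1 (h ▸ hy1))
      (fun h => hnK1 2 (by omega) (by omega) (h ▸ hy1))
      (fun h => hnK1 3 (by omega) (by omega) (h ▸ hy1))
      (fun h => hnK1 2 (by omega) (by omega) (h ▸ hx1))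
      (fun h => hnK1 3 (by omega) (by omega) (h ▸ hx1))
      (hpdistinct 1 3 (by omega) (by omega))
  · -- d = 2 ; P5 : y1, x1, p1, x2, y2
    have hd2' : d = 2 := by omega
    have hadj2 : G'.Adj (p 1) pd := by
      have := hstep 1 (by omega)
      rw [show (1:ℕ)+1 = d by omega, hpd'] at this
      exact this
    obtain ⟨x2, y2, hx2, hy2, hxy2, hqx2, hqy2⟩ :=
      claimAB K2 hK2P hK2conn hK2cl hnb2 (p 1) pd hpd hadj2
    have hp1nK2 : p 1 ∉ K2 := hnK2 1 (by omega) (by omega)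
    refine p5_contra hfree y1 x1 (p 1) x2 y2
      (hle hxy1).symm hqx1.symm hqx2 (hle hxy2)
      (fun h => hqy1 h.symm)
      (fun h => hnoedge y1 hy1 x2 hx2 h)
      (fun h => hnoedge y1 hy1 y2 hy2 h)
      (fun h => hnoedge x1 hx1 x2 hx2 h)
      (fun h => hnoedge x1 hx1 y2 hy2 h)
      hqy2
      (fun h => hp1nK1 (h ▸ hy1))
      (fun h => hdisj y1 hy1 (h ▸ hx2))
      (fun h => hdisj y1 hy1 (h ▸ hy2))
      (fun h => hdisj x1 hx1 (h ▸ hx2))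
      (fun h => hdisj x1 hx1 (h ▸ hy2))
      (fun h => hp1nK2 (h ▸ hy2))
end

section
/- For every integer s ≥ 0, every probe (P2+sP1)-free graph is (s+1)P2-free. -/
open SimpleGraph

/-- `G` is a probe `H`-free graph (for some choice of non-probes). -/
def ProbeFree {W V : Type*} (H : SimpleGraph W) (G : SimpleGraph V) : Prop :=
  ∃ N : Set V, PartProbeFree H G N

/-- The graph `P₂ + sP₁`: one edge (between vertices `0` and `1`) plus `s` isolated vertices. -/
def P2sP1 (s : ℕ) : SimpleGraph (Fin (s + 2)) :=
  SimpleGraph.fromRel (fun i j => (i : ℕ) = 0 ∧ (j : ℕ) = 1)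

/-- The graph `nP₂`: a disjoint union of `n` edges, pairing `2k` with `2k+1`. -/
def nP2 (n : ℕ) : SimpleGraph (Fin (2 * n)) :=
  SimpleGraph.fromRel (fun i j => (i : ℕ) / 2 = (j : ℕ) / 2)

theorem stmt_7 (s : ℕ) {V : Type*} [Fintype V] (G : SimpleGraph V)
    (hprobe : ProbeFree (P2sP1 s) G) :
    IndFree (nP2 (s + 1)) G := by
  classical
  obtain ⟨N, hN, G', hle, hF, hfree⟩ := hprobe
  constructor
  intro e
  have hmap : ∀ i j : Fin (2*(s+1)), G.Adj (e i) (e j) ↔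
      ((i:ℕ) ≠ (j:ℕ) ∧ (i:ℕ)/2 = (j:ℕ)/2) := by
    intro i j
    rw [e.map_adj_iff]
    constructor
    · intro h
      rw [nP2, SimpleGraph.fromRel_adj] at h
      refine ⟨fun hij => h.1 (Fin.ext hij), ?_⟩
      rcases h.2 with h | h <;> omega
    · intro h
      rw [nP2, SimpleGraph.fromRel_adj]
      exact ⟨fun hij => h.1 (congrArg Fin.val hij), Or.inl h.2⟩
  have hP : ∀ x y, x ∉ N → G'.Adj x y → G.Adj x y := by
    intro x y hx h
    by_contra hg
    exact hx (hF x y h hg).1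
  have hlt : ∀ k : Fin (s+1), 2*(k:ℕ)+1 < 2*(s+1) := fun k => by omega
  have hlt' : ∀ k : Fin (s+1), 2*(k:ℕ) < 2*(s+1) := fun k => by omega
  set d : Fin (s+1) → Fin (2*(s+1)) := fun k =>
    if e ⟨2*k, hlt' k⟩ ∈ N then ⟨2*k+1, hlt k⟩ else ⟨2*k, hlt' k⟩ with hd
  have hd2 : ∀ k, ((d k : ℕ)) / 2 = (k:ℕ) := by
    intro k; simp only [hd]
    by_cases h : e ⟨2*k, hlt' k⟩ ∈ N <;> simp [h] <;> omega
  have hadjk : ∀ k : Fin (s+1), G.Adj (e ⟨2*k, hlt' k⟩) (e ⟨2*k+1, hlt k⟩) := by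
    intro k; rw [hmap]; constructor <;> simp <;> omega
  have hdN : ∀ k, e (d k) ∉ N := by
    intro k
    simp only [hd]
    by_cases h : e ⟨2*k, hlt' k⟩ ∈ N <;> simp [h]
    intro h2
    exact (hN _ h _ h2) (hadjk k)
  set ι : Fin (s+2) → Fin (2*(s+1)) := fun i =>
    if (i:ℕ) ≤ 1 then ⟨(i:ℕ), by omega⟩ else d ⟨(i:ℕ)-1, by omega⟩ with hι
  have hιval : ∀ i : Fin (s+2), (i:ℕ) ≤ 1 → (ι i : ℕ) = (i:ℕ) := by
    intro i hi; simp [hι, hi]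
  have hι2 : ∀ i : Fin (s+2), ((ι i : ℕ))/2 = if (i:ℕ) ≤ 1 then 0 else (i:ℕ)-1 := by
    intro i
    by_cases hi : (i:ℕ) ≤ 1 <;> simp [hι, hi]
    · exact hd2 _
  have hιN : ∀ i : Fin (s+2), ¬ (i:ℕ) ≤ 1 → e (ι i) ∉ N := by
    intro i hi; simp only [hι, if_neg hi]; exact hdN _
  have hinj : Function.Injective (fun i => e (ι i)) := by
    intro i j hij
    have h : ι i = ι j := e.injective hij
    have hv : (ι i : ℕ) = (ι j : ℕ) := congrArg Fin.val h
    have h2 : ((ι i:ℕ))/2 = ((ι j:ℕ))/2 := by rw [hv]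
    rw [hι2 i, hι2 j] at h2
    by_cases hi : (i:ℕ) ≤ 1 <;> by_cases hj : (j:ℕ) ≤ 1 <;>
      simp only [hi, hj, if_pos, if_neg, if_true, if_false] at h2 <;>
      apply Fin.ext
    · have := hιval i hi; have := hιval j hj; omega
    · omega
    · omega
    · omega
  have hG'nadj : ∀ i j : Fin (2*(s+1)), e i ∉ N → (i:ℕ)/2 ≠ (j:ℕ)/2 →
      ¬ G'.Adj (e i) (e j) := by
    intro i j h1 h2 h
    exact h2 ((hmap i j).mp (hP _ _ h1 h)).2
  refine hfree.false ⟨⟨fun i => e (ι i), hinj⟩, ?_⟩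
  intro i j
  simp only [Function.Embedding.coeFn_mk]
  rw [P2sP1, SimpleGraph.fromRel_adj]
  constructor
  · intro h
    have hij : i ≠ j := by rintro rfl; exact h.ne rfl
    by_cases hi : (i:ℕ) ≤ 1 <;> by_cases hj : (j:ℕ) ≤ 1
    · refine ⟨hij, ?_⟩
      have := hιval i hi; have := hιval j hj
      have hij' : (i:ℕ) ≠ (j:ℕ) := fun hh => hij (Fin.ext hh)
      omega
    · exact absurd h.symm (hG'nadj _ _ (hιN j hj) (by rw [hι2 i, hι2 j]; simp [hi, hj]; omega))
    · exact absurd h (hG'nadj _ _ (hιN i hi) (by rw [hι2 i, hι2 j]; simp [hi, hj]; omega))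
    · have hij' : (i:ℕ) ≠ (j:ℕ) := fun hh => hij (Fin.ext hh)
      exact absurd h (hG'nadj _ _ (hιN i hi) (by rw [hι2 i, hι2 j]; simp [hi, hj]; omega))
  · intro h
    obtain ⟨hij, hor⟩ := h
    have hi : (i:ℕ) ≤ 1 := by omega
    have hj : (j:ℕ) ≤ 1 := by omega
    apply hle
    rw [hmap]
    have := hιval i hi; have := hιval j hj
    constructor <;> omega
end

section
/- For every integer ℓ ≥ 3, the cycle C_{2ℓ+1} on 2ℓ+1 vertices is not probe P5-free. -/
open SimpleGraph
open scoped Fin.NatCast Fin.CommRing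

section helpers
variable {n : ℕ} [NeZero n] (hn : 7 ≤ n)

lemma fin_cast_val (k : ℕ) (hk : k < n) : ((k : Fin n) : ℕ) = k := by
  rw [Fin.val_natCast]; exact Nat.mod_eq_of_lt hk

include hn in
lemma cyc_adj_iff (u v : Fin n) :
    (cycleGraph n).Adj u v ↔ u - v = 1 ∨ v - u = 1 := by
  rw [cycleGraph_adj']
  have h1 : ((1 : Fin n) : ℕ) = 1 := by
    have := fin_cast_val (n := n) 1 (by omega)
    rwa [Nat.cast_one] at this
  constructor
  · rintro (h | h)
    · exact Or.inl (Fin.ext (by rw [h1]; exact h))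
    · exact Or.inr (Fin.ext (by rw [h1]; exact h))
  · rintro (h | h)
    · exact Or.inl (by rw [h, h1])
    · exact Or.inr (by rw [h, h1])

include hn in
lemma cyc_adj_succ (u : Fin n) :
    (cycleGraph n).Adj u (u + ((1:ℕ) : Fin n)) := by
  rw [cyc_adj_iff hn]
  right
  rw [Nat.cast_one, add_sub_cancel_left]

include hn in
lemma cyc_nadj (u : Fin n) (d : ℕ) (h2 : 2 ≤ d) (h5 : d ≤ 5) :
    ¬ (cycleGraph n).Adj u (u + (d : Fin n)) := by
  intro hadj
  rw [cyc_adj_iff hn] at hadj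
  rcases hadj with h | h
  · have hd : ((d + 1 : ℕ) : Fin n) = 0 := by push_cast; linear_combination -h
    have := congrArg Fin.val hd
    rw [fin_cast_val (d+1) (by omega)] at this
    simp at this
  · have hd : (d : Fin n) = ((1:ℕ) : Fin n) := by push_cast; linear_combination h
    have := congrArg Fin.val hd
    rw [fin_cast_val d (by omega), fin_cast_val 1 (by omega)] at this
    omega

end helpers

lemma mk_p5 {V : Type*} (G' : SimpleGraph V) {a b c d e : V}
    (hab : G'.Adj a b) (hbc : G'.Adj b c) (hcd : G'.Adj c d) (hde : G'.Adj d e)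
    (hac : ¬ G'.Adj a c) (had : ¬ G'.Adj a d) (hae : ¬ G'.Adj a e)
    (hbd : ¬ G'.Adj b d) (hbe : ¬ G'.Adj b e) (hce : ¬ G'.Adj c e) :
    Nonempty (pathGraph 5 ↪g G') := by
  have nab : a ≠ b := hab.ne
  have nbc : b ≠ c := hbc.ne
  have ncd : c ≠ d := hcd.ne
  have nde : d ≠ e := hde.ne
  have nac : a ≠ c := by rintro rfl; exact had hcd
  have nad : a ≠ d := by rintro rfl; exact hae hde
  have nae : a ≠ e := by rintro rfl; exact had hde.symm
  have nbd : b ≠ d := by rintro rfl; exact hbe hde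
  have nbe : b ≠ e := by rintro rfl; exact hae hab
  have nce : c ≠ e := by rintro rfl; exact hbe hbc
  have hba := hab.symm; have hcb := hbc.symm; have hdc := hcd.symm; have hed := hde.symm
  have hca : ¬ G'.Adj c a := fun h => hac h.symm
  have hda : ¬ G'.Adj d a := fun h => had h.symm
  have hea : ¬ G'.Adj e a := fun h => hae h.symm
  have hdb : ¬ G'.Adj d b := fun h => hbd h.symm
  have heb : ¬ G'.Adj e b := fun h => hbe h.symm
  have hec : ¬ G'.Adj e c := fun h => hce h.symm
  have hnaa : ¬ G'.Adj a a := G'.irrefl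
  have hnbb : ¬ G'.Adj b b := G'.irrefl
  have hncc : ¬ G'.Adj c c := G'.irrefl
  have hndd : ¬ G'.Adj d d := G'.irrefl
  have hnee : ¬ G'.Adj e e := G'.irrefl
  refine ⟨⟨⟨![a,b,c,d,e], ?_⟩, ?_⟩⟩
  · intro x y hxy
    fin_cases x <;> fin_cases y <;> simp_all
  · intro x y
    change G'.Adj (![a,b,c,d,e] x) (![a,b,c,d,e] y) ↔ _
    fin_cases x <;> fin_cases y <;> simp_all [pathGraph_adj] <;> decide

theorem stmt_8 (ℓ : ℕ) (hℓ : 3 ≤ ℓ) :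
    ¬ ProbeFree (pathGraph 5) (cycleGraph (2 * ℓ + 1)) := by
  rintro ⟨N, hInd, G', hle, hF, hfree⟩
  haveI : NeZero (2*ℓ+1) := ⟨by omega⟩
  have hn : 7 ≤ 2*ℓ+1 := by omega
  have hx : ∀ (u : Fin (2*ℓ+1)) (k l : ℕ),
      u + (k : Fin (2*ℓ+1)) + (l : Fin (2*ℓ+1)) = u + ((k + l : ℕ) : Fin (2*ℓ+1)) := by
    intro u k l; rw [add_assoc, Nat.cast_add]
  have gadj : ∀ (z : Fin (2*ℓ+1)) (k l : ℕ), l = k + 1 →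
      (cycleGraph (2*ℓ+1)).Adj (z + (k : Fin (2*ℓ+1))) (z + (l : Fin (2*ℓ+1))) := by
    intro z k l hkl
    subst hkl
    rw [← hx]
    exact cyc_adj_succ hn _
  have gnadj : ∀ (z : Fin (2*ℓ+1)) (k l : ℕ), k + 2 ≤ l → l ≤ k + 5 →
      ¬ (cycleGraph (2*ℓ+1)).Adj (z + (k : Fin (2*ℓ+1))) (z + (l : Fin (2*ℓ+1))) := by
    intro z k l h2 h5
    obtain ⟨d, rfl⟩ : ∃ d, l = k + d := ⟨l - k, by omega⟩
    rw [← hx]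
    exact cyc_nadj hn _ d (by omega) (by omega)
  have e' : ∀ (z : Fin (2*ℓ+1)) (k l : ℕ), l = k + 1 →
      G'.Adj (z + (k : Fin (2*ℓ+1))) (z + (l : Fin (2*ℓ+1))) :=
    fun z k l h => hle (gadj z k l h)
  have n' : ∀ (z : Fin (2*ℓ+1)) (k l : ℕ), k + 2 ≤ l → l ≤ k + 5 →
      (z + (k : Fin (2*ℓ+1)) ∉ N ∨ z + (l : Fin (2*ℓ+1)) ∉ N) →
      ¬ G'.Adj (z + (k : Fin (2*ℓ+1))) (z + (l : Fin (2*ℓ+1))) := by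
    intro z k l h2 h5 hmem h'
    rcases hF _ _ h' (gnadj z k l h2 h5) with ⟨ha, hb⟩
    tauto
  -- L1 : among z+2, z+3, z+4 at least one is a non-probe,
  -- else z, z+1, z+2, z+3, z+4 is an induced P5
  have hL1 : ∀ z : Fin (2*ℓ+1), z + ((2:ℕ) : Fin (2*ℓ+1)) ∈ N ∨
      z + ((3:ℕ) : Fin (2*ℓ+1)) ∈ N ∨ z + ((4:ℕ) : Fin (2*ℓ+1)) ∈ N := by
    intro z
    by_contra hcon
    push_neg at hcon
    obtain ⟨h2, h3, h4⟩ := hcon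
    exact hfree.false (mk_p5 G'
      (e' z 0 1 rfl) (e' z 1 2 rfl) (e' z 2 3 rfl) (e' z 3 4 rfl)
      (n' z 0 2 (by omega) (by omega) (Or.inr h2))
      (n' z 0 3 (by omega) (by omega) (Or.inr h3))
      (n' z 0 4 (by omega) (by omega) (Or.inr h4))
      (n' z 1 3 (by omega) (by omega) (Or.inr h3))
      (n' z 1 4 (by omega) (by omega) (Or.inr h4))
      (n' z 2 4 (by omega) (by omega) (Or.inl h2))).some
  -- L2 : there is u ∈ N with u+2 ∉ N (parity of the odd cycle)
  have hL2 : ∃ u, u ∈ N ∧ u + ((2:ℕ) : Fin (2*ℓ+1)) ∉ N := by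
    by_contra hcon
    push_neg at hcon
    have hne : ∃ u, u ∈ N := by
      rcases hL1 0 with h | h | h
      exacts [⟨_, h⟩, ⟨_, h⟩, ⟨_, h⟩]
    obtain ⟨u0, hu0⟩ := hne
    have hcl : ∀ k : ℕ, u0 + ((2*k : ℕ) : Fin (2*ℓ+1)) ∈ N := by
      intro k
      induction k with
      | zero => simpa using hu0
      | succ k ih =>
        have h2 := hcon _ ih
        rw [hx] at h2
        have heq : 2*k + 2 = 2*(k+1) := by ring
        rwa [heq] at h2
    have hkey := hcl (ℓ + 1)
    have h2l : ((2*(ℓ+1) : ℕ) : Fin (2*ℓ+1)) = ((1:ℕ) : Fin (2*ℓ+1)) := by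
      have heq : (2*(ℓ+1) : ℕ) = (2*ℓ+1) + 1 := by ring
      rw [heq, Nat.cast_add, Fin.natCast_self, zero_add]
    rw [h2l] at hkey
    exact hInd u0 hu0 _ hkey (cyc_adj_succ hn u0)
  obtain ⟨u, hu, hu2⟩ := hL2
  obtain ⟨z, rfl⟩ : ∃ z, u = z + ((1:ℕ) : Fin (2*ℓ+1)) :=
    ⟨u - ((1:ℕ) : Fin (2*ℓ+1)), by ring⟩
  -- membership facts around z
  have m1 : z + ((1:ℕ) : Fin (2*ℓ+1)) ∈ N := hu
  have m3 : z + ((3:ℕ) : Fin (2*ℓ+1)) ∉ N := by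
    intro h; apply hu2; rw [hx]; exact h
  have m2 : z + ((2:ℕ) : Fin (2*ℓ+1)) ∉ N :=
    fun h => hInd _ m1 _ h (gadj z 1 2 rfl)
  have m4 : z + ((4:ℕ) : Fin (2*ℓ+1)) ∈ N := by
    rcases hL1 z with h | h | h
    exacts [absurd h m2, absurd h m3, h]
  have m5 : z + ((5:ℕ) : Fin (2*ℓ+1)) ∉ N :=
    fun h => hInd _ m4 _ h (gadj z 4 5 rfl)
  have m0 : z + ((0:ℕ) : Fin (2*ℓ+1)) ∉ N :=
    fun h => hInd _ h _ m1 (gadj z 0 1 rfl)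
  -- the edge (z+1, z+4) is forced, else z, z+1, z+2, z+3, z+4 is an induced P5
  have hE1 : G'.Adj (z + ((1:ℕ) : Fin (2*ℓ+1))) (z + ((4:ℕ) : Fin (2*ℓ+1))) := by
    by_contra hno
    exact hfree.false (mk_p5 G'
      (e' z 0 1 rfl) (e' z 1 2 rfl) (e' z 2 3 rfl) (e' z 3 4 rfl)
      (n' z 0 2 (by omega) (by omega) (Or.inr m2))
      (n' z 0 3 (by omega) (by omega) (Or.inr m3))
      (n' z 0 4 (by omega) (by omega) (Or.inl m0))
      (n' z 1 3 (by omega) (by omega) (Or.inr m3))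
      hno
      (n' z 2 4 (by omega) (by omega) (Or.inl m2))).some
  by_cases h6 : z + ((6:ℕ) : Fin (2*ℓ+1)) ∈ N
  · -- z+6 ∈ N; then one of the chords (z+1,z+6), (z+4,z+6) is forced,
    -- else z+2, z+1, z+4, z+5, z+6 is an induced P5
    have m7 : z + ((7:ℕ) : Fin (2*ℓ+1)) ∉ N :=
      fun h => hInd _ h6 _ h (gadj z 6 7 rfl)
    have hE2 : G'.Adj (z + ((1:ℕ) : Fin (2*ℓ+1))) (z + ((6:ℕ) : Fin (2*ℓ+1))) ∨
        G'.Adj (z + ((4:ℕ) : Fin (2*ℓ+1))) (z + ((6:ℕ) : Fin (2*ℓ+1))) := by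
      by_contra hcon
      push_neg at hcon
      obtain ⟨hb, hc⟩ := hcon
      exact hfree.false (mk_p5 G'
        (e' z 1 2 rfl).symm hE1 (e' z 4 5 rfl) (e' z 5 6 rfl)
        (n' z 2 4 (by omega) (by omega) (Or.inl m2))
        (n' z 2 5 (by omega) (by omega) (Or.inl m2))
        (n' z 2 6 (by omega) (by omega) (Or.inl m2))
        (n' z 1 5 (by omega) (by omega) (Or.inr m5))
        hb hc).some
    rcases hE2 with hE2a | hE2b
    · -- z+5, z+6, z+1, z+2, z+3 is an induced P5
      exact hfree.false (mk_p5 G'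
        (e' z 5 6 rfl) hE2a.symm (e' z 1 2 rfl) (e' z 2 3 rfl)
        (fun h => n' z 1 5 (by omega) (by omega) (Or.inr m5) h.symm)
        (fun h => n' z 2 5 (by omega) (by omega) (Or.inr m5) h.symm)
        (fun h => n' z 3 5 (by omega) (by omega) (Or.inr m5) h.symm)
        (fun h => n' z 2 6 (by omega) (by omega) (Or.inl m2) h.symm)
        (fun h => n' z 3 6 (by omega) (by omega) (Or.inl m3) h.symm)
        (n' z 1 3 (by omega) (by omega) (Or.inr m3))).some
    · -- z+2, z+3, z+4, z+6, z+7 is an induced P5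
      exact hfree.false (mk_p5 G'
        (e' z 2 3 rfl) (e' z 3 4 rfl) hE2b (e' z 6 7 rfl)
        (n' z 2 4 (by omega) (by omega) (Or.inl m2))
        (n' z 2 6 (by omega) (by omega) (Or.inl m2))
        (n' z 2 7 (by omega) (by omega) (Or.inl m2))
        (n' z 3 6 (by omega) (by omega) (Or.inl m3))
        (n' z 3 7 (by omega) (by omega) (Or.inl m3))
        (n' z 4 7 (by omega) (by omega) (Or.inr m7))).some
  · -- z+6 ∉ N; then z+2, z+1, z+4, z+5, z+6 is an induced P5
    exact hfree.false (mk_p5 G'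
      (e' z 1 2 rfl).symm hE1 (e' z 4 5 rfl) (e' z 5 6 rfl)
      (n' z 2 4 (by omega) (by omega) (Or.inl m2))
      (n' z 2 5 (by omega) (by omega) (Or.inl m2))
      (n' z 2 6 (by omega) (by omega) (Or.inl m2))
      (n' z 1 5 (by omega) (by omega) (Or.inr m5))
      (n' z 1 6 (by omega) (by omega) (Or.inr h6))
      (n' z 4 6 (by omega) (by omega) (Or.inr h6))).some
end

section
/- For every integer ℓ ≥ 3, the cycle C_{2ℓ+1} on 2ℓ+1 vertices is probe P6-free. -/
open SimpleGraph

/-- Nat-valued characterization of adjacency in the cycle graph. -/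
lemma cycAdj_iff {n : ℕ} {u v : Fin (n + 3)} :
    (cycleGraph (n + 3)).Adj u v ↔
      (u.val + 1 = v.val ∨ v.val + 1 = u.val ∨ (u.val = 0 ∧ v.val = n + 2) ∨
        (v.val = 0 ∧ u.val = n + 2)) := by
  have key : ∀ a b : Fin (n + 3), a - b = 1 ↔
      (b.val + 1 = a.val ∨ (b.val = n + 2 ∧ a.val = 0)) := by
    intro a b
    rw [sub_eq_iff_eq_add, Fin.ext_iff, Fin.add_def]
    have hb := b.isLt
    show a.val = (1 + b.val) % (n + 3) ↔ _
    rcases Nat.lt_or_ge (1 + b.val) (n + 3) with h | h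
    · rw [Nat.mod_eq_of_lt h]; omega
    · have hbe : b.val = n + 2 := by omega
      rw [hbe]
      have h13 : 1 + (n + 2) = n + 3 := by omega
      rw [h13, Nat.mod_self]; omega
  have : (cycleGraph (n + 3)).Adj u v ↔ u - v = 1 ∨ v - u = 1 := by
    exact cycleGraph_adj (n := n + 1)
  rw [this, key, key]
  omega

/-- The finite combinatorial core: if the `true` positions of `q` are pairwise
adjacent in the path, then there are two distinct path edges whose endpoints
are all `false`. -/
lemma core (q : Fin 6 → Bool)
    (h : ∀ i j : Fin 6, q i = true → q j = true → i ≠ j →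
      (i.val + 1 = j.val ∨ j.val + 1 = i.val)) :
    ∃ i j : Fin 5, i ≠ j ∧ q i.castSucc = false ∧ q i.succ = false ∧
      q j.castSucc = false ∧ q j.succ = false := by
  revert h
  revert q
  decide

theorem stmt_9 (ℓ : ℕ) (hℓ : 3 ≤ ℓ) :
    ProbeFree (pathGraph 6) (cycleGraph (2 * ℓ + 1)) := by
  obtain ⟨m, rfl⟩ : ∃ m, ℓ = m + 3 := ⟨ℓ - 3, by omega⟩
  set n : ℕ := 2 * (m + 3) + 1 with hn
  have hn' : n = (2 * m + 4) + 3 := by omega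
  -- the cycle graph, with adjacency rewritten
  have cycA : ∀ u v : Fin n, (cycleGraph n).Adj u v ↔
      (u.val + 1 = v.val ∨ v.val + 1 = u.val ∨ (u.val = 0 ∧ v.val = n - 1) ∨
        (v.val = 0 ∧ u.val = n - 1)) := by
    intro u v
    rw [show n - 1 = (2 * m + 4) + 2 from by omega]
    exact cycAdj_iff (n := 2 * m + 4)
  refine ⟨{v : Fin n | Odd v.val}, ?_, ?_⟩
  · -- independence of the odd vertices
    intro u hu v hv hadj
    rw [cycA] at hadj
    simp only [Set.mem_setOf_eq] at hu hv
    have h1 : n - 1 = 2 * (m + 2) + 2 := by omega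
    rcases hu with ⟨a, ha⟩; rcases hv with ⟨b, hb⟩
    omega
  · -- the fill: a clique on the odd vertices
    refine ⟨cycleGraph n ⊔ SimpleGraph.fromRel (fun u v => Odd u.val ∧ Odd v.val),
      le_sup_left, ?_, ?_⟩
    · intro u v hadj hnadj
      rcases hadj with h | h
      · exact absurd h hnadj
      · rcases h with ⟨_, h | h⟩
        · exact ⟨h.1, h.2⟩
        · exact ⟨h.2, h.1⟩
    · constructor
      intro f
      -- parity pattern of the embedding
      set q : Fin 6 → Bool := fun i => decide (Odd (f i).val) with hq
      have hclique : ∀ i j : Fin 6, q i = true → q j = true → i ≠ j →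
          (i.val + 1 = j.val ∨ j.val + 1 = i.val) := by
        intro i j hi hj hij
        rw [hq] at hi hj
        simp only [decide_eq_true_eq] at hi hj
        have hfij : f i ≠ f j := fun h => hij (f.injective h)
        have : (cycleGraph n ⊔ SimpleGraph.fromRel
            (fun u v => Odd u.val ∧ Odd v.val)).Adj (f i) (f j) :=
          Or.inr ⟨hfij, Or.inl ⟨hi, hj⟩⟩
        rw [f.map_adj_iff, pathGraph_adj] at this
        exact this
      obtain ⟨i, j, hij, hi0, hi1, hj0, hj1⟩ := core q hclique
      -- each of the two even-even path edges maps onto the pair {0, n-1}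
      have even_edge : ∀ k : Fin 5, q k.castSucc = false → q k.succ = false →
          ((f k.castSucc).val = 0 ∧ (f k.succ).val = n - 1) ∨
          ((f k.succ).val = 0 ∧ (f k.castSucc).val = n - 1) := by
        intro k hk0 hk1
        rw [hq] at hk0 hk1
        simp only [decide_eq_false_iff_not, Nat.not_odd_iff_even] at hk0 hk1
        have hpadj : (pathGraph 6).Adj k.castSucc k.succ := by
          rw [pathGraph_adj]
          left
          simp
        have hadj : (cycleGraph n ⊔ SimpleGraph.fromRel
            (fun u v => Odd u.val ∧ Odd v.val)).Adj (f k.castSucc) (f k.succ) := by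
          rw [f.map_adj_iff]; exact hpadj
        rcases hadj with h | h
        · rw [cycA] at h
          rcases hk0 with ⟨a, ha⟩; rcases hk1 with ⟨b, hb⟩
          have : n - 1 = 2 * (m + 3) := by omega
          omega
        · rcases h.2 with h' | h'
          · exact absurd h'.1 (Nat.not_odd_iff_even.mpr hk0)
          · exact absurd h'.2 (Nat.not_odd_iff_even.mpr hk0)
      have Hi := even_edge i hi0 hi1
      have Hj := even_edge j hj0 hj1
      -- derive contradiction from injectivity
      have hinj : ∀ a b : Fin 6, (f a).val = (f b).val → a = b := by
        intro a b hab
        exact f.injective (Fin.ext hab)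
      have hcc : i.castSucc ≠ j.castSucc := fun h => hij (Fin.castSucc_injective _ h)
      have hne1 : n - 1 ≠ 0 := by omega
      rcases Hi with ⟨ha, hb⟩ | ⟨hb, ha⟩ <;> rcases Hj with ⟨hc, hd⟩ | ⟨hd, hc⟩
      · exact hcc (hinj _ _ (by omega))
      · -- f i.succ = f j.castSucc and f j.succ = f i.castSucc
        have e1 : i.succ = j.castSucc := hinj _ _ (by omega)
        have e2 : j.succ = i.castSucc := hinj _ _ (by omega)
        have v1 : (i.succ : Fin 6).val = (j.castSucc : Fin 6).val := by rw [e1]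
        have v2 : (j.succ : Fin 6).val = (i.castSucc : Fin 6).val := by rw [e2]
        simp only [Fin.val_succ, Fin.coe_castSucc] at v1 v2
        omega
      · have e1 : i.succ = j.castSucc := hinj _ _ (by omega)
        have e2 : j.succ = i.castSucc := hinj _ _ (by omega)
        have v1 : (i.succ : Fin 6).val = (j.castSucc : Fin 6).val := by rw [e1]
        have v2 : (j.succ : Fin 6).val = (i.castSucc : Fin 6).val := by rw [e2]
        simp only [Fin.val_succ, Fin.coe_castSucc] at v1 v2
        omega
      · exact hcc (hinj _ _ (by omega))
end

section
/- Let L be the graph on ten vertices u1,...,u5,u1',...,u5' whose edges are: u_i u_{i+1} and u_i' u_{i+1}' for 1 ≤ i ≤ 4; u_i u_i' for 1 ≤ i ≤ 5; and u_i u_{i+1}' and u_i' u_{i+1} for 1 ≤ i ≤ 4. Then L contains no induced cycle of odd length at least 7 (i.e., L is C_{2ℓ+1}-free for every ℓ ≥ 3), but L is not probe P5-free. -/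
open SimpleGraph

/-- The graph `L` on ten vertices: `uᵢ = (i, 0)` and `uᵢ' = (i, 1)` for `i = 0, ..., 4`.
Two distinct vertices `(i, a)` and `(j, b)` are adjacent iff `|i - j| = 1` or `i = j`;
this gives exactly the edges `uᵢuᵢ₊₁`, `uᵢ'uᵢ₊₁'`, `uᵢuᵢ'`, `uᵢuᵢ₊₁'` and `uᵢ'uᵢ₊₁`. -/
def graphL : SimpleGraph (Fin 5 × Fin 2) :=
  SimpleGraph.fromRel (fun p q => (p.1 : ℕ) + 1 = (q.1 : ℕ) ∨ p.1 = q.1)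

lemma graphL_adj {p q : Fin 5 × Fin 2} :
    graphL.Adj p q ↔ p ≠ q ∧ ((p.1 : ℕ) + 1 = (q.1 : ℕ) ∨ (q.1 : ℕ) + 1 = (p.1 : ℕ) ∨ p.1 = q.1) := by
  simp only [graphL, fromRel_adj]
  constructor
  · rintro ⟨h, h2 | h2⟩ <;> exact ⟨h, by tauto⟩
  · rintro ⟨h, h2⟩
    refine ⟨h, ?_⟩
    rcases h2 with h2 | h2 | h2 <;> [left; right; left] <;> tauto

lemma cyc_sub_val {n : ℕ} (hn : 2 ≤ n) (u v : Fin n) :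
    (u - v).val = 1 ↔ ((v : ℕ) + 1 = u ∨ ((u : ℕ) = 0 ∧ (v : ℕ) = n - 1)) := by
  have hu := u.isLt; have hv := v.isLt
  rw [Fin.sub_def]
  simp only [Fin.val_mk]
  rcases le_or_gt (v : ℕ) (u : ℕ) with h | h
  · rw [show n - (v:ℕ) + u = ((u : ℕ) - v) + n by omega, Nat.add_mod_right,
      Nat.mod_eq_of_lt (by omega)]
    omega
  · rw [Nat.mod_eq_of_lt (by omega)]
    omega

lemma cyc_adj {n : ℕ} (hn : 2 ≤ n) {u v : Fin n} :
    (cycleGraph n).Adj u v ↔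
      ((u : ℕ) + 1 = v ∨ (v : ℕ) + 1 = u ∨ ((u : ℕ) = 0 ∧ (v : ℕ) = n - 1) ∨
        ((v : ℕ) = 0 ∧ (u : ℕ) = n - 1)) := by
  rw [cycleGraph_adj', cyc_sub_val hn, cyc_sub_val hn]
  tauto

theorem part1 (ℓ : ℕ) (hℓ : 3 ≤ ℓ) : IsEmpty (cycleGraph (2 * ℓ + 1) ↪g graphL) := by
  constructor
  intro e
  obtain ⟨m, rfl⟩ : ∃ m, ℓ = m + 3 := ⟨ℓ - 3, by omega⟩
  set n := 2 * (m + 3) + 1 with hn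
  have h7 : 7 ≤ n := by omega
  have h2 : 2 ≤ n := by omega
  have hinj : Function.Injective (fun x : Fin n => (e x).1) := by
    intro x y hxy
    by_contra hne
    simp only at hxy
    have hexy : e x ≠ e y := fun h => hne (e.injective h)
    have hadj : (cycleGraph n).Adj x y := by
      rw [← e.map_adj_iff, graphL_adj]
      exact ⟨hexy, Or.inr (Or.inr hxy)⟩
    have key : ∀ z : Fin n, z ≠ y → (cycleGraph n).Adj x z → (cycleGraph n).Adj y z := by
      intro z hzy hxz
      have h1 : graphL.Adj (e x) (e z) := e.map_adj_iff.mpr hxz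
      rw [← e.map_adj_iff, graphL_adj]
      rw [graphL_adj] at h1
      refine ⟨fun h => hzy ((e.injective h).symm), ?_⟩
      rw [← hxy]
      exact h1.2
    -- find z adjacent to x, not equal to y, not adjacent to y
    obtain ⟨z, hzy, hxz, hyz⟩ : ∃ z : Fin n, z ≠ y ∧ (cycleGraph n).Adj x z ∧
        ¬ (cycleGraph n).Adj y z := by
      rw [cyc_adj h2] at hadj
      have hx := x.isLt; have hy := y.isLt
      rcases hadj with h | h | h | h
      · -- y = x + 1
        rcases Nat.eq_zero_or_pos (x : ℕ) with h0 | h0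
        · refine ⟨⟨n - 1, by omega⟩, ?_, ?_, ?_⟩ <;>
            simp only [ne_eq, Fin.ext_iff, cyc_adj h2, Fin.val_mk, and_true, true_and, and_false, false_and, or_false, false_or, true_or, or_true] <;> first | trivial | omega
        · refine ⟨⟨(x : ℕ) - 1, by omega⟩, ?_, ?_, ?_⟩ <;>
            simp only [ne_eq, Fin.ext_iff, cyc_adj h2, Fin.val_mk, and_true, true_and, and_false, false_and, or_false, false_or, true_or, or_true] <;> first | trivial | omega
      · -- x = y + 1
        rcases Nat.lt_or_ge ((x : ℕ) + 1) n with h0 | h0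
        · refine ⟨⟨(x : ℕ) + 1, by omega⟩, ?_, ?_, ?_⟩ <;>
            simp only [ne_eq, Fin.ext_iff, cyc_adj h2, Fin.val_mk, and_true, true_and, and_false, false_and, or_false, false_or, true_or, or_true] <;> first | trivial | omega
        · refine ⟨⟨0, by omega⟩, ?_, ?_, ?_⟩ <;>
            simp only [ne_eq, Fin.ext_iff, cyc_adj h2, Fin.val_mk, and_true, true_and, and_false, false_and, or_false, false_or, true_or, or_true] <;> first | trivial | omega
      · -- x = 0, y = n - 1
        refine ⟨⟨1, by omega⟩, ?_, ?_, ?_⟩ <;>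
          simp only [ne_eq, Fin.ext_iff, cyc_adj h2, Fin.val_mk, and_true, true_and, and_false, false_and, or_false, false_or, true_or, or_true] <;> first | trivial | omega
      · -- y = 0, x = n - 1
        refine ⟨⟨n - 2, by omega⟩, ?_, ?_, ?_⟩ <;>
          simp only [ne_eq, Fin.ext_iff, cyc_adj h2, Fin.val_mk, and_true, true_and, and_false, false_and, or_false, false_or, true_or, or_true] <;> first | trivial | omega
    exact hyz (key z hzy hxz)
  have hcard := Fintype.card_le_of_injective _ hinj
  simp only [Fintype.card_fin] at hcard
  omega

theorem part2 (N : Set (Fin 5 × Fin 2))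
    (hind : ∀ u ∈ N, ∀ v ∈ N, ¬ graphL.Adj u v)
    (G' : SimpleGraph (Fin 5 × Fin 2)) (hle : graphL ≤ G')
    (hfill : ∀ u v, G'.Adj u v → ¬ graphL.Adj u v → u ∈ N ∧ v ∈ N) :
    Nonempty (pathGraph 5 ↪g G') := by
  classical
  set f : Fin 5 → Fin 5 × Fin 2 :=
    fun i => (i, if ((i, 0) : Fin 5 × Fin 2) ∈ N then 1 else 0) with hf
  have hfN : ∀ i, f i ∉ N := by
    intro i
    by_cases h : ((i, 0) : Fin 5 × Fin 2) ∈ N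
    · simp only [hf, h, if_pos]
      intro hmem
      exact hind _ h _ hmem (graphL_adj.mpr ⟨by simp, Or.inr (Or.inr rfl)⟩)
    · simp only [hf, h, if_neg, not_false_iff]
  have hfst : ∀ i, (f i).1 = i := fun i => rfl
  have hfinj : Function.Injective f := by
    intro i j hij
    have := congrArg Prod.fst hij
    simpa using this
  refine ⟨⟨⟨f, hfinj⟩, ?_⟩⟩
  intro i j
  simp only [Function.Embedding.coeFn_mk]
  constructor
  · intro hadj
    by_cases hL : graphL.Adj (f i) (f j)
    · rw [graphL_adj] at hL
      obtain ⟨hne, hc⟩ := hL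
      have hij : i ≠ j := fun h => hne (by rw [h])
      rw [pathGraph_adj]
      simp only [hfst] at hc
      have : (i : ℕ) ≠ (j : ℕ) := fun h => hij (Fin.ext h)
      omega
    · exact absurd (hfill _ _ hadj hL).1 (hfN i)
  · intro hadj
    rw [pathGraph_adj] at hadj
    apply hle
    rw [graphL_adj]
    refine ⟨?_, ?_⟩
    · intro h
      have := congrArg Prod.fst h
      simp only [hfst] at this
      omega
    · simp only [hfst]
      tauto

theorem stmt_10 :
    (∀ ℓ : ℕ, 3 ≤ ℓ → IndFree (cycleGraph (2 * ℓ + 1)) graphL) ∧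
    ¬ ProbeFree (pathGraph 5) graphL := by
  constructor
  · intro ℓ hℓ
    exact part1 ℓ hℓ
  · rintro ⟨N, hind, G', hle, hfill, hfree⟩
    exact hfree.false (part2 N hind G' hle hfill).some
end

section
/- Every probe P5-free graph is (C7,C9,C11,...)-free; that is, for every integer ℓ ≥ 3, no probe P5-free graph contains an induced cycle of length 2ℓ+1. -/
open SimpleGraph

lemma modSmall (n x : ℕ) (h : x < 2 * n) : x % n = if x < n then x else x - n := by
  split
  · exact Nat.mod_eq_of_lt ‹_›
  · rw [Nat.mod_eq_sub_mod (Nat.le_of_not_lt ‹_›), Nat.mod_eq_of_lt (by omega)]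

lemma cycAdj {n : ℕ} (hn : 2 ≤ n) (u v : Fin n) :
    (cycleGraph n).Adj u v ↔ ((u.val + 1) % n = v.val ∨ (v.val + 1) % n = u.val) := by
  have hu := u.isLt; have hv := v.isLt
  rw [cycleGraph_adj']
  simp only [Fin.sub_def]
  rw [modSmall n ((n - v.val) + u.val) (by omega), modSmall n ((n - u.val) + v.val) (by omega),
      modSmall n (u.val + 1) (by omega), modSmall n (v.val + 1) (by omega)]
  split_ifs <;> omega

lemma mk5 {V : Type*} (G' : SimpleGraph V) (v0 v1 v2 v3 v4 : V)
    (e01 : G'.Adj v0 v1) (e12 : G'.Adj v1 v2) (e23 : G'.Adj v2 v3) (e34 : G'.Adj v3 v4)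
    (n02 : ¬G'.Adj v0 v2) (n03 : ¬G'.Adj v0 v3) (n04 : ¬G'.Adj v0 v4)
    (n13 : ¬G'.Adj v1 v3) (n14 : ¬G'.Adj v1 v4) (n24 : ¬G'.Adj v2 v4)
    (d02 : v0 ≠ v2) (d03 : v0 ≠ v3) (d04 : v0 ≠ v4)
    (d13 : v1 ≠ v3) (d14 : v1 ≠ v4) (d24 : v2 ≠ v4) :
    Nonempty (pathGraph 5 ↪g G') := by
  have d01 := e01.ne; have d12 := e12.ne; have d23 := e23.ne; have d34 := e34.ne
  refine ⟨⟨⟨![v0,v1,v2,v3,v4], ?_⟩, ?_⟩⟩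
  · intro a b h
    fin_cases a <;> fin_cases b <;> simp_all
  · intro a b
    show G'.Adj (![v0,v1,v2,v3,v4] a) (![v0,v1,v2,v3,v4] b) ↔ (pathGraph 5).Adj a b
    have s01 := e01.symm; have s12 := e12.symm; have s23 := e23.symm; have s34 := e34.symm
    have m02 : ¬G'.Adj v2 v0 := fun h => n02 h.symm
    have m03 : ¬G'.Adj v3 v0 := fun h => n03 h.symm
    have m04 : ¬G'.Adj v4 v0 := fun h => n04 h.symm
    have m13 : ¬G'.Adj v3 v1 := fun h => n13 h.symm
    have m14 : ¬G'.Adj v4 v1 := fun h => n14 h.symm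
    have m24 : ¬G'.Adj v4 v2 := fun h => n24 h.symm
    fin_cases a <;> fin_cases b <;>
      simp [pathGraph_adj, e01, e12, e23, e34, s01, s12, s23, s34,
            n02, n03, n04, n13, n14, n24, m02, m03, m04, m13, m14, m24] <;> decide

lemma core_s11 {V : Type*} (G G' : SimpleGraph V) (N : Set V) (n : ℕ) (hn : 7 ≤ n)
    (d : ℕ → V)
    (hinj : ∀ x y : ℕ, d x = d y ↔ x % n = y % n)
    (hGadj : ∀ x y : ℕ, G.Adj (d x) (d y) ↔ ((x + 1) % n = y % n ∨ (y + 1) % n = x % n))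
    (hle : G ≤ G')
    (hchord : ∀ x y : ℕ, G'.Adj (d x) (d y) → G.Adj (d x) (d y) ∨ (d x ∈ N ∧ d y ∈ N))
    (hind : ∀ u ∈ N, ∀ v ∈ N, ¬ G.Adj u v)
    (hp0 : d 0 ∉ N) (hp1 : d 1 ∉ N) :
    Nonempty (pathGraph 5 ↪g G') := by
  classical
  have amod : ∀ x y : ℕ, x ≤ n + 2 → y ≤ n + 2 →
      (x % n = y % n ↔ (x = y ∨ x + n = y ∨ y + n = x)) := by
    intro x y hx hy
    rw [modSmall n x (by omega), modSmall n y (by omega)]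
    split_ifs <;> omega
  have hne : ∀ x y : ℕ, x ≤ n+1 → y ≤ n+1 → ¬(x = y ∨ x + n = y ∨ y + n = x) → d x ≠ d y := by
    intro x y hx hy h he
    exact h ((amod x y (by omega) (by omega)).mp ((hinj x y).mp he))
  have hGadj2 : ∀ x y : ℕ, x ≤ n+1 → y ≤ n+1 →
      (G.Adj (d x) (d y) ↔
        (x+1 = y ∨ y+1 = x ∨ x+1 = y+n ∨ y+1 = x+n ∨ x+n+1 = y ∨ y+n+1 = x)) := by
    intro x y hx hy
    rw [hGadj, amod (x+1) y (by omega) (by omega), amod (y+1) x (by omega) (by omega)]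
    omega
  have hadjE : ∀ x y : ℕ, x ≤ n+1 → y ≤ n+1 →
      (x+1 = y ∨ y+1 = x ∨ x+1 = y+n ∨ y+1 = x+n ∨ x+n+1 = y ∨ y+n+1 = x) →
      G'.Adj (d x) (d y) := fun x y hx hy h => hle ((hGadj2 x y hx hy).mpr h)
  have hGnot : ∀ x y : ℕ, x ≤ n+1 → y ≤ n+1 →
      ¬(x+1 = y ∨ y+1 = x ∨ x+1 = y+n ∨ y+1 = x+n ∨ x+n+1 = y ∨ y+n+1 = x) →
      ¬ G.Adj (d x) (d y) := fun x y hx hy h hadj => h ((hGadj2 x y hx hy).mp hadj)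
  have hNp : ∀ x : ℕ, d x ∈ N → d (x+1) ∉ N := by
    intro x hx h1
    exact hind _ hx _ h1 ((hGadj x (x+1)).mpr (Or.inl rfl))
  have hnonadj : ∀ x y : ℕ, x ≤ n+1 → y ≤ n+1 → (d x ∉ N ∨ d y ∉ N) →
      ¬(x+1 = y ∨ y+1 = x ∨ x+1 = y+n ∨ y+1 = x+n ∨ x+n+1 = y ∨ y+n+1 = x) →
      ¬ G'.Adj (d x) (d y) := by
    intro x y hx hy hN harith hadj
    rcases hchord x y hadj with hG | ⟨h1, h2⟩
    · exact harith ((hGadj2 x y hx hy).mp hG)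
    · rcases hN with h | h
      · exact h h1
      · exact h h2
  by_cases hch : ∃ j, j ≤ n - 1 ∧ ∃ i, 2 ≤ i ∧ i + 2 ≤ j ∧ G'.Adj (d i) (d j) ∧ ¬ G.Adj (d i) (d j)
  case neg =>
    have nadj : ∀ x y, 2 ≤ x → x + 2 ≤ y → y ≤ n-1 → ¬ G.Adj (d x) (d y) → ¬G'.Adj (d x) (d y) :=
      fun x y h2 hxy hyb hG hadj => hch ⟨y, hyb, x, h2, hxy, hadj, hG⟩
    exact mk5 G' (d 0) (d 1) (d 2) (d 3) (d 4)
      (hadjE 0 1 (by omega) (by omega) (by omega))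
      (hadjE 1 2 (by omega) (by omega) (by omega))
      (hadjE 2 3 (by omega) (by omega) (by omega))
      (hadjE 3 4 (by omega) (by omega) (by omega))
      (hnonadj 0 2 (by omega) (by omega) (Or.inl hp0) (by omega))
      (hnonadj 0 3 (by omega) (by omega) (Or.inl hp0) (by omega))
      (hnonadj 0 4 (by omega) (by omega) (Or.inl hp0) (by omega))
      (hnonadj 1 3 (by omega) (by omega) (Or.inl hp1) (by omega))
      (hnonadj 1 4 (by omega) (by omega) (Or.inl hp1) (by omega))
      (nadj 2 4 (by omega) (by omega) (by omega) (hGnot 2 4 (by omega) (by omega) (by omega)))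
      (hne 0 2 (by omega) (by omega) (by omega)) (hne 0 3 (by omega) (by omega) (by omega))
      (hne 0 4 (by omega) (by omega) (by omega)) (hne 1 3 (by omega) (by omega) (by omega))
      (hne 1 4 (by omega) (by omega) (by omega)) (hne 2 4 (by omega) (by omega) (by omega))
  case pos =>
    obtain ⟨j0, hj0, hPj0⟩ := hch
    obtain ⟨j, hjle, hPj, hjmax⟩ :
        ∃ j, j ≤ n - 1 ∧
          (∃ i, 2 ≤ i ∧ i + 2 ≤ j ∧ G'.Adj (d i) (d j) ∧ ¬ G.Adj (d i) (d j)) ∧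
          (∀ y, j < y → y ≤ n-1 →
            ¬ ∃ i, 2 ≤ i ∧ i + 2 ≤ y ∧ G'.Adj (d i) (d y) ∧ ¬ G.Adj (d i) (d y)) :=
      ⟨_, Nat.findGreatest_le _,
        Nat.findGreatest_spec
          (P := fun y => ∃ i, 2 ≤ i ∧ i + 2 ≤ y ∧ G'.Adj (d i) (d y) ∧ ¬ G.Adj (d i) (d y))
          hj0 hPj0,
        fun y h1 h2 => Nat.findGreatest_is_greatest h1 h2⟩
    obtain ⟨i0, hi00, hi01, hi02, hi03⟩ := hPj
    obtain ⟨i, hQi, himax⟩ :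
        ∃ i, (2 ≤ i ∧ i + 2 ≤ j ∧ G'.Adj (d i) (d j) ∧ ¬ G.Adj (d i) (d j)) ∧
          (∀ y, i < y → y ≤ n-1 →
            ¬(2 ≤ y ∧ y + 2 ≤ j ∧ G'.Adj (d y) (d j) ∧ ¬ G.Adj (d y) (d j))) :=
      ⟨_, Nat.findGreatest_spec
          (P := fun y => 2 ≤ y ∧ y + 2 ≤ j ∧ G'.Adj (d y) (d j) ∧ ¬ G.Adj (d y) (d j))
          (show i0 ≤ n-1 by omega) ⟨hi00, hi01, hi02, hi03⟩,
        fun y h1 h2 => Nat.findGreatest_is_greatest h1 h2⟩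
    obtain ⟨hi2, hij, hadjij, hnadjij⟩ := hQi
    have hNij : d i ∈ N ∧ d j ∈ N := by
      rcases hchord i j hadjij with h | h
      · exact absurd h hnadjij
      · exact h
    have hnomax : ∀ x y, 2 ≤ x → x + 2 ≤ y → y ≤ n-1 → j < y → ¬ G.Adj (d x) (d y) →
        ¬ G'.Adj (d x) (d y) :=
      fun x y h1 h2 h3 h4 hG hadj => hjmax y h4 h3 ⟨x, h1, h2, hadj, hG⟩
    by_cases hbad : i + n ≤ j + 4
    · have hcases : (i = 2 ∧ j = n-2) ∨ (i = 2 ∧ j = n-1) ∨ (i = 3 ∧ j = n-1) := by omega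
      rcases hcases with ⟨rfl, rfl⟩ | ⟨rfl, rfl⟩ | ⟨rfl, rfl⟩
      · -- chord (2, n-2): path (3, 2, n-2, n-1, 0)
        have h3 : d 3 ∉ N := by simpa using hNp 2 hNij.1
        have hm1 : d (n-1) ∉ N := by
          have := hNp (n-2) hNij.2
          rwa [show n-2+1 = n-1 from by omega] at this
        exact mk5 G' (d 3) (d 2) (d (n-2)) (d (n-1)) (d 0)
          (hadjE 3 2 (by omega) (by omega) (by omega))
          hadjij
          (hadjE (n-2) (n-1) (by omega) (by omega) (by omega))
          (hadjE (n-1) 0 (by omega) (by omega) (by omega))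
          (hnonadj 3 (n-2) (by omega) (by omega) (Or.inl h3) (by omega))
          (hnonadj 3 (n-1) (by omega) (by omega) (Or.inl h3) (by omega))
          (hnonadj 3 0 (by omega) (by omega) (Or.inl h3) (by omega))
          (hnonadj 2 (n-1) (by omega) (by omega) (Or.inr hm1) (by omega))
          (hnonadj 2 0 (by omega) (by omega) (Or.inr hp0) (by omega))
          (hnonadj (n-2) 0 (by omega) (by omega) (Or.inr hp0) (by omega))
          (hne 3 (n-2) (by omega) (by omega) (by omega))
          (hne 3 (n-1) (by omega) (by omega) (by omega))
          (hne 3 0 (by omega) (by omega) (by omega))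
          (hne 2 (n-1) (by omega) (by omega) (by omega))
          (hne 2 0 (by omega) (by omega) (by omega))
          (hne (n-2) 0 (by omega) (by omega) (by omega))
      · -- chord (2, n-1)
        have h3 : d 3 ∉ N := by simpa using hNp 2 hNij.1
        have hm2 : d (n-2) ∉ N := by
          intro h
          have := hNp (n-2) h
          rw [show n-2+1 = n-1 from by omega] at this
          exact this hNij.2
        by_cases h24 : G'.Adj (d 2) (d 4)
        · -- chord (2,4): path (5,4,2,1,0)
          have hN4 : d 4 ∈ N := by
            rcases hchord 2 4 h24 with h | h
            · exact absurd h (hGnot 2 4 (by omega) (by omega) (by omega))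
            · exact h.2
          have h5 : d 5 ∉ N := by simpa using hNp 4 hN4
          exact mk5 G' (d 5) (d 4) (d 2) (d 1) (d 0)
            (hadjE 5 4 (by omega) (by omega) (by omega))
            h24.symm
            (hadjE 2 1 (by omega) (by omega) (by omega))
            (hadjE 1 0 (by omega) (by omega) (by omega))
            (hnonadj 5 2 (by omega) (by omega) (Or.inl h5) (by omega))
            (hnonadj 5 1 (by omega) (by omega) (Or.inl h5) (by omega))
            (hnonadj 5 0 (by omega) (by omega) (Or.inl h5) (by omega))
            (hnonadj 4 1 (by omega) (by omega) (Or.inr hp1) (by omega))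
            (hnonadj 4 0 (by omega) (by omega) (Or.inr hp0) (by omega))
            (hnonadj 2 0 (by omega) (by omega) (Or.inr hp0) (by omega))
            (hne 5 2 (by omega) (by omega) (by omega))
            (hne 5 1 (by omega) (by omega) (by omega))
            (hne 5 0 (by omega) (by omega) (by omega))
            (hne 4 1 (by omega) (by omega) (by omega))
            (hne 4 0 (by omega) (by omega) (by omega))
            (hne 2 0 (by omega) (by omega) (by omega))
        · -- no chord (2,4): path (0, n-1, 2, 3, 4)
          have hn14 : ¬ G'.Adj (d (n-1)) (d 4) := by
            intro hadj
            exact himax 4 (by omega) (by omega)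
              ⟨by omega, by omega, hadj.symm, hGnot 4 (n-1) (by omega) (by omega) (by omega)⟩
          exact mk5 G' (d 0) (d (n-1)) (d 2) (d 3) (d 4)
            (hadjE 0 (n-1) (by omega) (by omega) (by omega))
            hadjij.symm
            (hadjE 2 3 (by omega) (by omega) (by omega))
            (hadjE 3 4 (by omega) (by omega) (by omega))
            (hnonadj 0 2 (by omega) (by omega) (Or.inl hp0) (by omega))
            (hnonadj 0 3 (by omega) (by omega) (Or.inl hp0) (by omega))
            (hnonadj 0 4 (by omega) (by omega) (Or.inl hp0) (by omega))
            (hnonadj (n-1) 3 (by omega) (by omega) (Or.inr h3) (by omega))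
            hn14
            h24
            (hne 0 2 (by omega) (by omega) (by omega))
            (hne 0 3 (by omega) (by omega) (by omega))
            (hne 0 4 (by omega) (by omega) (by omega))
            (hne (n-1) 3 (by omega) (by omega) (by omega))
            (hne (n-1) 4 (by omega) (by omega) (by omega))
            (hne 2 4 (by omega) (by omega) (by omega))
      · -- chord (3, n-1): path (n-2, n-1, 3, 2, 1)
        have h2 : d 2 ∉ N := by
          intro h
          exact (by simpa using hNp 2 h : d 3 ∉ N) hNij.1
        have hm2 : d (n-2) ∉ N := by
          intro h
          have := hNp (n-2) h
          rw [show n-2+1 = n-1 from by omega] at this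
          exact this hNij.2
        exact mk5 G' (d (n-2)) (d (n-1)) (d 3) (d 2) (d 1)
          (hadjE (n-2) (n-1) (by omega) (by omega) (by omega))
          hadjij.symm
          (hadjE 3 2 (by omega) (by omega) (by omega))
          (hadjE 2 1 (by omega) (by omega) (by omega))
          (hnonadj (n-2) 3 (by omega) (by omega) (Or.inl hm2) (by omega))
          (hnonadj (n-2) 2 (by omega) (by omega) (Or.inl hm2) (by omega))
          (hnonadj (n-2) 1 (by omega) (by omega) (Or.inl hm2) (by omega))
          (hnonadj (n-1) 2 (by omega) (by omega) (Or.inr h2) (by omega))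
          (hnonadj (n-1) 1 (by omega) (by omega) (Or.inr hp1) (by omega))
          (hnonadj 3 1 (by omega) (by omega) (Or.inr hp1) (by omega))
          (hne (n-2) 3 (by omega) (by omega) (by omega))
          (hne (n-2) 2 (by omega) (by omega) (by omega))
          (hne (n-2) 1 (by omega) (by omega) (by omega))
          (hne (n-1) 2 (by omega) (by omega) (by omega))
          (hne (n-1) 1 (by omega) (by omega) (by omega))
          (hne 3 1 (by omega) (by omega) (by omega))
    · -- good case: path (i-1, i, j, j+1, j+2)
      have hPi1 : d (i-1) ∉ N := by
        intro h
        have := hNp (i-1) h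
        rw [show i-1+1 = i from by omega] at this
        exact this hNij.1
      have hPj1 : d (j+1) ∉ N := hNp j hNij.2
      have hIJ2 : ¬ G'.Adj (d i) (d (j+2)) := by
        rcases lt_or_ge (j+2) n with hw | hw
        · exact hnomax i (j+2) (by omega) (by omega) (by omega) (by omega)
            (hGnot i (j+2) (by omega) (by omega) (by omega))
        · have e2 : d (j+2) = d (j+2-n) := by
            rw [hinj, show j+2 = (j+2-n)+n from by omega, Nat.add_mod_right, Nat.add_sub_cancel]
          rw [e2]
          have hout : d (j+2-n) ∉ N := by
            have : j + 2 - n = 0 ∨ j + 2 - n = 1 := by omega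
            rcases this with h | h <;> rw [h]
            · exact hp0
            · exact hp1
          exact hnonadj i (j+2-n) (by omega) (by omega) (Or.inr hout) (by omega)
      have hJJ2 : ¬ G'.Adj (d j) (d (j+2)) := by
        rcases lt_or_ge (j+2) n with hw | hw
        · exact hnomax j (j+2) (by omega) (by omega) (by omega) (by omega)
            (hGnot j (j+2) (by omega) (by omega) (by omega))
        · have e2 : d (j+2) = d (j+2-n) := by
            rw [hinj, show j+2 = (j+2-n)+n from by omega, Nat.add_mod_right, Nat.add_sub_cancel]
          rw [e2]
          have hout : d (j+2-n) ∉ N := by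
            have : j + 2 - n = 0 ∨ j + 2 - n = 1 := by omega
            rcases this with h | h <;> rw [h]
            · exact hp0
            · exact hp1
          exact hnonadj j (j+2-n) (by omega) (by omega) (Or.inr hout) (by omega)
      exact mk5 G' (d (i-1)) (d i) (d j) (d (j+1)) (d (j+2))
        (hadjE (i-1) i (by omega) (by omega) (by omega))
        hadjij
        (hadjE j (j+1) (by omega) (by omega) (by omega))
        (hadjE (j+1) (j+2) (by omega) (by omega) (by omega))
        (hnonadj (i-1) j (by omega) (by omega) (Or.inl hPi1) (by omega))
        (hnonadj (i-1) (j+1) (by omega) (by omega) (Or.inl hPi1) (by omega))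
        (hnonadj (i-1) (j+2) (by omega) (by omega) (Or.inl hPi1) (by omega))
        (hnonadj i (j+1) (by omega) (by omega) (Or.inr hPj1) (by omega))
        hIJ2
        hJJ2
        (hne (i-1) j (by omega) (by omega) (by omega))
        (hne (i-1) (j+1) (by omega) (by omega) (by omega))
        (hne (i-1) (j+2) (by omega) (by omega) (by omega))
        (hne i (j+1) (by omega) (by omega) (by omega))
        (hne i (j+2) (by omega) (by omega) (by omega))
        (hne j (j+2) (by omega) (by omega) (by omega))

theorem stmt_11 {V : Type*} [Fintype V] (G : SimpleGraph V)
    (hprobe : ProbeFree (pathGraph 5) G) :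
    ∀ ℓ : ℕ, 3 ≤ ℓ → IndFree (cycleGraph (2 * ℓ + 1)) G := by
  classical
  obtain ⟨N, hNind, G', hle, hmix, hfree⟩ := hprobe
  intro ℓ hl
  constructor
  intro e
  set n := 2 * ℓ + 1 with hndef
  have hn : 7 ≤ n := by omega
  have hn0 : 0 < n := by omega
  set c : ℕ → V := fun k => e ⟨k % n, Nat.mod_lt _ hn0⟩ with hcdef
  have hcinj : ∀ x y, c x = c y ↔ x % n = y % n := by
    intro x y
    constructor
    · intro h
      have := e.injective h
      simpa [Fin.ext_iff] using this
    · intro h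
      simp only [hcdef]
      congr 1
      exact Fin.ext h
  have hcadj : ∀ x y, G.Adj (c x) (c y) ↔ ((x+1) % n = y % n ∨ (y+1) % n = x % n) := by
    intro x y
    have h1 : G.Adj (c x) (c y) ↔
        (cycleGraph n).Adj ⟨x % n, Nat.mod_lt _ hn0⟩ ⟨y % n, Nat.mod_lt _ hn0⟩ :=
      e.map_rel_iff
    rw [h1, cycAdj (by omega)]
    simp only [Nat.mod_add_mod]
  -- step
  have hstep : ∀ x, c x ∈ N → c (x+1) ∉ N := fun x hx h1 =>
    hNind _ hx _ h1 ((hcadj x (x+1)).mpr (Or.inl rfl))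
  have hcons : ∃ a, c a ∉ N ∧ c (a+1) ∉ N := by
    by_contra hall
    push_neg at hall
    have flip : ∀ k, (c (k+1) ∈ N ↔ c k ∉ N) := by
      intro k
      constructor
      · intro h1 hk
        exact hstep k hk h1
      · intro h
        exact hall k h
    have key : ∀ k, (c (2*k) ∈ N ↔ c 0 ∈ N) := by
      intro k
      induction k with
      | zero => simp
      | succ k ih =>
        have h1 := flip (2*k)
        have h2 := flip (2*k+1)
        rw [show 2*(k+1) = 2*k+1+1 from by ring, h2, h1]
        tauto
    have hper : c (2*ℓ+1) = c 0 := (hcinj _ _).mpr (by simp [hndef, Nat.mod_self])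
    have h1 := flip (2*ℓ)
    rw [hper] at h1
    have h2 := key ℓ
    tauto
  obtain ⟨a, ha0, ha1⟩ := hcons
  have cancel : ∀ u v : ℕ, ((a+u) % n = (a+v) % n) ↔ u % n = v % n :=
    fun u v => ⟨fun h => Nat.ModEq.add_left_cancel' a h, fun h => Nat.ModEq.add_left a h⟩
  have hcore := core_s11 G G' N n hn (fun k => c (a + k))
    (fun x y => by rw [hcinj]; exact cancel x y)
    (fun x y => by
      rw [hcadj, show a+x+1 = a+(x+1) from by ring, show a+y+1 = a+(y+1) from by ring,
        cancel, cancel])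
    hle
    (fun x y h => by
      by_cases hG : G.Adj (c (a+x)) (c (a+y))
      · exact Or.inl hG
      · exact Or.inr (hmix _ _ h hG))
    hNind ha0 ha1
  obtain ⟨f⟩ := hcore
  exact hfree.false f
end

section
/- For every integer ℓ ≥ 3, the cycle C_{2ℓ+1} is not probe P5-free, but every proper induced subgraph of C_{2ℓ+1} is probe P5-free. (In other words, C_{2ℓ+1} belongs to the minimal set F_{P5} of forbidden induced subgraphs characterising probe P5-free graphs.) -/
open SimpleGraph
open scoped Fin.NatCast Fin.IntCast Fin.CommRing

/- ### Auxiliary lemmas -/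

lemma myVal1 {n : ℕ} [NeZero n] (hn : 7 ≤ n) : (1 : Fin n).val = 1 := by
  rw [← Nat.cast_one, Fin.val_cast_of_lt (by omega)]

lemma cycAdjIff {n : ℕ} [NeZero n] (hn : 7 ≤ n) (k : Fin n) (a b : ℕ) (ha : a ≤ 5) (hb : b ≤ 5) :
    (cycleGraph n).Adj (k + (a : Fin n)) (k + (b : Fin n)) ↔ (a = b + 1 ∨ b = a + 1) := by
  rw [cycleGraph_adj']
  have key : ∀ x y : ℕ, x ≤ 5 → y ≤ 5 →
      (((k + (x : Fin n)) - (k + (y : Fin n))).val = 1 ↔ x = y + 1) := by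
    intro x y hx hy
    constructor
    · intro h
      have h1 : (k + (x : Fin n)) - (k + (y : Fin n)) = 1 := Fin.ext (by rw [h, myVal1 hn])
      have h2 : ((x : ℕ) : Fin n) = ((y + 1 : ℕ) : Fin n) := by
        push_cast
        linear_combination h1
      have h3 := congrArg Fin.val h2
      rwa [Fin.val_cast_of_lt (by omega), Fin.val_cast_of_lt (by omega)] at h3
    · intro h
      subst h
      have h1 : (k + ((y + 1 : ℕ) : Fin n)) - (k + (y : Fin n)) = 1 := by
        push_cast
        ring
      rw [h1, myVal1 hn]
  rw [key a b ha hb, key b a hb ha]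

lemma P5false {V : Type*} {G' : SimpleGraph V} (hfree : IndFree (pathGraph 5) G')
    (f : Fin 5 → V) (hinj : Function.Injective f)
    (hiff : ∀ i j : Fin 5, G'.Adj (f i) (f j) ↔ (pathGraph 5).Adj i j) : False :=
  hfree.false ⟨⟨f, hinj⟩, hiff _ _⟩

/- ### Part 1 : the odd cycle is not probe `P5`-free -/

lemma part1_s12 {n : ℕ} [NeZero n] (hn : 7 ≤ n) (hodd : n % 2 = 1) :
    ¬ ProbeFree (pathGraph 5) (cycleGraph n) := by
  rintro ⟨N, hind, G', hle, hfill, hfree⟩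
  have adjS : ∀ j : Fin n, (cycleGraph n).Adj j (j + 1) := by
    intro j
    rw [cycleGraph_adj']
    right
    rw [show j + 1 - j = 1 from by ring, myVal1 hn]
  -- Step A: two consecutive probes exist
  have hcons : ∃ k : Fin n, k ∉ N ∧ k + 1 ∉ N := by
    by_contra hc
    push_neg at hc
    have step : ∀ k : Fin n, k ∈ N ↔ k + 2 ∈ N := by
      intro k
      by_cases hk : k ∈ N
      · have h1 : k + 1 ∉ N := fun h => hind _ hk _ h (adjS k)
        have h2 : k + 2 ∈ N := by
          have := hc _ h1
          rwa [show k + 1 + 1 = k + 2 from by ring] at this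
        exact iff_of_true hk h2
      · have h1 := hc _ hk
        have h2 : k + 2 ∉ N := by
          intro h
          have := adjS (k + 1)
          rw [show k + 1 + 1 = k + 2 from by ring] at this
          exact hind _ h1 _ h this
        exact iff_of_false hk h2
    have iter : ∀ t : ℕ, ∀ k : Fin n, k ∈ N ↔ k + ((2 * t : ℕ) : Fin n) ∈ N := by
      intro t
      induction t with
      | zero => intro k; simp
      | succ t ih =>
        intro k
        have e1 : k + ((2 * (t + 1) : ℕ) : Fin n) = (k + 2) + ((2 * t : ℕ) : Fin n) := by
          push_cast
          ring
        rw [e1, ← ih (k + 2)]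
        exact step k
    have h0 : (0 : Fin n) ∈ N ↔ (1 : Fin n) ∈ N := by
      have h := iter (n / 2) 1
      rw [show (2 * (n / 2) : ℕ) = n - 1 from by omega] at h
      have e2 : (1 : Fin n) + ((n - 1 : ℕ) : Fin n) = 0 := by
        rw [show (1 : Fin n) = ((1 : ℕ) : Fin n) from by norm_num, ← Nat.cast_add,
          show 1 + (n - 1) = n from by omega, Fin.natCast_self]
      rw [e2] at h
      exact h.symm
    by_cases h0m : (0 : Fin n) ∈ N
    · exact hind _ h0m _ (h0.mp h0m) (by simpa using adjS 0)
    · have h1 := hc _ h0m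
      rw [zero_add] at h1
      exact h0m (h0.mpr h1)
  obtain ⟨k, hk0, hk1⟩ := hcons
  have hk0' : k + ((0 : ℕ) : Fin n) ∉ N := by simpa using hk0
  have hk1' : k + ((1 : ℕ) : Fin n) ∉ N := by simpa using hk1
  have hyes : ∀ a b : ℕ, a ≤ 5 → b ≤ 5 → (a = b + 1 ∨ b = a + 1) →
      G'.Adj (k + (a : Fin n)) (k + (b : Fin n)) :=
    fun a b ha hb h => hle ((cycAdjIff hn k a b ha hb).mpr h)
  have hno : ∀ a b : ℕ, a ≤ 5 → b ≤ 5 → ¬(a = b + 1 ∨ b = a + 1) →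
      (k + (a : Fin n) ∉ N ∨ k + (b : Fin n) ∉ N) →
      ¬ G'.Adj (k + (a : Fin n)) (k + (b : Fin n)) := by
    intro a b ha hb hne hmem hadj
    have h2 := hfill _ _ hadj (by rw [cycAdjIff hn k a b ha hb]; exact hne)
    rcases hmem with h | h
    · exact h h2.1
    · exact h h2.2
  have hinj2 : ∀ a b : ℕ, a ≤ 5 → b ≤ 5 → k + (a : Fin n) = k + (b : Fin n) → a = b := by
    intro a b ha hb h
    have h2 : (a : Fin n) = (b : Fin n) := add_left_cancel h
    have h3 := congrArg Fin.val h2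
    rwa [Fin.val_cast_of_lt (by omega), Fin.val_cast_of_lt (by omega)] at h3
  -- Step B : a fill edge between k+2 and k+4
  have h24 : G'.Adj (k + ((2 : ℕ) : Fin n)) (k + ((4 : ℕ) : Fin n)) := by
    by_contra h24
    refine P5false hfree (fun j : Fin 5 => k + ((j.val : ℕ) : Fin n)) ?_ ?_
    · intro a b h
      exact Fin.val_injective (hinj2 a.val b.val (le_of_lt a.isLt) (le_of_lt b.isLt) h)
    · intro i j
      rw [pathGraph_adj]
      fin_cases i <;> fin_cases j
      · exact iff_of_false (G'.irrefl) (by decide)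
      · exact iff_of_true (hyes 0 1 (by omega) (by omega) (by omega)) (by decide)
      · exact iff_of_false (hno 0 2 (by omega) (by omega) (by omega) (Or.inl hk0')) (by decide)
      · exact iff_of_false (hno 0 3 (by omega) (by omega) (by omega) (Or.inl hk0')) (by decide)
      · exact iff_of_false (hno 0 4 (by omega) (by omega) (by omega) (Or.inl hk0')) (by decide)
      · exact iff_of_true (hyes 1 0 (by omega) (by omega) (by omega)) (by decide)
      · exact iff_of_false (G'.irrefl) (by decide)
      · exact iff_of_true (hyes 1 2 (by omega) (by omega) (by omega)) (by decide)
      · exact iff_of_false (hno 1 3 (by omega) (by omega) (by omega) (Or.inl hk1')) (by decide)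
      · exact iff_of_false (hno 1 4 (by omega) (by omega) (by omega) (Or.inl hk1')) (by decide)
      · exact iff_of_false (hno 2 0 (by omega) (by omega) (by omega) (Or.inr hk0')) (by decide)
      · exact iff_of_true (hyes 2 1 (by omega) (by omega) (by omega)) (by decide)
      · exact iff_of_false (G'.irrefl) (by decide)
      · exact iff_of_true (hyes 2 3 (by omega) (by omega) (by omega)) (by decide)
      · exact iff_of_false h24 (by decide)
      · exact iff_of_false (hno 3 0 (by omega) (by omega) (by omega) (Or.inr hk0')) (by decide)
      · exact iff_of_false (hno 3 1 (by omega) (by omega) (by omega) (Or.inr hk1')) (by decide)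
      · exact iff_of_true (hyes 3 2 (by omega) (by omega) (by omega)) (by decide)
      · exact iff_of_false (G'.irrefl) (by decide)
      · exact iff_of_true (hyes 3 4 (by omega) (by omega) (by omega)) (by decide)
      · exact iff_of_false (hno 4 0 (by omega) (by omega) (by omega) (Or.inr hk0')) (by decide)
      · exact iff_of_false (hno 4 1 (by omega) (by omega) (by omega) (Or.inr hk1')) (by decide)
      · exact iff_of_false (fun h => h24 h.symm) (by decide)
      · exact iff_of_true (hyes 4 3 (by omega) (by omega) (by omega)) (by decide)
      · exact iff_of_false (G'.irrefl) (by decide)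
  have hmem24 := hfill _ _ h24 (by rw [cycAdjIff hn k 2 4 (by omega) (by omega)]; omega)
  have hk5' : k + ((5 : ℕ) : Fin n) ∉ N := by
    intro h5
    exact hind _ hmem24.2 _ h5 ((cycAdjIff hn k 4 5 (by omega) (by omega)).mpr (by omega))
  -- final induced P5 : k, k+1, k+2, k+4, k+5
  have off : Fin 5 → ℕ := fun j => 0
  refine P5false hfree
    (fun j : Fin 5 => k + (((match j.val with | 0 => 0 | 1 => 1 | 2 => 2 | 3 => 4 | _ => 5) : ℕ) : Fin n))
    ?_ ?_
  · intro a b h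
    fin_cases a <;> fin_cases b <;>
      first
        | rfl
        | exact absurd (hinj2 _ _ (by decide) (by decide) h) (by decide)
  · intro i j
    rw [pathGraph_adj]
    fin_cases i <;> fin_cases j
    · exact iff_of_false (G'.irrefl) (by decide)
    · exact iff_of_true (hyes 0 1 (by omega) (by omega) (by omega)) (by decide)
    · exact iff_of_false (hno 0 2 (by omega) (by omega) (by omega) (Or.inl hk0')) (by decide)
    · exact iff_of_false (hno 0 4 (by omega) (by omega) (by omega) (Or.inl hk0')) (by decide)
    · exact iff_of_false (hno 0 5 (by omega) (by omega) (by omega) (Or.inl hk0')) (by decide)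
    · exact iff_of_true (hyes 1 0 (by omega) (by omega) (by omega)) (by decide)
    · exact iff_of_false (G'.irrefl) (by decide)
    · exact iff_of_true (hyes 1 2 (by omega) (by omega) (by omega)) (by decide)
    · exact iff_of_false (hno 1 4 (by omega) (by omega) (by omega) (Or.inl hk1')) (by decide)
    · exact iff_of_false (hno 1 5 (by omega) (by omega) (by omega) (Or.inl hk1')) (by decide)
    · exact iff_of_false (hno 2 0 (by omega) (by omega) (by omega) (Or.inr hk0')) (by decide)
    · exact iff_of_true (hyes 2 1 (by omega) (by omega) (by omega)) (by decide)
    · exact iff_of_false (G'.irrefl) (by decide)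
    · exact iff_of_true h24 (by decide)
    · exact iff_of_false (hno 2 5 (by omega) (by omega) (by omega) (Or.inr hk5')) (by decide)
    · exact iff_of_false (hno 4 0 (by omega) (by omega) (by omega) (Or.inr hk0')) (by decide)
    · exact iff_of_false (hno 4 1 (by omega) (by omega) (by omega) (Or.inr hk1')) (by decide)
    · exact iff_of_true h24.symm (by decide)
    · exact iff_of_false (G'.irrefl) (by decide)
    · exact iff_of_true (hyes 4 5 (by omega) (by omega) (by omega)) (by decide)
    · exact iff_of_false (hno 5 0 (by omega) (by omega) (by omega) (Or.inr hk0')) (by decide)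
    · exact iff_of_false (hno 5 1 (by omega) (by omega) (by omega) (Or.inr hk1')) (by decide)
    · exact iff_of_false (hno 5 2 (by omega) (by omega) (by omega) (Or.inl hk5')) (by decide)
    · exact iff_of_true (hyes 5 4 (by omega) (by omega) (by omega)) (by decide)
    · exact iff_of_false (G'.irrefl) (by decide)

/- ### Part 2 : proper induced subgraphs are probe `P5`-free -/

lemma parityFlip {n : ℕ} [NeZero n] (hn : 7 ≤ n) (m : Fin n) :
    ∀ u v : Fin n, u ≠ m → v ≠ m → (cycleGraph n).Adj u v →
      (u - m).val % 2 ≠ (v - m).val % 2 := by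
  have H : ∀ u v : Fin n, u ≠ m → (u - v).val = 1 →
      (u - m).val % 2 ≠ (v - m).val % 2 := by
    intro u v hu h1
    have hu1 : u - v = 1 := Fin.ext (by rw [h1, myVal1 hn])
    have key : u - m = (v - m) + 1 := by linear_combination hu1
    by_cases hc : (v - m).val = n - 1
    · exfalso
      apply hu
      have hl : ((n - 1 : ℕ) : Fin n) + 1 = 0 := by
        have e : ((n - 1 : ℕ) : Fin n) + ((1 : ℕ) : Fin n) = (((n - 1) + 1 : ℕ) : Fin n) :=
          (Nat.cast_add _ _).symm
        rw [Nat.cast_one] at e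
        rw [e, show (n - 1) + 1 = n from by omega, Fin.natCast_self]
      have h0 : u - m = 0 := by
        rw [key, show v - m = ((n - 1 : ℕ) : Fin n) from
          Fin.ext (by rw [hc, Fin.val_cast_of_lt (by omega)]), hl]
      exact sub_eq_zero.mp h0
    · have hvn : (v - m).val < n - 1 := by
        have := (v - m).isLt
        omega
      have h2 : (u - m).val = (v - m).val + 1 := by
        rw [key, Fin.val_add, myVal1 hn, Nat.mod_eq_of_lt (by omega)]
      omega
  intro u v hu hv h
  rw [cycleGraph_adj'] at h
  rcases h with h | h
  · exact H u v hu h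
  · exact (H v u hv h).symm

lemma part2_s12 {n : ℕ} (hn : 7 ≤ n) {S : Set (Fin n)} {m : Fin n} (hm : m ∉ S) :
    ProbeFree (pathGraph 5) ((cycleGraph n).induce S) := by
  haveI : NeZero n := ⟨by omega⟩
  have hne_m : ∀ w : ↥S, (w : Fin n) ≠ m := fun w h => hm (h ▸ w.2)
  refine ⟨{v : ↥S | ((v : Fin n) - m).val % 2 = 1}, ?_, ?_⟩
  · intro u hu v hv hadj
    simp only [Set.mem_setOf_eq] at hu hv
    have h : (cycleGraph n).Adj ↑u ↑v := hadj
    exact parityFlip hn m ↑u ↑v (hne_m u) (hne_m v) h (hu.trans hv.symm)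
  · refine ⟨SimpleGraph.fromRel
      (fun u v : ↥S => (cycleGraph n).Adj ↑u ↑v ∨
        (((u : Fin n) - m).val % 2 = 1 ∧ ((v : Fin n) - m).val % 2 = 1)), ?_, ?_, ?_⟩
    · intro u v h
      rw [SimpleGraph.fromRel_adj]
      exact ⟨h.ne, Or.inl (Or.inl h)⟩
    · intro u v h hno
      rw [SimpleGraph.fromRel_adj] at h
      obtain ⟨hne, h⟩ := h
      simp only [Set.mem_setOf_eq]
      rcases h with (h | ho) | (h | ho)
      · exact absurd h hno
      · exact ⟨ho.1, ho.2⟩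
      · exact absurd h.symm hno
      · exact ⟨ho.2, ho.1⟩
    · constructor
      intro e
      have keyodd : ∀ i j : Fin 5, (pathGraph 5).Adj i j →
          ((e i : Fin n) - m).val % 2 ≠ 1 → ((e j : Fin n) - m).val % 2 = 1 := by
        intro i j hij hi
        have hadj := e.map_rel_iff.mpr hij
        rw [SimpleGraph.fromRel_adj] at hadj
        obtain ⟨hne, h⟩ := hadj
        rcases h with (h | ho) | (h | ho)
        · have := parityFlip hn m _ _ (hne_m (e i)) (hne_m (e j)) h
          omega
        · exact absurd ho.1 hi
        · have := parityFlip hn m _ _ (hne_m (e j)) (hne_m (e i)) h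
          omega
        · exact absurd ho.2 hi
      have pg : ∀ i j : Fin 5, i.val + 1 = j.val ∨ j.val + 1 = i.val → (pathGraph 5).Adj i j := by
        intro i j h
        rw [pathGraph_adj]
        exact h
      have h1 : ((e 1 : Fin n) - m).val % 2 = 1 := by
        by_contra h
        have h0 := keyodd 1 0 (pg 1 0 (by decide)) h
        have h2 := keyodd 1 2 (pg 1 2 (by decide)) h
        have hA : (SimpleGraph.fromRel
            (fun u v : ↥S => (cycleGraph n).Adj ↑u ↑v ∨
              (((u : Fin n) - m).val % 2 = 1 ∧ ((v : Fin n) - m).val % 2 = 1))).Adj (e 0) (e 2) := by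
          rw [SimpleGraph.fromRel_adj]
          exact ⟨fun hee => (by decide : (0 : Fin 5) ≠ 2) (e.injective hee), Or.inl (Or.inr ⟨h0, h2⟩)⟩
        have := e.map_rel_iff.mp hA
        rw [pathGraph_adj] at this
        exact (by decide : ¬((0 : Fin 5).val + 1 = (2 : Fin 5).val ∨ (2 : Fin 5).val + 1 = (0 : Fin 5).val)) this
      have h3 : ((e 3 : Fin n) - m).val % 2 = 1 := by
        by_contra h
        have h2 := keyodd 3 2 (pg 3 2 (by decide)) h
        have h4 := keyodd 3 4 (pg 3 4 (by decide)) h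
        have hA : (SimpleGraph.fromRel
            (fun u v : ↥S => (cycleGraph n).Adj ↑u ↑v ∨
              (((u : Fin n) - m).val % 2 = 1 ∧ ((v : Fin n) - m).val % 2 = 1))).Adj (e 2) (e 4) := by
          rw [SimpleGraph.fromRel_adj]
          exact ⟨fun hee => (by decide : (2 : Fin 5) ≠ 4) (e.injective hee), Or.inl (Or.inr ⟨h2, h4⟩)⟩
        have := e.map_rel_iff.mp hA
        rw [pathGraph_adj] at this
        exact (by decide : ¬((2 : Fin 5).val + 1 = (4 : Fin 5).val ∨ (4 : Fin 5).val + 1 = (2 : Fin 5).val)) this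
      have hA : (SimpleGraph.fromRel
          (fun u v : ↥S => (cycleGraph n).Adj ↑u ↑v ∨
            (((u : Fin n) - m).val % 2 = 1 ∧ ((v : Fin n) - m).val % 2 = 1))).Adj (e 1) (e 3) := by
        rw [SimpleGraph.fromRel_adj]
        exact ⟨fun hee => (by decide : (1 : Fin 5) ≠ 3) (e.injective hee), Or.inl (Or.inr ⟨h1, h3⟩)⟩
      have := e.map_rel_iff.mp hA
      rw [pathGraph_adj] at this
      exact (by decide : ¬((1 : Fin 5).val + 1 = (3 : Fin 5).val ∨ (3 : Fin 5).val + 1 = (1 : Fin 5).val)) this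

theorem stmt_12 (ℓ : ℕ) (hℓ : 3 ≤ ℓ) :
    ¬ ProbeFree (pathGraph 5) (cycleGraph (2 * ℓ + 1)) ∧
    ∀ S : Set (Fin (2 * ℓ + 1)), S ≠ Set.univ →
      ProbeFree (pathGraph 5) ((cycleGraph (2 * ℓ + 1)).induce S) := by
  constructor
  · exact part1_s12 (by omega) (by omega)
  · intro S hS
    obtain ⟨m, hm⟩ := (Set.ne_univ_iff_exists_notMem S).mp hS
    exact part2_s12 (by omega) hm
end

section
/- For every integer ℓ ≥ 3, the cycle C_{2ℓ+1} is not probe 2P2-free, but every proper induced subgraph of C_{2ℓ+1} is probe 2P2-free. (In other words, C_{2ℓ+1} belongs to the minimal set F_{2P2} of forbidden induced subgraphs characterising probe 2P2-free graphs.) -/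
open SimpleGraph
open scoped Fin.CommRing

/-- The graph `2P₂`: the disjoint union of two one-edge paths. -/
def twoP2 : SimpleGraph (Fin 4) :=
  SimpleGraph.fromRel (fun i j => (i = 0 ∧ j = 1) ∨ (i = 2 ∧ j = 3))

lemma mod_small' (a n : ℕ) (h : a < 2*n) : a % n = if a < n then a else a - n := by
  split
  · exact Nat.mod_eq_of_lt ‹_›
  · rw [Nat.mod_eq_sub_mod (by omega)]
    exact Nat.mod_eq_of_lt (by omega)

lemma cycle_adj_iff {n : ℕ} (hn : 2 ≤ n) (u v : Fin n) :
    (cycleGraph n).Adj u v ↔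
      (u.val + 1 = v.val ∨ v.val + 1 = u.val ∨ (u.val = 0 ∧ v.val = n-1) ∨
        (v.val = 0 ∧ u.val = n-1)) := by
  rw [cycleGraph_adj', Fin.sub_def, Fin.sub_def]
  have hu := u.isLt
  have hv := v.isLt
  simp only []
  rw [mod_small' _ n (by omega), mod_small' _ n (by omega)]
  split <;> split <;> omega

lemma twoP2_adj (i j : Fin 4) :
    twoP2.Adj i j ↔ ((i = 0 ∧ j = 1) ∨ (i = 1 ∧ j = 0) ∨ (i = 2 ∧ j = 3) ∨ (i = 3 ∧ j = 2)) := by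
  unfold twoP2
  rw [fromRel_adj]
  revert i j
  decide

lemma build_emb {V : Type*} (G' : SimpleGraph V) (a b c d : V)
    (hab : G'.Adj a b) (hcd : G'.Adj c d)
    (hac : ¬ G'.Adj a c) (had : ¬ G'.Adj a d) (hbc : ¬ G'.Adj b c) (hbd : ¬ G'.Adj b d)
    (h1 : a ≠ b) (h2 : a ≠ c) (h3 : a ≠ d) (h4 : b ≠ c) (h5 : b ≠ d) (h6 : c ≠ d) :
    Nonempty (twoP2 ↪g G') := by
  refine ⟨⟨⟨![a, b, c, d], ?_⟩, ?_⟩⟩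
  · intro i j hij
    fin_cases i <;> fin_cases j <;> simp_all
  · intro i j
    rw [twoP2_adj]
    show G'.Adj (![a, b, c, d] i) (![a, b, c, d] j) ↔ _
    have hI : ∀ y : V, ¬ G'.Adj y y := fun y => G'.irrefl
    have hca : ¬ G'.Adj c a := fun h => hac (h.symm)
    have hda : ¬ G'.Adj d a := fun h => had (h.symm)
    have hcb : ¬ G'.Adj c b := fun h => hbc (h.symm)
    have hdb : ¬ G'.Adj d b := fun h => hbd (h.symm)
    fin_cases i <;> fin_cases j <;>
      simp [hab, hcd, hab.symm, hcd.symm, hI, hac, had, hbc, hbd, hca, hda, hcb, hdb]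

theorem stmt_13 (ℓ : ℕ) (hℓ : 3 ≤ ℓ) :
    ¬ ProbeFree twoP2 (cycleGraph (2 * ℓ + 1)) ∧
    ∀ S : Set (Fin (2 * ℓ + 1)), S ≠ Set.univ →
      ProbeFree twoP2 ((cycleGraph (2 * ℓ + 1)).induce S) := by
  set n := 2 * ℓ + 1 with hn
  haveI : NeZero n := ⟨by omega⟩
  have hn7 : 7 ≤ n := by omega
  constructor
  · -- Part 1
    rintro ⟨N, hind, G', hle, hnew, hfree⟩
    -- find two consecutive probes
    have hx : ∃ x : Fin n, x ∉ N ∧ x + 1 ∉ N := by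
      by_contra hc
      push_neg at hc
      have hstep : ∀ x : Fin n, x + 1 ∈ N ↔ x ∉ N := by
        intro x
        have hadj : (cycleGraph n).Adj x (x + 1) := by
          rw [cycle_adj_iff (by omega)]
          have h1 : (x + 1 : Fin n).val = (x.val + 1) % n := by
            rw [show (1 : Fin n) = ((1 : ℕ) : Fin n) by norm_num, Fin.val_add,
              Fin.val_natCast, Nat.add_mod_mod]
          have hx2 := x.isLt
          rw [h1, mod_small' _ n (by omega)]
          split <;> omega
        have hnb : ¬(x ∈ N ∧ x + 1 ∈ N) := fun ⟨h1, h2⟩ => hind x h1 (x + 1) h2 hadj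
        have := hc x
        tauto
      have key : ∀ k : ℕ, ((k : Fin n) ∈ N ↔ ((0 : Fin n) ∈ N ↔ Even k)) := by
        intro k
        induction k with
        | zero => simp
        | succ k ih =>
          have hcast : ((k + 1 : ℕ) : Fin n) = (k : Fin n) + 1 := by push_cast; ring
          rw [hcast, hstep, ih, Nat.even_add_one]
          tauto
      have h1 := key n
      rw [Fin.natCast_self] at h1
      have : ¬ Even n := by rw [Nat.even_iff]; omega
      tauto
    obtain ⟨x, hx0, hx1⟩ := hx
    have hxlt := x.isLt
    -- the four vertices
    set d0 : Fin n := x with hd0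
    set d1 : Fin n := x + ((1 : ℕ) : Fin n) with hd1
    set d3 : Fin n := x + ((3 : ℕ) : Fin n) with hd3
    set d4 : Fin n := x + ((4 : ℕ) : Fin n) with hd4
    have hval : ∀ c : ℕ, c < n → (x + ((c : ℕ) : Fin n)).val = (x.val + c) % n := by
      intro c hc
      rw [Fin.val_add, Fin.val_natCast, Nat.add_mod_mod]
    have hv1 : d1.val = (x.val + 1) % n := hval 1 (by omega)
    have hv3 : d3.val = (x.val + 3) % n := hval 3 (by omega)
    have hv4 : d4.val = (x.val + 4) % n := hval 4 (by omega)
    rw [mod_small' _ n (by omega)] at hv1 hv3 hv4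
    have hd1' : d1 = x + 1 := by rw [hd1]; norm_num
    -- adjacency facts in G'
    have hA01 : G'.Adj d0 d1 := by
      apply hle
      rw [cycle_adj_iff (by omega)]
      split at hv1 <;> omega
    have hA34 : G'.Adj d3 d4 := by
      apply hle
      rw [cycle_adj_iff (by omega)]
      split at hv3 <;> split at hv4 <;> omega
    have hnadj : ∀ y z : Fin n, ¬ (cycleGraph n).Adj y z → (y ∉ N ∨ z ∉ N) → ¬ G'.Adj y z := by
      intro y z hc hN h
      have := hnew y z h hc
      tauto
    have hN03 : ¬ G'.Adj d0 d3 := by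
      apply hnadj _ _ ?_ (Or.inl hx0)
      rw [cycle_adj_iff (by omega)]
      split at hv3 <;> omega
    have hN04 : ¬ G'.Adj d0 d4 := by
      apply hnadj _ _ ?_ (Or.inl hx0)
      rw [cycle_adj_iff (by omega)]
      split at hv4 <;> omega
    have hN13 : ¬ G'.Adj d1 d3 := by
      apply hnadj _ _ ?_ (Or.inl (hd1' ▸ hx1))
      rw [cycle_adj_iff (by omega)]
      split at hv1 <;> split at hv3 <;> omega
    have hN14 : ¬ G'.Adj d1 d4 := by
      apply hnadj _ _ ?_ (Or.inl (hd1' ▸ hx1))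
      rw [cycle_adj_iff (by omega)]
      split at hv1 <;> split at hv4 <;> omega
    have hne01 : d0 ≠ d1 := by
      intro h; have := congrArg Fin.val h; split at hv1 <;> omega
    have hne03 : d0 ≠ d3 := by
      intro h; have := congrArg Fin.val h; split at hv3 <;> omega
    have hne04 : d0 ≠ d4 := by
      intro h; have := congrArg Fin.val h; split at hv4 <;> omega
    have hne13 : d1 ≠ d3 := by
      intro h; have := congrArg Fin.val h; split at hv1 <;> split at hv3 <;> omega
    have hne14 : d1 ≠ d4 := by
      intro h; have := congrArg Fin.val h; split at hv1 <;> split at hv4 <;> omega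
    have hne34 : d3 ≠ d4 := by
      intro h; have := congrArg Fin.val h; split at hv3 <;> split at hv4 <;> omega
    exact (build_emb G' d0 d1 d3 d4 hA01 hA34 hN03 hN04 hN13 hN14
      hne01 hne03 hne04 hne13 hne14 hne34).elim hfree.false
  · -- Part 2
    intro S hS
    have hv0 : ∃ v0 : Fin n, v0 ∉ S := by
      by_contra hc
      push_neg at hc
      exact hS (Set.eq_univ_iff_forall.mpr hc)
    obtain ⟨v0, hv0⟩ := hv0
    have hv0lt := v0.isLt
    set e : Fin n → ℕ := fun y => (y.val + (n - v0.val)) % n with he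
    have hebound : ∀ y : Fin n, e y < n := fun y => Nat.mod_lt _ (by omega)
    have he0 : ∀ y : Fin n, y ≠ v0 → e y ≠ 0 := by
      intro y hy h
      have hyy := y.isLt
      have hne : y.val ≠ v0.val := fun hc => hy (Fin.val_injective hc)
      rw [he] at h
      simp only at h
      rw [mod_small' _ n (by omega)] at h
      split at h <;> omega
    have hkey : ∀ y z : Fin n, y ≠ v0 → z ≠ v0 → (cycleGraph n).Adj y z →
        e z = e y + 1 ∨ e y = e z + 1 := by
      intro y z hy hz hadj
      have hyy := y.isLt
      have hzz := z.isLt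
      have hy' : y.val ≠ v0.val := fun hc => hy (Fin.val_injective hc)
      have hz' : z.val ≠ v0.val := fun hc => hz (Fin.val_injective hc)
      rw [cycle_adj_iff (by omega)] at hadj
      have hey : e y = (y.val + (n - v0.val)) % n := rfl
      have hez : e z = (z.val + (n - v0.val)) % n := rfl
      rw [mod_small' _ n (by omega)] at hey hez
      split at hey <;> split at hez <;> omega
    -- the non-probes
    set N : Set S := {u : S | Even (e u.val)} with hN
    have hadj_iff : ∀ u w : S, ((cycleGraph n).induce S).Adj u w ↔
        (cycleGraph n).Adj u.val w.val := by
      intro u w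
      simp only [comap_adj, Function.Embedding.coe_subtype]
    have hmem : ∀ u : S, (u : Fin n) ≠ v0 := by
      rintro u rfl
      exact hv0 u.prop
    refine ⟨N, ?_, ?_⟩
    · -- independence
      intro u hu w hw hadj
      rw [hadj_iff] at hadj
      have := hkey u.val w.val (hmem u) (hmem w) hadj
      rw [hN] at hu hw
      simp only [Set.mem_setOf_eq, Nat.even_iff] at hu hw
      omega
    · refine ⟨(cycleGraph n).induce S ⊔ fromRel (fun u w => u ∈ N ∧ w ∈ N), le_sup_left, ?_, ?_⟩
      · intro u w h hno
        rcases h with h | h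
        · exact absurd h hno
        · rw [fromRel_adj] at h
          tauto
      · constructor
        intro φ
        -- every edge of G' has an endpoint in N
        have hcov : ∀ u w : S,
            ((cycleGraph n).induce S ⊔ fromRel (fun u w : S => u ∈ N ∧ w ∈ N)).Adj u w →
            u ∈ N ∨ w ∈ N := by
          intro u w h
          rcases h with h | h
          · rw [hadj_iff] at h
            have := hkey u.val w.val (hmem u) (hmem w) h
            rw [hN]
            simp only [Set.mem_setOf_eq, Nat.even_iff]
            omega
          · rw [fromRel_adj] at h
            tauto
        have hAdj : ∀ i j : Fin 4, twoP2.Adj i j →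
            ((cycleGraph n).induce S ⊔ fromRel (fun u w : S => u ∈ N ∧ w ∈ N)).Adj (φ i) (φ j) :=
          fun i j h => φ.map_rel_iff.mpr h
        have hNAdj : ∀ i j : Fin 4, ¬ twoP2.Adj i j →
            ¬ ((cycleGraph n).induce S ⊔ fromRel (fun u w : S => u ∈ N ∧ w ∈ N)).Adj (φ i) (φ j) :=
          fun i j h hc => h (φ.map_rel_iff.mp hc)
        have h01 := hAdj 0 1 (by rw [twoP2_adj]; tauto)
        have h23 := hAdj 2 3 (by rw [twoP2_adj]; tauto)
        have h02 := hNAdj 0 2 (by rw [twoP2_adj]; decide)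
        have h03 := hNAdj 0 3 (by rw [twoP2_adj]; decide)
        have h12 := hNAdj 1 2 (by rw [twoP2_adj]; decide)
        have h13 := hNAdj 1 3 (by rw [twoP2_adj]; decide)
        obtain ha | hb := hcov _ _ h01 <;> obtain hc | hd := hcov _ _ h23
        · exact h02 (Or.inr ((fromRel_adj _ _ _).mpr
            ⟨fun h => absurd (φ.injective h) (by decide), Or.inl ⟨ha, hc⟩⟩))
        · exact h03 (Or.inr ((fromRel_adj _ _ _).mpr
            ⟨fun h => absurd (φ.injective h) (by decide), Or.inl ⟨ha, hd⟩⟩))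
        · exact h12 (Or.inr ((fromRel_adj _ _ _).mpr
            ⟨fun h => absurd (φ.injective h) (by decide), Or.inl ⟨hb, hc⟩⟩))
        · exact h13 (Or.inr ((fromRel_adj _ _ _).mpr
            ⟨fun h => absurd (φ.injective h) (by decide), Or.inl ⟨hb, hd⟩⟩))
end

section
/- Let X be a finite set with |X| = 3k for a positive integer k, and let 𝒮 be a collection of 3-element subsets of X with s = |𝒮| ≥ k. Let G be the graph whose vertex set is the disjoint union of X, Y = {y_S : S ∈ 𝒮}, and a set Z with |Z| = s−k, where: X induces a clique; Y and Z are independent sets; X is anticomplete to Z; Y is complete to Z; and for x ∈ X and S ∈ 𝒮, the vertices x and y_S are adjacent if and only if x ∈ S. Then there exists a subcollection 𝒮' ⊆ 𝒮 such that each element of X occurs in exactly one subset in 𝒮' if and only if the vertex set of G is the union of s pairwise disjoint cliques. -/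
open SimpleGraph

theorem stmt_14 {α : Type*} [DecidableEq α] (k s : ℕ) (hk : 1 ≤ k) (hks : k ≤ s)
    (X : Finset α) (hX : X.card = 3 * k)
    (𝒮 : Finset (Finset α)) (h𝒮card : 𝒮.card = s)
    (h𝒮 : ∀ S ∈ 𝒮, S ⊆ X ∧ S.card = 3)
    -- the graph `G` on the disjoint union of `X`, `Y = {y_S : S ∈ 𝒮}` and `Z` with `|Z| = s - k`
    (G : SimpleGraph ({x // x ∈ X} ⊕ ({S // S ∈ 𝒮} ⊕ Fin (s - k))))
    -- `X` is a clique, `Y` and `Z` are independent, `X` is anticomplete to `Z`,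
    -- `Y` is complete to `Z`, and `x ∈ X` is adjacent to `y_S` iff `x ∈ S`:
    (hXclique : ∀ x x' : {x // x ∈ X}, x ≠ x' → G.Adj (Sum.inl x) (Sum.inl x'))
    (hYindep : ∀ S S' : {S // S ∈ 𝒮}, ¬ G.Adj (Sum.inr (Sum.inl S)) (Sum.inr (Sum.inl S')))
    (hZindep : ∀ z z' : Fin (s - k), ¬ G.Adj (Sum.inr (Sum.inr z)) (Sum.inr (Sum.inr z')))
    (hXZ : ∀ (x : {x // x ∈ X}) (z : Fin (s - k)), ¬ G.Adj (Sum.inl x) (Sum.inr (Sum.inr z)))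
    (hYZ : ∀ (S : {S // S ∈ 𝒮}) (z : Fin (s - k)),
      G.Adj (Sum.inr (Sum.inl S)) (Sum.inr (Sum.inr z)))
    (hXY : ∀ (x : {x // x ∈ X}) (S : {S // S ∈ 𝒮}),
      G.Adj (Sum.inl x) (Sum.inr (Sum.inl S)) ↔ (x : α) ∈ (S : Finset α)) :
    -- exact 3-cover exists iff `V(G)` is the union of `s` pairwise disjoint cliques
    (∃ 𝒮' : Finset (Finset α), 𝒮' ⊆ 𝒮 ∧ ∀ x ∈ X, ∃! S, S ∈ 𝒮' ∧ x ∈ S) ↔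
    (∃ C : Fin s → Set ({x // x ∈ X} ⊕ ({S // S ∈ 𝒮} ⊕ Fin (s - k))),
      (∀ i, G.IsClique (C i)) ∧ (∀ i j, i ≠ j → Disjoint (C i) (C j)) ∧
      (⋃ i, C i) = Set.univ) := by
  classical
  constructor
  · rintro ⟨𝒮', hsub, hcov⟩
    -- members of 𝒮' are pairwise disjoint
    have hdisj' : ∀ S ∈ 𝒮', ∀ T ∈ 𝒮', S ≠ T → Disjoint S T := by
      intro S hS T hT hST
      rw [Finset.disjoint_left]
      intro x hxS hxT
      have hxX : x ∈ X := (h𝒮 S (hsub hS)).1 hxS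
      obtain ⟨U, _, hU⟩ := hcov x hxX
      exact hST ((hU S ⟨hS, hxS⟩).trans (hU T ⟨hT, hxT⟩).symm)
    have hXeq : X = 𝒮'.biUnion id := by
      apply Finset.Subset.antisymm
      · intro x hx
        obtain ⟨S, ⟨hS1, hS2⟩, _⟩ := hcov x hx
        exact Finset.mem_biUnion.mpr ⟨S, hS1, hS2⟩
      · intro x hx
        obtain ⟨S, hS, hxS⟩ := Finset.mem_biUnion.mp hx
        exact (h𝒮 S (hsub hS)).1 hxS
    have hcard𝒮' : 𝒮'.card = k := by
      have h1 : X.card = ∑ S ∈ 𝒮', S.card := by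
        rw [hXeq]
        exact Finset.card_biUnion (fun S hS T hT h => hdisj' S hS T hT h)
      have h2 : ∑ S ∈ 𝒮', S.card = 3 * 𝒮'.card := by
        rw [Finset.sum_congr rfl (fun S hS => (h𝒮 S (hsub hS)).2), Finset.sum_const,
          smul_eq_mul, mul_comm]
      omega
    have hcardT : (𝒮 \ 𝒮').card = s - k := by
      rw [Finset.card_sdiff_of_subset hsub, h𝒮card, hcard𝒮']
    have e : {S // S ∈ 𝒮 \ 𝒮'} ≃ Fin (s - k) :=
      Fintype.equivFinOfCardEq (by simp [Fintype.card_coe, hcardT])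
    have σ : {S // S ∈ 𝒮} ≃ Fin s :=
      Fintype.equivFinOfCardEq (by simp [Fintype.card_coe, h𝒮card])
    refine ⟨fun i => if h : ((σ.symm i : {S // S ∈ 𝒮}) : Finset α) ∈ 𝒮' then
        {v | ∃ x : {x // x ∈ X}, v = Sum.inl x ∧ (x : α) ∈ ((σ.symm i : {S // S ∈ 𝒮}) : Finset α)}
          ∪ {Sum.inr (Sum.inl (σ.symm i))}
      else
        {Sum.inr (Sum.inl (σ.symm i)),
          Sum.inr (Sum.inr (e ⟨((σ.symm i : {S // S ∈ 𝒮}) : Finset α),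
            Finset.mem_sdiff.mpr ⟨(σ.symm i).2, h⟩⟩))}, ?_, ?_, ?_⟩
    · -- cliques
      intro i
      rw [SimpleGraph.isClique_iff]
      dsimp only
      split_ifs with h
      · intro v hv w hw hvw
        simp only [Set.mem_union, Set.mem_setOf_eq, Set.mem_singleton_iff] at hv hw
        rcases hv with ⟨x, rfl, hx⟩ | rfl
        · rcases hw with ⟨x', rfl, hx'⟩ | rfl
          · exact hXclique x x' (fun hxx => hvw (by rw [hxx]))
          · exact (hXY x (σ.symm i)).mpr hx
        · rcases hw with ⟨x', rfl, hx'⟩ | rfl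
          · exact ((hXY x' (σ.symm i)).mpr hx').symm
          · exact absurd rfl hvw
      · intro v hv w hw hvw
        simp only [Set.mem_insert_iff, Set.mem_singleton_iff] at hv hw
        rcases hv with rfl | rfl <;> rcases hw with rfl | rfl
        · exact absurd rfl hvw
        · exact hYZ _ _
        · exact (hYZ _ _).symm
        · exact absurd rfl hvw
    · -- disjoint
      intro i j hij
      rw [Set.disjoint_left]
      intro v hvi hvj
      apply hij
      dsimp only at hvi hvj
      have key : σ.symm i = σ.symm j := by
        split_ifs at hvi hvj with h1 h2 h2
        · simp only [Set.mem_union, Set.mem_setOf_eq, Set.mem_singleton_iff] at hvi hvj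
          rcases hvi with ⟨x, rfl, hx⟩ | rfl
          · rcases hvj with ⟨x', hxx', hx'⟩ | hvj
            · have : x = x' := by
                injection hxx'
              subst this
              by_contra hne
              have hne' : ((σ.symm i : {S // S ∈ 𝒮}) : Finset α) ≠
                  ((σ.symm j : {S // S ∈ 𝒮}) : Finset α) := by
                intro hh
                exact hne (Subtype.ext hh)
              exact (Finset.disjoint_left.mp (hdisj' _ h1 _ h2 hne') hx) hx'
            · exact absurd hvj (by simp)
          · rcases hvj with ⟨x', hxx', hx'⟩ | hvj
            · exact absurd hxx' (by simp)
            · exact Sum.inl_injective (Sum.inr_injective (by exact hvj))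
        · simp only [Set.mem_union, Set.mem_setOf_eq, Set.mem_singleton_iff,
            Set.mem_insert_iff] at hvi hvj
          rcases hvi with ⟨x, rfl, hx⟩ | rfl
          · rcases hvj with hvj | hvj <;> exact absurd hvj (by simp)
          · rcases hvj with hvj | hvj
            · exact Sum.inl_injective (Sum.inr_injective (by exact hvj))
            · exact absurd hvj (by simp)
        · simp only [Set.mem_union, Set.mem_setOf_eq, Set.mem_singleton_iff,
            Set.mem_insert_iff] at hvi hvj
          rcases hvj with ⟨x, rfl, hx⟩ | rfl
          · rcases hvi with hvi | hvi <;> exact absurd hvi (by simp)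
          · rcases hvi with hvi | hvi
            · exact (Sum.inl_injective (Sum.inr_injective (by exact hvi))).symm
            · exact absurd hvi (by simp)
        · simp only [Set.mem_insert_iff, Set.mem_singleton_iff] at hvi hvj
          rcases hvi with rfl | rfl
          · rcases hvj with hvj | hvj
            · exact Sum.inl_injective (Sum.inr_injective (by exact hvj))
            · exact absurd hvj (by simp)
          · rcases hvj with hvj | hvj
            · exact absurd hvj (by simp)
            · have := e.injective (Sum.inr_injective (Sum.inr_injective (by exact hvj)))
              have h2 : ((σ.symm i : {S // S ∈ 𝒮}) : Finset α) =
                  ((σ.symm j : {S // S ∈ 𝒮}) : Finset α) := congrArg (fun t : {S // S ∈ 𝒮 \ 𝒮'} => (t : Finset α)) this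
              exact Subtype.ext h2
      calc i = σ (σ.symm i) := (σ.apply_symm_apply i).symm
        _ = σ (σ.symm j) := by rw [key]
        _ = j := σ.apply_symm_apply j
    · -- cover
      rw [Set.eq_univ_iff_forall]
      rintro (x | S | z)
      · obtain ⟨S, ⟨hS1, hxS⟩, _⟩ := hcov x.1 x.2
        refine Set.mem_iUnion.mpr ⟨σ ⟨S, hsub hS1⟩, ?_⟩
        simp only [Equiv.symm_apply_apply]
        rw [dif_pos hS1]
        exact Or.inl ⟨x, rfl, hxS⟩
      · refine Set.mem_iUnion.mpr ⟨σ S, ?_⟩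
        simp only [Equiv.symm_apply_apply]
        split_ifs with h
        · exact Or.inr rfl
        · exact Or.inl rfl
      · set T := e.symm z with hT
        have hT𝒮 : (T : Finset α) ∈ 𝒮 := (Finset.mem_sdiff.mp T.2).1
        have hT𝒮' : (T : Finset α) ∉ 𝒮' := (Finset.mem_sdiff.mp T.2).2
        refine Set.mem_iUnion.mpr ⟨σ ⟨(T : Finset α), hT𝒮⟩, ?_⟩
        simp only [Equiv.symm_apply_apply]
        rw [dif_neg hT𝒮']
        refine Or.inr ?_
        have : (⟨(T : Finset α), Finset.mem_sdiff.mpr ⟨hT𝒮, hT𝒮'⟩⟩ : {S // S ∈ 𝒮 \ 𝒮'}) = T :=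
          Subtype.ext rfl
        rw [this, hT, e.apply_symm_apply]
        rfl
  · rintro ⟨C, hclq, hCdisj, hCcov⟩
    have hmem : ∀ v, ∃ i, v ∈ C i := by
      intro v
      have := Set.mem_univ v
      rw [← hCcov] at this
      exact Set.mem_iUnion.mp this
    choose f hf using hmem
    have huniq : ∀ v i j, v ∈ C i → v ∈ C j → i = j := by
      intro v i j h1 h2
      by_contra h
      exact Set.disjoint_left.mp (hCdisj i j h) h1 h2
    have ginj : Function.Injective (fun S : {S // S ∈ 𝒮} => f (Sum.inr (Sum.inl S))) := by
      intro S S' hgg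
      dsimp only at hgg
      by_contra hne
      have h1 := hf (Sum.inr (Sum.inl S))
      have h2 := hf (Sum.inr (Sum.inl S'))
      rw [hgg] at h1
      have hadj := ((SimpleGraph.isClique_iff G).mp (hclq _)) h1 h2
        (by simp [hne])
      exact hYindep S S' hadj
    have gbij : Function.Bijective (fun S : {S // S ∈ 𝒮} => f (Sum.inr (Sum.inl S))) :=
      (Fintype.bijective_iff_injective_and_card _).mpr
        ⟨ginj, by simp [Fintype.card_coe, h𝒮card]⟩
    set σ : {S // S ∈ 𝒮} ≃ Fin s := Equiv.ofBijective _ gbij with hσ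
    have hσapp : ∀ S, σ S = f (Sum.inr (Sum.inl S)) := fun S => rfl
    -- every clique containing an element of X also contains the appropriate y_S
    have hyC : ∀ i, Sum.inr (Sum.inl (σ.symm i)) ∈ C i := by
      intro i
      have h1 := hf (Sum.inr (Sum.inl (σ.symm i)))
      rwa [show f (Sum.inr (Sum.inl (σ.symm i))) = i from σ.apply_symm_apply i] at h1
    have hxS : ∀ x : {x // x ∈ X},
        (x : α) ∈ ((σ.symm (f (Sum.inl x)) : {S // S ∈ 𝒮}) : Finset α) := by
      intro x
      have h1 : Sum.inl x ∈ C (f (Sum.inl x)) := hf _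
      have h2 := hyC (f (Sum.inl x))
      have hadj := ((SimpleGraph.isClique_iff G).mp (hclq _)) h2 h1 (by simp)
      exact (hXY x _).mp hadj.symm
    set D : Fin s → Finset {x // x ∈ X} :=
      fun i => Finset.univ.filter (fun x : {x // x ∈ X} => f (Sum.inl x) = i) with hD
    have hDsum : ∑ i, (D i).card = 3 * k := by
      have h1 := Finset.card_eq_sum_card_fiberwise
        (f := fun x : {x // x ∈ X} => f (Sum.inl x)) (s := Finset.univ) (t := Finset.univ)
        (fun x _ => Finset.mem_univ _)
      rw [Finset.card_univ, Fintype.card_coe, hX] at h1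
      exact h1.symm
    have himg : ∀ i, Finset.image (fun x : {x // x ∈ X} => (x : α)) (D i) ⊆
        ((σ.symm i : {S // S ∈ 𝒮}) : Finset α) := by
      intro i a ha
      obtain ⟨x, hx, rfl⟩ := Finset.mem_image.mp ha
      have hfx : f (Sum.inl x) = i := (Finset.mem_filter.mp hx).2
      rw [← hfx]
      exact hxS x
    have hDle : ∀ i, (D i).card ≤ 3 := by
      intro i
      calc (D i).card
          = (Finset.image (fun x : {x // x ∈ X} => (x : α)) (D i)).card :=
            (Finset.card_image_of_injective _ Subtype.val_injective).symm
        _ ≤ ((σ.symm i : {S // S ∈ 𝒮}) : Finset α).card := Finset.card_le_card (himg i)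
        _ = 3 := (h𝒮 _ (σ.symm i).2).2
    set A : Finset (Fin s) := Finset.univ.filter (fun i => (D i).Nonempty) with hA
    have hzinj : Function.Injective (fun z : Fin (s - k) => f (Sum.inr (Sum.inr z))) := by
      intro z z' hzz
      dsimp only at hzz
      by_contra hne
      have h1 := hf (Sum.inr (Sum.inr z))
      have h2 := hf (Sum.inr (Sum.inr z'))
      rw [hzz] at h1
      have hadj := ((SimpleGraph.isClique_iff G).mp (hclq _)) h1 h2 (by simp [hne])
      exact hZindep z z' hadj
    have hAz : A ⊆ Finset.univ \
        Finset.image (fun z : Fin (s - k) => f (Sum.inr (Sum.inr z))) Finset.univ := by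
      intro i hi
      rw [Finset.mem_sdiff]
      refine ⟨Finset.mem_univ _, ?_⟩
      intro hmem
      obtain ⟨z, _, hz⟩ := Finset.mem_image.mp hmem
      obtain ⟨x, hx⟩ := (Finset.mem_filter.mp hi).2
      have hfx : f (Sum.inl x) = i := (Finset.mem_filter.mp hx).2
      have h1 : Sum.inl x ∈ C i := hfx ▸ hf _
      have h2 : Sum.inr (Sum.inr z) ∈ C i := hz ▸ hf _
      have hadj := ((SimpleGraph.isClique_iff G).mp (hclq i)) h1 h2 (by simp)
      exact hXZ x z hadj
    have hAcard : A.card ≤ k := by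
      have h1 := Finset.card_le_card hAz
      rw [Finset.card_sdiff_of_subset (Finset.subset_univ _),
        Finset.card_image_of_injective _ hzinj, Finset.card_univ, Finset.card_univ,
        Fintype.card_fin, Fintype.card_fin, Nat.sub_sub_self hks] at h1
      exact h1
    have hsumA : ∑ i ∈ A, (D i).card = 3 * k := by
      rw [← hDsum]
      apply Finset.sum_subset (Finset.subset_univ A)
      intro i _ hi
      rw [hA, Finset.mem_filter, not_and] at hi
      rw [Finset.not_nonempty_iff_eq_empty.mp (hi (Finset.mem_univ _))]
      rfl
    have hD3 : ∀ i ∈ A, (D i).card = 3 := by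
      by_contra hcon
      push_neg at hcon
      obtain ⟨i, hiA, hi3⟩ := hcon
      have hlt : ∑ j ∈ A, (D j).card < ∑ j ∈ A, 3 :=
        Finset.sum_lt_sum (fun j _ => hDle j) ⟨i, hiA, lt_of_le_of_ne (hDle i) hi3⟩
      rw [Finset.sum_const, smul_eq_mul] at hlt
      omega
    have hDeq : ∀ i ∈ A, Finset.image (fun x : {x // x ∈ X} => (x : α)) (D i) =
        ((σ.symm i : {S // S ∈ 𝒮}) : Finset α) := by
      intro i hi
      apply Finset.eq_of_subset_of_card_le (himg i)
      rw [Finset.card_image_of_injective _ Subtype.val_injective, hD3 i hi,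
        (h𝒮 _ (σ.symm i).2).2]
    refine ⟨Finset.image (fun x : {x // x ∈ X} =>
      ((σ.symm (f (Sum.inl x)) : {S // S ∈ 𝒮}) : Finset α)) Finset.univ, ?_, ?_⟩
    · intro T hT
      obtain ⟨x, _, rfl⟩ := Finset.mem_image.mp hT
      exact (σ.symm (f (Sum.inl x))).2
    · intro x hx
      refine ⟨((σ.symm (f (Sum.inl ⟨x, hx⟩)) : {S // S ∈ 𝒮}) : Finset α),
        ⟨Finset.mem_image.mpr ⟨⟨x, hx⟩, Finset.mem_univ _, rfl⟩, hxS ⟨x, hx⟩⟩, ?_⟩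
      rintro T ⟨hT1, hT2⟩
      obtain ⟨x', _, rfl⟩ := Finset.mem_image.mp hT1
      set i := f (Sum.inl x') with hi
      have hx'D : x' ∈ D i := Finset.mem_filter.mpr ⟨Finset.mem_univ _, rfl⟩
      have hiA : i ∈ A := Finset.mem_filter.mpr ⟨Finset.mem_univ _, ⟨x', hx'D⟩⟩
      have himgi := hDeq i hiA
      rw [← himgi] at hT2
      obtain ⟨x'', hx''D, hx''⟩ := Finset.mem_image.mp hT2
      have hxx : x'' = ⟨x, hx⟩ := Subtype.ext hx''
      rw [hxx] at hx''D
      have hfi : f (Sum.inl (⟨x, hx⟩ : {x // x ∈ X})) = i := (Finset.mem_filter.mp hx''D).2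
      rw [hfi]
end
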